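/- arXiv:2201.06662 — 9 statements merged into one kernel-verified Lean document; each statement's English description precedes it below -/
import Mathlib

section
/- There exist positive constants C₁, C₂ > 0 such that for every measurable function f : X → ℤ on a probability space (X,μ), the Shannon entropy of f satisfies H(f) ≤ C₁ ∫_X log(1+|f(x)|) dμ + C₂. -/
open MeasureTheory Filter Topology
open scoped ENNReal NNReal

lemma aux_neg_mul_log_le (p q : ℝ) (hp : 0 ≤ p) (hq : 0 < q) :
    -(p * Real.log p) ≤ p * (-Real.log q) + q := by
  rcases eq_or_lt_of_le hp with h | hp0
  · simp [← h]; positivity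
  · have h1 : Real.log (q / p) ≤ q / p - 1 := Real.log_le_sub_one_of_pos (by positivity)
    have h2 : Real.log (q / p) = Real.log q - Real.log p := Real.log_div hq.ne' hp0.ne'
    have h3 : p * (q / p) = q := by field_simp
    have h4 := mul_le_mul_of_nonneg_left h1 hp
    rw [h2] at h4
    nlinarith

lemma aux_real_bound (n : ℤ) (p : ℝ) (hp : 0 ≤ p) :
    -(p * Real.log p) ≤
      2 * Real.log (1 + |(n : ℝ)|) * p + ((if n = 0 then (1:ℝ) else 0) + 1 / (n : ℝ) ^ 2) := by
  have hb : (0:ℝ) < 1 + |(n : ℝ)| := by positivity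
  set q : ℝ := ((1 + |(n : ℝ)|) ^ 2)⁻¹ with hqdef
  have hq : 0 < q := by positivity
  have hlog : -Real.log q = 2 * Real.log (1 + |(n : ℝ)|) := by
    rw [hqdef, Real.log_inv, Real.log_pow]
    push_cast; ring
  have h1 := aux_neg_mul_log_le p q hp hq
  rw [hlog] at h1
  have hlognn : 0 ≤ Real.log (1 + |(n : ℝ)|) :=
    Real.log_nonneg (by linarith [abs_nonneg (n:ℝ)])
  have h2 : q ≤ (if n = 0 then (1:ℝ) else 0) + 1 / (n : ℝ) ^ 2 := by
    by_cases hn : n = 0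
    · simp [hqdef, hn]
    · have hn' : ((n : ℝ)) ≠ 0 := Int.cast_ne_zero.mpr hn
      have hn2 : (0:ℝ) < (n : ℝ) ^ 2 := by positivity
      have hle : (n : ℝ) ^ 2 ≤ (1 + |(n : ℝ)|) ^ 2 := by
        nlinarith [abs_nonneg (n:ℝ), sq_abs (n:ℝ)]
      simp only [hn, if_false, zero_add]
      simpa only [hqdef, one_div] using one_div_le_one_div_of_le hn2 hle
  nlinarith [mul_nonneg hlognn hp]

/-- The Shannon entropy `H(f) = -∑_i μ(f⁻¹{i}) log μ(f⁻¹{i})` of a map `f : X → I`,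
with values in `[0, ∞]`. -/
noncomputable def shannonEntropy {X : Type*} [MeasurableSpace X] (μ : Measure X)
    {I : Type*} (f : X → I) : ℝ≥0∞ :=
  ∑' i : I, ENNReal.ofReal (-((μ (f ⁻¹' {i})).toReal * Real.log (μ (f ⁻¹' {i})).toReal))

/-- There are positive constants `C₁, C₂` such that for any measurable `f : X → ℤ` on a
probability space, `H(f) ≤ C₁ ∫ log(1 + |f|) dμ + C₂`. -/
theorem shannonEntropy_le_log_integral :
    ∃ C₁ C₂ : ℝ, 0 < C₁ ∧ 0 < C₂ ∧
      ∀ (X : Type) [MeasurableSpace X] (μ : Measure X), IsProbabilityMeasure μ →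
        ∀ f : X → ℤ, Measurable f →
          shannonEntropy μ f ≤
            ENNReal.ofReal C₁ * ∫⁻ x, ENNReal.ofReal (Real.log (1 + |(f x : ℝ)|)) ∂μ +
              ENNReal.ofReal C₂ := by
  have hS : Summable (fun n : ℤ => 1 / (n : ℝ) ^ 2) :=
    Real.summable_one_div_int_pow.mpr (by norm_num)
  have hSnn : ∀ n : ℤ, 0 ≤ 1 / (n : ℝ) ^ 2 := fun n => by positivity
  refine ⟨2, 1 + ∑' n : ℤ, 1 / (n : ℝ) ^ 2, by norm_num,
    by have : 0 ≤ ∑' n : ℤ, 1 / (n : ℝ) ^ 2 := tsum_nonneg hSnn; linarith, ?_⟩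
  intro X _ μ hμ f hf
  unfold shannonEntropy
  have hptop : ∀ n : ℤ, μ (f ⁻¹' {n}) ≠ ∞ := fun n => measure_ne_top μ _
  -- pointwise bound in ℝ≥0∞
  have key : ∀ n : ℤ,
      ENNReal.ofReal (-((μ (f ⁻¹' {n})).toReal * Real.log (μ (f ⁻¹' {n})).toReal)) ≤
        ENNReal.ofReal 2 * (ENNReal.ofReal (Real.log (1 + |(n : ℝ)|)) * μ (f ⁻¹' {n})) +
          ENNReal.ofReal ((if n = 0 then (1:ℝ) else 0) + 1 / (n : ℝ) ^ 2) := by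
    intro n
    have hp : 0 ≤ (μ (f ⁻¹' {n})).toReal := ENNReal.toReal_nonneg
    have hlognn : 0 ≤ Real.log (1 + |(n : ℝ)|) :=
      Real.log_nonneg (by linarith [abs_nonneg (n:ℝ)])
    calc ENNReal.ofReal (-((μ (f ⁻¹' {n})).toReal * Real.log (μ (f ⁻¹' {n})).toReal))
        ≤ ENNReal.ofReal (2 * Real.log (1 + |(n : ℝ)|) * (μ (f ⁻¹' {n})).toReal +
            ((if n = 0 then (1:ℝ) else 0) + 1 / (n : ℝ) ^ 2)) :=
          ENNReal.ofReal_le_ofReal (aux_real_bound n _ hp)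
      _ ≤ ENNReal.ofReal (2 * Real.log (1 + |(n : ℝ)|) * (μ (f ⁻¹' {n})).toReal) +
            ENNReal.ofReal ((if n = 0 then (1:ℝ) else 0) + 1 / (n : ℝ) ^ 2) :=
          ENNReal.ofReal_add_le
      _ = ENNReal.ofReal 2 * (ENNReal.ofReal (Real.log (1 + |(n : ℝ)|)) * μ (f ⁻¹' {n})) +
            ENNReal.ofReal ((if n = 0 then (1:ℝ) else 0) + 1 / (n : ℝ) ^ 2) := by
          rw [ENNReal.ofReal_mul (by positivity), ENNReal.ofReal_mul (by norm_num),
            ENNReal.ofReal_toReal (hptop n), mul_assoc]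
  -- sum the bound
  have hsum := ENNReal.tsum_le_tsum key
  rw [ENNReal.tsum_add] at hsum
  refine hsum.trans (add_le_add ?_ ?_)
  · -- first sum equals ofReal 2 * lintegral
    rw [ENNReal.tsum_mul_left]
    gcongr
    have hmeas : Measurable (fun n : ℤ => ENNReal.ofReal (Real.log (1 + |(n : ℝ)|))) :=
      measurable_of_countable _
    rw [← lintegral_map hmeas hf, lintegral_countable']
    refine le_of_eq (tsum_congr fun n => ?_)
    rw [Measure.map_apply hf (measurableSet_singleton n)]
  · -- second sum ≤ ofReal C₂
    have hsplit : ∀ n : ℤ,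
        ENNReal.ofReal ((if n = 0 then (1:ℝ) else 0) + 1 / (n : ℝ) ^ 2) =
          (if n = 0 then (1:ℝ≥0∞) else 0) + ENNReal.ofReal (1 / (n : ℝ) ^ 2) := by
      intro n
      rw [ENNReal.ofReal_add (by positivity) (hSnn n)]
      by_cases hn : n = 0 <;> simp [hn]
    calc (∑' n : ℤ, ENNReal.ofReal ((if n = 0 then (1:ℝ) else 0) + 1 / (n : ℝ) ^ 2))
        = (∑' n : ℤ, (if n = 0 then (1:ℝ≥0∞) else 0)) +
            ∑' n : ℤ, ENNReal.ofReal (1 / (n : ℝ) ^ 2) := by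
          rw [← ENNReal.tsum_add]; exact tsum_congr hsplit
      _ = 1 + ENNReal.ofReal (∑' n : ℤ, 1 / (n : ℝ) ^ 2) := by
          rw [tsum_ite_eq, ENNReal.ofReal_tsum_of_nonneg hSnn hS]
      _ = ENNReal.ofReal (1 + ∑' n : ℤ, 1 / (n : ℝ) ^ 2) := by
          rw [ENNReal.ofReal_add (by norm_num) (tsum_nonneg hSnn), ENNReal.ofReal_one]
      _ ≤ ENNReal.ofReal (1 + ∑' n : ℤ, 1 / (n : ℝ) ^ 2) := le_rfl
end

section
/- Let T ∈ Aut(X,μ) be an aperiodic transformation with infinite dynamical entropy (i.e., every T-dynamically generating function into a countable set has infinite Shannon entropy), and let U ∈ [T] be a transformation whose T-cocycle c_U : X → ℤ has finite Shannon entropy. Then U has infinite dynamical entropy: every U-dynamically generating function into a countable set has infinite Shannon entropy. -/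
open MeasureTheory Filter Topology
open scoped ENNReal NNReal

/-- A transformation is aperiodic if almost every orbit is infinite. -/
def Aperiodic {X : Type*} [MeasurableSpace X] (μ : Measure X) (T : X ≃ᵐ X) : Prop :=
  ∀ᵐ x ∂μ, ∀ n : ℤ, n ≠ 0 → (T.toEquiv ^ n) x ≠ x

/-- A map `f : X → I` is `S`-dynamically generating if on a full measure set, distinct
points are separated by the maps `x ↦ f(Sⁿ x)`, `n ∈ ℤ`. -/
def DynGenerating {X : Type*} [MeasurableSpace X] (μ : Measure X) (S : X ≃ᵐ X)
    {I : Type*} (f : X → I) : Prop :=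
  ∃ X₀ : Set X, MeasurableSet X₀ ∧ μ X₀ᶜ = 0 ∧
    ∀ x ∈ X₀, ∀ y ∈ X₀, x ≠ y → ∃ n : ℤ, f ((S.toEquiv ^ n) x) ≠ f ((S.toEquiv ^ n) y)

lemma perm_zpow_apply_add {X : Type*} (e : Equiv.Perm X) (p q : ℤ) (x : X) :
    (e ^ (p + q)) x = (e ^ p) ((e ^ q) x) := by
  rw [zpow_add]; rfl

lemma perm_zpow_apply_succ {X : Type*} (e : Equiv.Perm X) (k : ℤ) (x : X) :
    (e ^ (k + 1)) x = e ((e ^ k) x) := by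
  rw [add_comm, perm_zpow_apply_add, zpow_one]

lemma perm_zpow_apply_pred {X : Type*} (e : Equiv.Perm X) (k : ℤ) (x : X) :
    (e ^ (k - 1)) x = e⁻¹ ((e ^ k) x) := by
  have : k - 1 = -1 + k := by ring
  rw [this, perm_zpow_apply_add, zpow_neg_one]

lemma measurePreserving_zpow {X : Type*} [MeasurableSpace X] (μ : Measure X) (T : X ≃ᵐ X)
    (hT : MeasurePreserving (⇑T) μ μ) (n : ℤ) :
    MeasurePreserving (⇑(T.toEquiv ^ n)) μ μ := by
  induction n using Int.induction_on with
  | zero => simpa using MeasurePreserving.id μ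
  | succ i ih =>
      have h : ⇑(T.toEquiv ^ ((i : ℤ) + 1)) = ⇑(T.toEquiv ^ (i : ℤ)) ∘ ⇑T := by
        funext x; rw [zpow_add_one]; rfl
      rw [h]; exact ih.comp hT
  | pred i ih =>
      have h : ⇑(T.toEquiv ^ (-(i : ℤ) - 1)) = ⇑(T.toEquiv ^ (-(i : ℤ))) ∘ ⇑T.symm := by
        funext x; rw [zpow_sub_one]; rfl
      rw [h]; exact ih.comp (MeasurePreserving.symm T hT)

lemma negmullog_real_bound {m a b : ℝ} (hm0 : 0 ≤ m) (hma : m ≤ a) (hmb : m ≤ b)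
    (ha1 : a ≤ 1) (hb1 : b ≤ 1) :
    -(m * Real.log m) ≤ a * b + m * (-Real.log a) + m * (-Real.log b) := by
  rcases eq_or_lt_of_le hm0 with h0 | hmpos
  · rw [← h0]
    have : 0 ≤ a * b := mul_nonneg (hm0.trans hma) (hm0.trans hmb)
    simp; linarith
  · have ha : 0 < a := lt_of_lt_of_le hmpos hma
    have hb : 0 < b := lt_of_lt_of_le hmpos hmb
    have key : Real.log (a * b / m) ≤ a * b / m - 1 :=
      Real.log_le_sub_one_of_pos (by positivity)
    have hlog : Real.log (a * b / m) = Real.log a + Real.log b - Real.log m := by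
      rw [Real.log_div (by positivity) (ne_of_gt hmpos), Real.log_mul ha.ne' hb.ne']
    have h2 : m * Real.log (a * b / m) ≤ a * b - m := by
      have := mul_le_mul_of_nonneg_left key hm0
      have hcanc : m * (a * b / m) = a * b := by field_simp
      nlinarith
    rw [hlog] at h2
    nlinarith

lemma ofReal_negmullog_bound {m a b : ℝ≥0∞} (hma : m ≤ a) (hmb : m ≤ b)
    (ha1 : a ≤ 1) (hb1 : b ≤ 1) :
    ENNReal.ofReal (-(m.toReal * Real.log m.toReal)) ≤
      ENNReal.ofReal (a.toReal * b.toReal) +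
        ENNReal.ofReal (m.toReal * (-Real.log a.toReal)) +
          ENNReal.ofReal (m.toReal * (-Real.log b.toReal)) := by
  have haT : a ≠ ⊤ := ne_top_of_le_ne_top ENNReal.one_ne_top ha1
  have hbT : b ≠ ⊤ := ne_top_of_le_ne_top ENNReal.one_ne_top hb1
  have hA1 : a.toReal ≤ 1 := by
    simpa using ENNReal.toReal_mono ENNReal.one_ne_top ha1
  have hB1 : b.toReal ≤ 1 := by
    simpa using ENNReal.toReal_mono ENNReal.one_ne_top hb1
  have hMA : m.toReal ≤ a.toReal := ENNReal.toReal_mono haT hma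
  have hMB : m.toReal ≤ b.toReal := ENNReal.toReal_mono hbT hmb
  have h := negmullog_real_bound (ENNReal.toReal_nonneg (a := m)) hMA hMB hA1 hB1
  have n1 : 0 ≤ a.toReal * b.toReal := mul_nonneg ENNReal.toReal_nonneg ENNReal.toReal_nonneg
  have n2 : 0 ≤ m.toReal * (-Real.log a.toReal) :=
    mul_nonneg ENNReal.toReal_nonneg (neg_nonneg.mpr (Real.log_nonpos ENNReal.toReal_nonneg hA1))
  have n3 : 0 ≤ m.toReal * (-Real.log b.toReal) :=
    mul_nonneg ENNReal.toReal_nonneg (neg_nonneg.mpr (Real.log_nonpos ENNReal.toReal_nonneg hB1))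
  calc ENNReal.ofReal (-(m.toReal * Real.log m.toReal))
      ≤ ENNReal.ofReal (a.toReal * b.toReal + m.toReal * (-Real.log a.toReal)
          + m.toReal * (-Real.log b.toReal)) := ENNReal.ofReal_le_ofReal h
    _ = _ := by rw [ENNReal.ofReal_add (by linarith) n3, ENNReal.ofReal_add n1 n2]

lemma shannonEntropy_pair_le {X : Type*} [MeasurableSpace X] (μ : Measure X)
    [IsProbabilityMeasure μ] {I J : Type*} [Countable I] [Countable J]
    [MeasurableSpace I] [MeasurableSingletonClass I]
    [MeasurableSpace J] [MeasurableSingletonClass J]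
    (f : X → I) (g : X → J) (hf : Measurable f) (hg : Measurable g) :
    shannonEntropy μ (fun x => (f x, g x)) ≤ 1 + shannonEntropy μ f + shannonEntropy μ g := by
  classical
  have hms_f : ∀ i, MeasurableSet (f ⁻¹' {i}) := fun i => hf (measurableSet_singleton i)
  have hms_g : ∀ j, MeasurableSet (g ⁻¹' {j}) := fun j => hg (measurableSet_singleton j)
  have hpre : ∀ p : I × J, (fun x => (f x, g x)) ⁻¹' {p} = f ⁻¹' {p.1} ∩ g ⁻¹' {p.2} := by
    intro p; ext x; simp [Prod.ext_iff]
  -- marginals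
  have hrow : ∀ i, (∑' j : J, μ (f ⁻¹' {i} ∩ g ⁻¹' {j})) = μ (f ⁻¹' {i}) := by
    intro i
    rw [← measure_iUnion (fun j k hjk => by
        simp only [Set.disjoint_left]
        rintro x ⟨-, hx⟩ ⟨-, hx'⟩
        exact hjk ((Set.mem_singleton_iff.mp hx).symm.trans (Set.mem_singleton_iff.mp hx')))
      (fun j => (hms_f i).inter (hms_g j))]
    congr 1
    rw [← Set.inter_iUnion]
    have : (⋃ j : J, g ⁻¹' {j}) = Set.univ := by ext x; simp
    rw [this, Set.inter_univ]
  have hcol : ∀ j, (∑' i : I, μ (f ⁻¹' {i} ∩ g ⁻¹' {j})) = μ (g ⁻¹' {j}) := by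
    intro j
    rw [← measure_iUnion (fun i k hik => by
        simp only [Set.disjoint_left]
        rintro x ⟨hx, -⟩ ⟨hx', -⟩
        exact hik ((Set.mem_singleton_iff.mp hx).symm.trans (Set.mem_singleton_iff.mp hx')))
      (fun i => (hms_f i).inter (hms_g j))]
    congr 1
    rw [← Set.iUnion_inter]
    have : (⋃ i : I, f ⁻¹' {i}) = Set.univ := by ext x; simp
    rw [this, Set.univ_inter]
  have hsum_a : (∑' i : I, μ (f ⁻¹' {i})) = 1 := by
    rw [← measure_iUnion (fun i k hik => by
        simp only [Set.disjoint_left]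
        rintro x hx hx'
        exact hik ((Set.mem_singleton_iff.mp hx).symm.trans (Set.mem_singleton_iff.mp hx')))
      hms_f]
    have : (⋃ i : I, f ⁻¹' {i}) = Set.univ := by ext x; simp
    rw [this, measure_univ]
  have hsum_b : (∑' j : J, μ (g ⁻¹' {j})) = 1 := by
    rw [← measure_iUnion (fun j k hjk => by
        simp only [Set.disjoint_left]
        rintro x hx hx'
        exact hjk ((Set.mem_singleton_iff.mp hx).symm.trans (Set.mem_singleton_iff.mp hx')))
      hms_g]
    have : (⋃ j : J, g ⁻¹' {j}) = Set.univ := by ext x; simp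
    rw [this, measure_univ]
  -- pointwise bound then sum
  have step1 : shannonEntropy μ (fun x => (f x, g x)) ≤
      ∑' p : I × J, (ENNReal.ofReal ((μ (f ⁻¹' {p.1})).toReal * (μ (g ⁻¹' {p.2})).toReal)
        + ENNReal.ofReal ((μ (f ⁻¹' {p.1} ∩ g ⁻¹' {p.2})).toReal
            * (-Real.log (μ (f ⁻¹' {p.1})).toReal))
        + ENNReal.ofReal ((μ (f ⁻¹' {p.1} ∩ g ⁻¹' {p.2})).toReal
            * (-Real.log (μ (g ⁻¹' {p.2})).toReal))) := by
    refine ENNReal.tsum_le_tsum fun p => ?_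
    rw [hpre p]
    exact ofReal_negmullog_bound (measure_mono Set.inter_subset_left)
      (measure_mono Set.inter_subset_right) prob_le_one prob_le_one
  rw [ENNReal.tsum_add, ENNReal.tsum_add] at step1
  refine step1.trans ?_
  have hS1 : (∑' p : I × J,
      ENNReal.ofReal ((μ (f ⁻¹' {p.1})).toReal * (μ (g ⁻¹' {p.2})).toReal)) = 1 := by
    rw [ENNReal.tsum_prod']
    calc (∑' i : I, ∑' j : J, ENNReal.ofReal ((μ (f ⁻¹' {i})).toReal * (μ (g ⁻¹' {j})).toReal))
        = ∑' i : I, ∑' j : J, μ (f ⁻¹' {i}) * μ (g ⁻¹' {j}) := by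
          refine tsum_congr fun i => tsum_congr fun j => ?_
          rw [ENNReal.ofReal_mul ENNReal.toReal_nonneg, ENNReal.ofReal_toReal (measure_ne_top μ _),
            ENNReal.ofReal_toReal (measure_ne_top μ _)]
      _ = ∑' i : I, μ (f ⁻¹' {i}) * ∑' j : J, μ (g ⁻¹' {j}) := by
          refine tsum_congr fun i => ?_; rw [ENNReal.tsum_mul_left]
      _ = 1 := by
          simp only [hsum_b, mul_one, hsum_a]
  have hS2 : (∑' p : I × J, ENNReal.ofReal ((μ (f ⁻¹' {p.1} ∩ g ⁻¹' {p.2})).toReal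
      * (-Real.log (μ (f ⁻¹' {p.1})).toReal))) = shannonEntropy μ f := by
    rw [ENNReal.tsum_prod']
    refine tsum_congr fun i => ?_
    calc (∑' j : J, ENNReal.ofReal ((μ (f ⁻¹' {i} ∩ g ⁻¹' {j})).toReal
          * (-Real.log (μ (f ⁻¹' {i})).toReal)))
        = ∑' j : J, μ (f ⁻¹' {i} ∩ g ⁻¹' {j})
            * ENNReal.ofReal (-Real.log (μ (f ⁻¹' {i})).toReal) := by
          refine tsum_congr fun j => ?_
          rw [ENNReal.ofReal_mul ENNReal.toReal_nonneg, ENNReal.ofReal_toReal (measure_ne_top μ _)]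
      _ = μ (f ⁻¹' {i}) * ENNReal.ofReal (-Real.log (μ (f ⁻¹' {i})).toReal) := by
          rw [ENNReal.tsum_mul_right, hrow i]
      _ = ENNReal.ofReal (-((μ (f ⁻¹' {i})).toReal * Real.log (μ (f ⁻¹' {i})).toReal)) := by
          rw [← ENNReal.ofReal_toReal (measure_ne_top μ (f ⁻¹' {i})),
            ← ENNReal.ofReal_mul ENNReal.toReal_nonneg, ENNReal.ofReal_toReal (measure_ne_top μ _)]
          ring_nf
  have hS3 : (∑' p : I × J, ENNReal.ofReal ((μ (f ⁻¹' {p.1} ∩ g ⁻¹' {p.2})).toReal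
      * (-Real.log (μ (g ⁻¹' {p.2})).toReal))) = shannonEntropy μ g := by
    rw [ENNReal.tsum_prod', ENNReal.tsum_comm]
    refine tsum_congr fun j => ?_
    calc (∑' i : I, ENNReal.ofReal ((μ (f ⁻¹' {i} ∩ g ⁻¹' {j})).toReal
          * (-Real.log (μ (g ⁻¹' {j})).toReal)))
        = ∑' i : I, μ (f ⁻¹' {i} ∩ g ⁻¹' {j})
            * ENNReal.ofReal (-Real.log (μ (g ⁻¹' {j})).toReal) := by
          refine tsum_congr fun i => ?_
          rw [ENNReal.ofReal_mul ENNReal.toReal_nonneg, ENNReal.ofReal_toReal (measure_ne_top μ _)]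
      _ = μ (g ⁻¹' {j}) * ENNReal.ofReal (-Real.log (μ (g ⁻¹' {j})).toReal) := by
          rw [ENNReal.tsum_mul_right, hcol j]
      _ = ENNReal.ofReal (-((μ (g ⁻¹' {j})).toReal * Real.log (μ (g ⁻¹' {j})).toReal)) := by
          rw [← ENNReal.ofReal_toReal (measure_ne_top μ (g ⁻¹' {j})),
            ← ENNReal.ofReal_mul ENNReal.toReal_nonneg, ENNReal.ofReal_toReal (measure_ne_top μ _)]
          ring_nf
  rw [hS1, hS2, hS3]

/-- If `T` is aperiodic with infinite dynamical entropy and `U ∈ [T]` has a `T`-cocycle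
of finite Shannon entropy, then `U` has infinite dynamical entropy. -/
theorem infinite_dynamical_entropy_of_cocycle_finite_entropy {X : Type*} [MeasurableSpace X]
    [StandardBorelSpace X] (μ : Measure X) [IsProbabilityMeasure μ] [NullSingletonClass μ]
    (T : X ≃ᵐ X) (hT : MeasurePreserving (⇑T) μ μ) (hap : Aperiodic μ T)
    (hTent : ∀ (I : Type) [MeasurableSpace I] [MeasurableSingletonClass I] [Countable I],
      ∀ f : X → I, Measurable f → DynGenerating μ T f → shannonEntropy μ f = ⊤)
    (U : X ≃ᵐ X) (hU : MeasurePreserving (⇑U) μ μ)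
    (c : X → ℤ) (hc : Measurable c) (hcoc : ∀ᵐ x ∂μ, U x = (T.toEquiv ^ c x) x)
    (hcent : shannonEntropy μ c < ⊤) :
    ∀ (I : Type) [MeasurableSpace I] [MeasurableSingletonClass I] [Countable I],
      ∀ f : X → I, Measurable f → DynGenerating μ U f → shannonEntropy μ f = ⊤ := by
  intro I _ _ _ f hfm hfgen
  classical
  obtain ⟨A, hAm, hAc, hAsep⟩ := hfgen
  -- full-measure measurable set where the cocycle identity holds
  have hBbad : μ {x | ¬ U x = (T.toEquiv ^ c x) x} = 0 := by
    rw [← ae_iff]; exact hcoc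
  set B : Set X := (toMeasurable μ {x | ¬ U x = (T.toEquiv ^ c x) x})ᶜ with hBdef
  have hBm : MeasurableSet B := (measurableSet_toMeasurable μ _).compl
  have hBc : μ Bᶜ = 0 := by
    rw [hBdef, compl_compl, measure_toMeasurable]; exact hBbad
  have hB : ∀ x ∈ B, U x = (T.toEquiv ^ c x) x := by
    intro x hx
    by_contra h
    exact hx (subset_toMeasurable μ _ h)
  -- full-measure measurable set of aperiodic points
  have hCbad : μ {x | ¬ ∀ n : ℤ, n ≠ 0 → (T.toEquiv ^ n) x ≠ x} = 0 := by
    rw [← ae_iff]; exact hap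
  set C : Set X := (toMeasurable μ {x | ¬ ∀ n : ℤ, n ≠ 0 → (T.toEquiv ^ n) x ≠ x})ᶜ with hCdef
  have hCm : MeasurableSet C := (measurableSet_toMeasurable μ _).compl
  have hCc : μ Cᶜ = 0 := by
    rw [hCdef, compl_compl, measure_toMeasurable]; exact hCbad
  have hC : ∀ x ∈ C, ∀ n : ℤ, n ≠ 0 → (T.toEquiv ^ n) x ≠ x := by
    intro x hx
    by_contra h
    exact hx (subset_toMeasurable μ _ h)
  set D : Set X := A ∩ B ∩ C with hDdef
  have hDm : MeasurableSet D := (hAm.inter hBm).inter hCm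
  have hDc : μ Dᶜ = 0 := by
    rw [hDdef]
    simp only [Set.compl_inter]
    exact measure_union_null (measure_union_null hAc hBc) hCc
  have mpT : ∀ n : ℤ, MeasurePreserving (⇑(T.toEquiv ^ n)) μ μ :=
    measurePreserving_zpow μ T hT
  have mpU : ∀ n : ℤ, MeasurePreserving (⇑(U.toEquiv ^ n)) μ μ :=
    measurePreserving_zpow μ U hU
  set X₁ : Set X :=
    ⋂ n : ℤ, ((⇑(T.toEquiv ^ n) ⁻¹' D) ∩ (⇑(U.toEquiv ^ n) ⁻¹' D)) with hX₁def
  have hX₁m : MeasurableSet X₁ :=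
    MeasurableSet.iInter fun n =>
      ((mpT n).measurable hDm).inter ((mpU n).measurable hDm)
  have hX₁c : μ X₁ᶜ = 0 := by
    rw [hX₁def, Set.compl_iInter]
    refine measure_iUnion_null fun n => ?_
    rw [Set.compl_inter]
    refine measure_union_null ?_ ?_
    · rw [← Set.preimage_compl, (mpT n).measure_preimage hDm.compl.nullMeasurableSet]
      exact hDc
    · rw [← Set.preimage_compl, (mpU n).measure_preimage hDm.compl.nullMeasurableSet]
      exact hDc
  have hTmem : ∀ x ∈ X₁, ∀ n : ℤ, (T.toEquiv ^ n) x ∈ D := by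
    intro x hx n; exact (Set.mem_iInter.mp hx n).1
  have hUmem : ∀ x ∈ X₁, ∀ n : ℤ, (U.toEquiv ^ n) x ∈ D := by
    intro x hx n; exact (Set.mem_iInter.mp hx n).2
  have hDmem : ∀ x ∈ X₁, x ∈ D := by
    intro x hx
    have := hTmem x hx 0
    simpa using this
  -- the pair map is T-dynamically generating
  have hgen : DynGenerating μ T (fun x => (f x, c x)) := by
    refine ⟨X₁, hX₁m, hX₁c, ?_⟩
    intro x hx y hy hxy
    by_contra hcon
    push_neg at hcon
    simp only [Prod.mk.injEq, not_not] at hcon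
    have hfe : ∀ n : ℤ, f ((T.toEquiv ^ n) x) = f ((T.toEquiv ^ n) y) := fun n => (hcon n).1
    have hce : ∀ n : ℤ, c ((T.toEquiv ^ n) x) = c ((T.toEquiv ^ n) y) := fun n => (hcon n).2
    have claim : ∀ k : ℤ, ∃ a : ℤ,
        (U.toEquiv ^ k) x = (T.toEquiv ^ a) x ∧ (U.toEquiv ^ k) y = (T.toEquiv ^ a) y := by
      intro k
      induction k using Int.induction_on with
      | zero => exact ⟨0, by simp, by simp⟩
      | succ i ih =>
          obtain ⟨a, hax, hay⟩ := ih
          refine ⟨c ((T.toEquiv ^ a) x) + a, ?_, ?_⟩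
          · rw [perm_zpow_apply_succ, hax, perm_zpow_apply_add]
            exact hB _ ((hTmem x hx a).1.2)
          · rw [perm_zpow_apply_succ, hay, perm_zpow_apply_add, hce a]
            exact hB _ ((hTmem y hy a).1.2)
      | pred i ih =>
          obtain ⟨a, hax, hay⟩ := ih
          set w : X := (U.toEquiv ^ (-(i : ℤ) - 1)) x with hwdef
          set w' : X := (U.toEquiv ^ (-(i : ℤ) - 1)) y with hw'def
          have hUw : U.toEquiv w = (T.toEquiv ^ a) x := by
            rw [hwdef, ← perm_zpow_apply_succ]
            have : -(i : ℤ) - 1 + 1 = -(i : ℤ) := by ring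
            rw [this, hax]
          have hUw' : U.toEquiv w' = (T.toEquiv ^ a) y := by
            rw [hw'def, ← perm_zpow_apply_succ]
            have : -(i : ℤ) - 1 + 1 = -(i : ℤ) := by ring
            rw [this, hay]
          have hwB : w ∈ B := (hUmem x hx (-(i : ℤ) - 1)).1.2
          have hw'B : w' ∈ B := (hUmem y hy (-(i : ℤ) - 1)).1.2
          have hwT : (T.toEquiv ^ c w) w = (T.toEquiv ^ a) x := by
            rw [← hB w hwB]; exact hUw
          have hw'T : (T.toEquiv ^ c w') w' = (T.toEquiv ^ a) y := by
            rw [← hB w' hw'B]; exact hUw'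
          set m : ℤ := a - c w with hmdef
          set m' : ℤ := a - c w' with hm'def
          have hwm : w = (T.toEquiv ^ m) x := by
            apply (T.toEquiv ^ c w).injective
            rw [hwT, ← perm_zpow_apply_add]
            congr 1
            rw [hmdef]; ring
          have hw'm : w' = (T.toEquiv ^ m') y := by
            apply (T.toEquiv ^ c w').injective
            rw [hw'T, ← perm_zpow_apply_add]
            congr 1
            rw [hm'def]; ring
          have hcw' : c ((T.toEquiv ^ m') x) = a - m' := by
            rw [hce m', ← hw'm, hm'def]; omega
          have hUm' : U.toEquiv ((T.toEquiv ^ m') x) = (T.toEquiv ^ a) x := by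
            have hBm' : (T.toEquiv ^ m') x ∈ B := (hTmem x hx m').1.2
            have h1 : U.toEquiv ((T.toEquiv ^ m') x)
                = (T.toEquiv ^ c ((T.toEquiv ^ m') x)) ((T.toEquiv ^ m') x) := hB _ hBm'
            rw [h1, hcw', ← perm_zpow_apply_add]
            congr 1
            ring
          have heq : (T.toEquiv ^ m') x = w := by
            apply U.toEquiv.injective
            rw [hUm', hUw]
          have hmm : m' = m := by
            by_contra hne
            have hxC : x ∈ C := (hDmem x hx).2
            have h1 : (T.toEquiv ^ (-m + m')) x = x := by
              have : (T.toEquiv ^ (-m)) ((T.toEquiv ^ m') x) = (T.toEquiv ^ (-m)) ((T.toEquiv ^ m) x) := by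
                rw [heq, hwm]
              rw [← perm_zpow_apply_add, ← perm_zpow_apply_add] at this
              simpa using this
            exact hC x hxC (-m + m') (by omega) h1
          refine ⟨m, ?_, ?_⟩
          · exact hwm
          · rw [hw'm, hmm]
    have hxA : x ∈ A := (hDmem x hx).1.1
    have hyA : y ∈ A := (hDmem y hy).1.1
    obtain ⟨k, hk⟩ := hAsep x hxA y hyA hxy
    obtain ⟨a, hax, hay⟩ := claim k
    exact hk (by rw [hax, hay, hfe a])
  have htop := hTent (I × ℤ) (fun x => (f x, c x)) (hfm.prodMk hc) hgen
  have hle := shannonEntropy_pair_le μ f c hfm hc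
  rw [htop] at hle
  by_contra hne
  have h1 : shannonEntropy μ f < ⊤ := lt_top_iff_ne_top.mpr hne
  have h2 : (1 : ℝ≥0∞) + shannonEntropy μ f + shannonEntropy μ c < ⊤ :=
    ENNReal.add_lt_top.mpr ⟨ENNReal.add_lt_top.mpr ⟨ENNReal.one_lt_top, h1⟩, hcent⟩
  exact h2.ne (top_le_iff.mp hle)
end

section
/- Let φ : ℝ₊ → ℝ₊ be a sublinear metric-compatible function and let T ∈ Aut(X,μ) be aperiodic. Then for every U ∈ [T]_φ, the sequence d_{φ,T}(Uⁿ, id)/n = (1/n) ∫_X φ(|c_{Uⁿ}(x)|) dμ converges to 0 as n → ∞, where c_{Uⁿ} is the T-cocycle of Uⁿ. -/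
open MeasureTheory Filter Topology
open scoped ENNReal NNReal

/-- A function `φ : ℝ₊ → ℝ₊` is metric-compatible if it is subadditive, non-decreasing,
vanishes exactly at `0`. -/
def MetricCompatible (φ : ℝ≥0 → ℝ≥0) : Prop :=
  (∀ s t, φ (s + t) ≤ φ s + φ t) ∧ Monotone φ ∧ φ 0 = 0 ∧ ∀ t, 0 < t → 0 < φ t

private lemma natAbs_finset_sum_le' {ι : Type*} (s : Finset ι) (g : ι → ℤ) :
    (∑ i ∈ s, g i).natAbs ≤ ∑ i ∈ s, (g i).natAbs := by
  classical
  induction s using Finset.cons_induction with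
  | empty => simp
  | cons a s ha ih =>
    rw [Finset.sum_cons, Finset.sum_cons]
    exact (Int.natAbs_add_le _ _).trans (Nat.add_le_add_left ih _)

private lemma phi_finset_sum' {φ : ℝ≥0 → ℝ≥0} (h0 : φ 0 = 0)
    (hadd : ∀ s t, φ (s + t) ≤ φ s + φ t) {ι : Type*} (s : Finset ι) (g : ι → ℝ≥0) :
    φ (∑ i ∈ s, g i) ≤ ∑ i ∈ s, φ (g i) := by
  classical
  induction s using Finset.cons_induction with
  | empty => simp [h0]
  | cons a s ha ih =>
    rw [Finset.sum_cons, Finset.sum_cons]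
    exact (hadd _ _).trans (add_le_add_right ih _)

/-- If `φ` is sublinear metric-compatible, `T` is aperiodic and `U ∈ [T]_φ` (its
`T`-cocycle `c 1` is `φ`-integrable), then `d_{φ,T}(Uⁿ, id)/n → 0`, where `c n` is the
`T`-cocycle of `Uⁿ`. -/
theorem dphi_pow_div_n_tendsto_zero {X : Type*} [MeasurableSpace X] [StandardBorelSpace X]
    (μ : Measure X) [IsProbabilityMeasure μ] [NullSingletonClass μ]
    (φ : ℝ≥0 → ℝ≥0) (hmc : MetricCompatible φ)
    (hsub : Tendsto (fun t => φ t / t) atTop (nhds 0))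
    (T : X ≃ᵐ X) (hT : MeasurePreserving (⇑T) μ μ) (hap : Aperiodic μ T)
    (U : X ≃ᵐ X) (hU : MeasurePreserving (⇑U) μ μ)
    (c : ℕ → X → ℤ) (hc : ∀ n, Measurable (c n))
    (hcoc : ∀ n : ℕ, ∀ᵐ x ∂μ, (U.toEquiv ^ n) x = (T.toEquiv ^ c n x) x)
    (hint : ∫⁻ x, (φ ((c 1 x).natAbs : ℝ≥0) : ℝ≥0∞) ∂μ < ⊤) :
    Tendsto (fun n : ℕ => (∫⁻ x, (φ ((c n x).natAbs : ℝ≥0) : ℝ≥0∞) ∂μ) / (n : ℝ≥0∞))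
      atTop (nhds 0) := by
  classical
  obtain ⟨hφadd, hφmono, hφ0, hφpos⟩ := hmc
  -- a.e. uniqueness of the exponent
  have huniq : ∀ᵐ x ∂μ, ∀ a b : ℤ, (T.toEquiv ^ a) x = (T.toEquiv ^ b) x → a = b := by
    filter_upwards [hap] with x hx a b hab
    by_contra h
    refine hx (a - b) (sub_ne_zero_of_ne h) ?_
    have h2 : (T.toEquiv ^ (-b) * T.toEquiv ^ a) x = (T.toEquiv ^ (-b) * T.toEquiv ^ b) x := by
      simp [Equiv.Perm.mul_apply, hab]
    rw [← zpow_add, ← zpow_add, neg_add_cancel, zpow_zero, neg_add_eq_sub] at h2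
    simpa using h2
  have hUn : ∀ k : ℕ, MeasurePreserving (⇑(U.toEquiv ^ k)) μ μ := by
    intro k
    have h1 : ⇑(U.toEquiv ^ k) = (⇑U)^[k] := by
      rw [Equiv.Perm.coe_pow]; rfl
    rw [h1]; exact hU.iterate k
  -- cocycle additivity
  have hadd : ∀ n : ℕ, ∀ᵐ x ∂μ,
      c (n + 1) x = c n x + c 1 ((U.toEquiv ^ n) x) := by
    intro n
    have h1 : ∀ᵐ x ∂μ, (U.toEquiv) ((U.toEquiv ^ n) x)
        = (T.toEquiv ^ c 1 ((U.toEquiv ^ n) x)) ((U.toEquiv ^ n) x) := by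
      have h := hcoc 1
      simp only [pow_one] at h
      exact (hUn n).quasiMeasurePreserving.ae h
    filter_upwards [hcoc (n + 1), hcoc n, h1, huniq] with x e1 e2 e3 hx
    rw [e2]
    rw [e2] at e3
    have key : (T.toEquiv ^ c (n + 1) x) x
        = (T.toEquiv ^ (c 1 ((T.toEquiv ^ c n x) x) + c n x)) x := by
      rw [← e1, pow_succ', Equiv.Perm.mul_apply, e2, e3,
        ← Equiv.Perm.mul_apply, ← zpow_add]
    have := hx _ _ key
    omega
  -- sum formula for the cocycle
  have hsum : ∀ n : ℕ, ∀ᵐ x ∂μ,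
      c n x = ∑ k ∈ Finset.range n, c 1 ((U.toEquiv ^ k) x) := by
    intro n
    induction n with
    | zero =>
      filter_upwards [hcoc 0, huniq] with x e hx
      have : (T.toEquiv ^ c 0 x) x = (T.toEquiv ^ (0 : ℤ)) x := by
        rw [← e]; simp
      simpa using hx _ _ this
    | succ n ih =>
      filter_upwards [ih, hadd n] with x h1 h2
      rw [h2, h1, Finset.sum_range_succ]
  -- the tail sets and tail integrals
  set F : X → ℝ≥0∞ := fun x => (φ ((c 1 x).natAbs : ℝ≥0) : ℝ≥0∞) with hF
  have hFmeas : Measurable F := by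
    have : F = (fun z : ℤ => ((φ (z.natAbs : ℝ≥0) : ℝ≥0) : ℝ≥0∞)) ∘ c 1 := rfl
    rw [this]; exact measurable_from_top.comp (hc 1)
  set s : ℕ → Set X := fun M => {x | M < (c 1 x).natAbs} with hs_def
  have hsm : ∀ M, MeasurableSet (s M) :=
    fun M => hc 1 (show MeasurableSet[⊤] {z : ℤ | M < z.natAbs} from trivial)
  have hI : Tendsto (fun M : ℕ => ∫⁻ x in s M, F x ∂μ) atTop (𝓝 0) := by
    have hμs : Tendsto (fun M => μ (s M)) atTop (𝓝 0) := by
      have hanti : Antitone s := by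
        intro a b hab x hx
        simp only [hs_def, Set.mem_setOf_eq] at hx ⊢
        omega
      have h0 : (⋂ M, s M) = ∅ := by
        rw [Set.eq_empty_iff_forall_notMem]
        intro x hx
        have h := Set.mem_iInter.mp hx (c 1 x).natAbs
        simp only [hs_def, Set.mem_setOf_eq] at h
        omega
      have h := tendsto_measure_iInter_atTop
        (fun M => (hsm M).nullMeasurableSet) hanti ⟨0, measure_ne_top μ _⟩
      rw [h0] at h
      simpa [Function.comp_def] using h
    exact tendsto_setLIntegral_zero hint.ne hμs
  -- key estimate
  have hkey : ∀ M : ℕ, 1 ≤ M → ∀ n : ℕ,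
      (∫⁻ x, (φ ((c n x).natAbs : ℝ≥0) : ℝ≥0∞) ∂μ)
        ≤ (φ ((n * M : ℕ) : ℝ≥0) : ℝ≥0∞) + n * ∫⁻ x in s M, F x ∂μ := by
    intro M hM n
    set G : X → ℝ≥0∞ := (s M).indicator F with hG
    have hGmeas : Measurable G := hFmeas.indicator (hsm M)
    set t : X → ℕ := fun y => if M < (c 1 y).natAbs then (c 1 y).natAbs else 0 with ht
    have hGt : ∀ y, G y = ((φ ((t y : ℕ) : ℝ≥0) : ℝ≥0) : ℝ≥0∞) := by
      intro y
      by_cases hy : M < (c 1 y).natAbs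
      · have hmem : y ∈ s M := hy
        simp only [hG, Set.indicator_of_mem hmem, hF, ht, if_pos hy]
      · have hmem : y ∉ s M := hy
        simp only [hG, Set.indicator_of_notMem hmem, ht, if_neg hy]
        simp [hφ0]
    have hb : ∀ᵐ x ∂μ, (φ ((c n x).natAbs : ℝ≥0) : ℝ≥0∞)
        ≤ (φ ((n * M : ℕ) : ℝ≥0) : ℝ≥0∞)
          + ∑ k ∈ Finset.range n, G ((U.toEquiv ^ k) x) := by
      filter_upwards [hsum n] with x hx
      have h1 : (c n x).natAbs
          ≤ n * M + ∑ k ∈ Finset.range n, t ((U.toEquiv ^ k) x) := by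
        rw [hx]
        refine (natAbs_finset_sum_le' _ _).trans ?_
        have hterm : ∀ k ∈ Finset.range n,
            (c 1 ((U.toEquiv ^ k) x)).natAbs ≤ M + t ((U.toEquiv ^ k) x) := by
          intro k _
          simp only [ht]
          split <;> omega
        refine (Finset.sum_le_sum hterm).trans ?_
        rw [Finset.sum_add_distrib, Finset.sum_const, Finset.card_range, smul_eq_mul]
      have h2 : ((c n x).natAbs : ℝ≥0)
          ≤ ((n * M : ℕ) : ℝ≥0) + ∑ k ∈ Finset.range n, ((t ((U.toEquiv ^ k) x) : ℕ) : ℝ≥0) := by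
        have := (Nat.cast_le (α := ℝ≥0)).mpr h1
        push_cast at this ⊢
        exact this
      have h3 : φ ((c n x).natAbs : ℝ≥0)
          ≤ φ ((n * M : ℕ) : ℝ≥0)
            + ∑ k ∈ Finset.range n, φ ((t ((U.toEquiv ^ k) x) : ℕ) : ℝ≥0) :=
        (hφmono h2).trans ((hφadd _ _).trans
          (add_le_add_right (phi_finset_sum' hφ0 hφadd _ _) _))
      simp only [hGt]
      rw [← ENNReal.coe_finset_sum, ← ENNReal.coe_add, ENNReal.coe_le_coe]
      exact h3
    calc ∫⁻ x, (φ ((c n x).natAbs : ℝ≥0) : ℝ≥0∞) ∂μ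
        ≤ ∫⁻ x, ((φ ((n * M : ℕ) : ℝ≥0) : ℝ≥0∞)
            + ∑ k ∈ Finset.range n, G ((U.toEquiv ^ k) x)) ∂μ := lintegral_mono_ae hb
      _ = (φ ((n * M : ℕ) : ℝ≥0) : ℝ≥0∞)
            + ∑ k ∈ Finset.range n, ∫⁻ x, G ((U.toEquiv ^ k) x) ∂μ := by
          have hm : ∀ k : ℕ, Measurable fun x => G ((U.toEquiv ^ k) x) :=
            fun k => hGmeas.comp (hUn k).measurable
          rw [lintegral_add_left measurable_const, lintegral_const, measure_univ, mul_one,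
            lintegral_finset_sum _ (fun k _ => hm k)]
      _ = (φ ((n * M : ℕ) : ℝ≥0) : ℝ≥0∞) + ∑ k ∈ Finset.range n, ∫⁻ x, G x ∂μ := by
          congr 1
          exact Finset.sum_congr rfl fun k _ => (hUn k).lintegral_comp hGmeas
      _ = (φ ((n * M : ℕ) : ℝ≥0) : ℝ≥0∞) + n * ∫⁻ x in s M, F x ∂μ := by
          rw [Finset.sum_const, Finset.card_range, nsmul_eq_mul, hG,
            lintegral_indicator (hsm M)]
  -- conclusion
  rw [ENNReal.tendsto_atTop_zero]
  intro ε hε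
  have hε2 : (0 : ℝ≥0∞) < ε / 2 := ENNReal.div_pos hε.ne' (by norm_num)
  obtain ⟨M0, hM0⟩ := ENNReal.tendsto_atTop_zero.mp hI (ε / 2) hε2
  set M : ℕ := max M0 1 with hMdef
  have hM1 : 1 ≤ M := le_max_right _ _
  have hIM : ∫⁻ x in s M, F x ∂μ ≤ ε / 2 := hM0 M (le_max_left _ _)
  obtain ⟨r, hr0, hrε⟩ := ENNReal.lt_iff_exists_nnreal_btwn.mp hε2
  have hr0' : (0 : ℝ≥0) < r := by exact_mod_cast hr0
  have hMpos : (0 : ℝ≥0) < (M : ℝ≥0) := by exact_mod_cast hM1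
  set δ : ℝ≥0 := r / M with hδdef
  have hδ0 : 0 < δ := div_pos hr0' hMpos
  have hδM : ((δ * M : ℝ≥0) : ℝ≥0∞) ≤ ε / 2 := by
    have hMne : (M : ℝ≥0) ≠ 0 := hMpos.ne'
    have : δ * M = r := by rw [hδdef, div_mul_cancel₀ _ hMne]
    rw [this]
    exact hrε.le
  obtain ⟨t0, ht0⟩ := eventually_atTop.mp ((tendsto_order.1 hsub).2 δ hδ0)
  refine ⟨max 1 ⌈t0⌉₊, fun n hn => ?_⟩
  have hn1 : 1 ≤ n := le_trans (le_max_left _ _) hn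
  have hnn : (n : ℝ≥0∞) ≠ 0 := by
    exact_mod_cast Nat.one_le_iff_ne_zero.mp hn1
  have hnM : (0 : ℝ≥0) < ((n * M : ℕ) : ℝ≥0) := by
    have : 1 ≤ n * M := Nat.one_le_iff_ne_zero.mpr (by positivity)
    exact_mod_cast this
  have htn : t0 ≤ ((n * M : ℕ) : ℝ≥0) := by
    calc t0 ≤ (⌈t0⌉₊ : ℝ≥0) := Nat.le_ceil _
      _ ≤ (n : ℝ≥0) := by exact_mod_cast le_trans (le_max_right _ _) hn
      _ ≤ ((n * M : ℕ) : ℝ≥0) := by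
          exact_mod_cast Nat.le_mul_of_pos_right n hM1
  have hφn : φ ((n * M : ℕ) : ℝ≥0) ≤ δ * ((n * M : ℕ) : ℝ≥0) := by
    have h := (ht0 _ htn).le
    rwa [div_le_iff₀ hnM] at h
  calc (∫⁻ x, (φ ((c n x).natAbs : ℝ≥0) : ℝ≥0∞) ∂μ) / (n : ℝ≥0∞)
      ≤ ((φ ((n * M : ℕ) : ℝ≥0) : ℝ≥0∞) + n * ∫⁻ x in s M, F x ∂μ) / (n : ℝ≥0∞) :=
        ENNReal.div_le_div_right (hkey M hM1 n) _
    _ = (φ ((n * M : ℕ) : ℝ≥0) : ℝ≥0∞) / n + ∫⁻ x in s M, F x ∂μ := by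
        rw [ENNReal.add_div, mul_comm (n : ℝ≥0∞), mul_div_assoc,
          ENNReal.div_self hnn (ENNReal.natCast_ne_top n), mul_one]
    _ ≤ ((δ * M : ℝ≥0) : ℝ≥0∞) + ε / 2 := by
        refine add_le_add ?_ hIM
        refine ENNReal.div_le_of_le_mul ?_
        calc (φ ((n * M : ℕ) : ℝ≥0) : ℝ≥0∞)
            ≤ ((δ * ((n * M : ℕ) : ℝ≥0) : ℝ≥0) : ℝ≥0∞) := ENNReal.coe_le_coe.mpr hφn
          _ = ((δ * M : ℝ≥0) : ℝ≥0∞) * n := by push_cast; ring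
    _ ≤ ε / 2 + ε / 2 := add_le_add hδM le_rfl
    _ = ε := ENNReal.add_halves ε
end

section
/- Let φ : ℝ₊ → ℝ₊ be a sublinear function. Then there exists a sublinear metric-compatible function ψ : ℝ₊ → ℝ₊ such that φ(t) ≤ ψ(t) for all sufficiently large t. -/
open Filter Topology
open scoped NNReal

/-- Any sublinear `φ : ℝ₊ → ℝ₊` is eventually dominated by a sublinear metric-compatible
function `ψ` (subadditive, non-decreasing, vanishing exactly at `0`). -/
theorem exists_metric_compatible_dominating (φ : ℝ≥0 → ℝ≥0)
    (hφ : Tendsto (fun t => φ t / t) atTop (nhds 0)) :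
    ∃ ψ : ℝ≥0 → ℝ≥0,
      (∀ s t, ψ (s + t) ≤ ψ s + ψ t) ∧
      Monotone ψ ∧
      ψ 0 = 0 ∧
      (∀ t, 0 < t → 0 < ψ t) ∧
      Tendsto (fun t => ψ t / t) atTop (nhds 0) ∧
      ∃ t₀ : ℝ≥0, ∀ t, t₀ ≤ t → φ t ≤ ψ t := by
  have hhalf : (2⁻¹ : ℝ≥0) < 1 := by
    have : ((2⁻¹:ℝ≥0):ℝ) < 1 := by norm_num
    exact_mod_cast this
  -- choose thresholds
  have hT : ∀ n : ℕ, ∃ T : ℝ≥0, ∀ t, T ≤ t → φ t / t ≤ 2⁻¹ ^ n := by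
    intro n
    have hε : (0:ℝ≥0) < 2⁻¹ ^ n := pow_pos (by norm_num) n
    have h := hφ.eventually (gt_mem_nhds hε)
    rw [eventually_atTop] at h
    obtain ⟨T, hT⟩ := h
    exact ⟨T, fun t ht => (hT t ht).le⟩
  choose T hTspec using hT
  -- an increasing sequence of thresholds
  set B : ℕ → ℝ≥0 := fun n => Nat.rec (max 1 (T 0)) (fun n Bn => max (Bn + 1) (T (n+1))) n
    with hBdef
  have hBsucc : ∀ n, B (n+1) = max (B n + 1) (T (n+1)) := fun n => rfl
  have hBT : ∀ n, T n ≤ B n := by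
    intro n; cases n with
    | zero => exact le_max_right _ _
    | succ m => rw [hBsucc]; exact le_max_right _ _
  have hBstep : ∀ n, B n + 1 ≤ B (n+1) := fun n => by rw [hBsucc]; exact le_max_left _ _
  have hBmono : Monotone B := monotone_nat_of_le_succ fun n =>
    le_trans (le_add_right le_rfl) (hBstep n)
  have hB1 : ∀ n, 1 ≤ B n := fun n => le_trans (le_max_left _ _) (hBmono (Nat.zero_le n))
  have hBge : ∀ n : ℕ, ((n:ℝ≥0)+1) ≤ B n := by
    intro n; induction n with
    | zero => simpa using hB1 0
    | succ m ih =>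
        push_cast
        calc ((m:ℝ≥0)+1)+1 ≤ B m + 1 := add_le_add_left ih 1
          _ ≤ B (m+1) := hBstep m
  -- building blocks
  set f : ℕ → ℝ≥0 → ℝ≥0 := fun n t => min (2⁻¹ ^ n * t) (2⁻¹ ^ n * B (n+1)) with hfdef
  set ψ : ℝ≥0 → ℝ≥0 := fun t => ⨆ n, f n t with hψdef
  have hpowle : ∀ n : ℕ, (2⁻¹:ℝ≥0) ^ n ≤ 1 := fun n => pow_le_one₀ zero_le hhalf.le
  have hfle : ∀ n t, f n t ≤ t := by
    intro n t
    refine (min_le_left _ _).trans ?_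
    calc (2⁻¹:ℝ≥0)^n * t ≤ 1 * t := mul_le_mul_left (hpowle n) t
      _ = t := one_mul t
  have hbdd : ∀ t, BddAbove (Set.range fun n => f n t) := fun t =>
    ⟨t, by rintro x ⟨n, rfl⟩; exact hfle n t⟩
  have hle_ψ : ∀ n t, f n t ≤ ψ t := fun n t => le_ciSup (hbdd t) n
  have hψ_le : ∀ t (c : ℝ≥0), (∀ n, f n t ≤ c) → ψ t ≤ c := fun t c h => ciSup_le h
  -- min subadditivity
  have hmin : ∀ x y c : ℝ≥0, min (x + y) c ≤ min x c + min y c := by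
    intro x y c
    rcases le_total x c with hx | hx
    · rcases le_total y c with hy | hy
      · rw [min_eq_left hx, min_eq_left hy]; exact min_le_left _ _
      · rw [min_eq_right hy]; exact (min_le_right _ _).trans (le_add_left le_rfl)
    · rw [min_eq_right hx]; exact (min_le_right _ _).trans (le_add_right le_rfl)
  refine ⟨ψ, ?_, ?_, ?_, ?_, ?_, ?_⟩
  · -- subadditive
    intro s t
    refine hψ_le _ _ fun n => ?_
    have : f n (s + t) ≤ f n s + f n t := by
      simp only [hfdef, mul_add]
      exact hmin _ _ _
    exact this.trans (add_le_add (hle_ψ n s) (hle_ψ n t))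
  · -- monotone
    intro s t hst
    refine hψ_le _ _ fun n => ?_
    exact (min_le_min (mul_le_mul_right hst _) le_rfl).trans (hle_ψ n t)
  · -- ψ 0 = 0
    have : ∀ n, f n 0 = 0 := by intro n; simp [hfdef]
    rw [hψdef]
    simp only [this, ciSup_const]
  · -- positivity
    intro t ht
    have h0 : f 0 t ≤ ψ t := hle_ψ 0 t
    have : 0 < f 0 t := by
      simp only [hfdef, pow_zero, one_mul]
      exact lt_min ht (lt_of_lt_of_le one_pos (hB1 1))
    exact this.trans_le h0
  · -- sublinear
    rw [tendsto_order]
    constructor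
    · intro a ha; exact absurd ha (not_lt.2 zero_le)
    · intro ε hε
      have hε2 : (0:ℝ≥0) < ε / 2 := by positivity
      obtain ⟨N, hN⟩ : ∃ N : ℕ, (2⁻¹:ℝ≥0) ^ N < ε / 2 := exists_pow_lt_of_lt_one hε2 hhalf
      rw [eventually_atTop]
      refine ⟨max 1 (B N / (ε/2)), fun t ht => ?_⟩
      have ht1 : (1:ℝ≥0) ≤ t := le_trans (le_max_left _ _) ht
      have ht0 : t ≠ 0 := by positivity
      have hψt : ψ t ≤ B N + 2⁻¹ ^ N * t := by
        refine hψ_le _ _ fun n => ?_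
        rcases lt_or_ge n N with hn | hn
        · refine le_trans (min_le_right _ _) ?_
          calc (2⁻¹:ℝ≥0)^n * B (n+1) ≤ 1 * B (n+1) := mul_le_mul_left (hpowle n) _
            _ = B (n+1) := one_mul _
            _ ≤ B N := hBmono hn
            _ ≤ B N + 2⁻¹ ^ N * t := le_add_right le_rfl
        · refine le_trans (min_le_left _ _) ?_
          calc (2⁻¹:ℝ≥0)^n * t ≤ 2⁻¹ ^ N * t :=
                mul_le_mul_left (pow_le_pow_of_le_one zero_le hhalf.le hn) t
            _ ≤ B N + 2⁻¹ ^ N * t := le_add_left le_rfl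
      have hdiv : ψ t / t ≤ B N / t + 2⁻¹ ^ N := by
        have h1 : ψ t / t ≤ (B N + 2⁻¹ ^ N * t) / t := by
          rw [div_eq_mul_inv, div_eq_mul_inv]
          exact mul_le_mul_left hψt _
        have h2 : (B N + 2⁻¹ ^ N * t) / t = B N / t + 2⁻¹ ^ N := by
          rw [add_div, mul_div_assoc, div_self ht0, mul_one]
        rw [h2] at h1; exact h1
      have hBNt : B N / t ≤ ε / 2 := by
        rw [div_le_iff₀ (pos_iff_ne_zero.2 ht0)]
        have : B N / (ε/2) ≤ t := le_trans (le_max_right _ _) ht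
        calc B N = ε / 2 * (B N / (ε/2)) := by
              rw [mul_comm, div_mul_cancel₀ _ hε2.ne']
          _ ≤ ε / 2 * t := mul_le_mul_right this _
      calc ψ t / t ≤ B N / t + 2⁻¹ ^ N := hdiv
        _ < ε / 2 + ε / 2 := add_lt_add_of_le_of_lt hBNt hN
        _ = ε := add_halves ε
  · -- eventual domination
    refine ⟨B 0, fun t ht => ?_⟩
    have hex : ∃ n, t < B n := by
      obtain ⟨n, hn⟩ := exists_nat_gt t
      exact ⟨n, lt_of_lt_of_le hn (le_trans (le_add_right le_rfl) (hBge n))⟩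
    set n := Nat.find hex with hndef
    have hnlt : t < B n := Nat.find_spec hex
    have hn0 : n ≠ 0 := by
      intro h
      rw [h] at hnlt
      exact absurd ht (not_le.2 hnlt)
    obtain ⟨m, hm⟩ : ∃ m, n = m + 1 := ⟨n - 1, (Nat.succ_pred_eq_of_pos (Nat.pos_of_ne_zero hn0)).symm⟩
    have hBm : B m ≤ t := by
      have := Nat.find_min hex (by omega : m < n)
      exact not_lt.1 this
    have ht0 : t ≠ 0 := by
      intro h
      rw [h] at hBm
      exact absurd (le_antisymm hBm zero_le) (by
        have := hB1 m
        intro hc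
        rw [hc] at this
        exact absurd this (by norm_num))
    have hφt : φ t ≤ 2⁻¹ ^ m * t := by
      have h1 : φ t / t ≤ 2⁻¹ ^ m := hTspec m t (le_trans (hBT m) hBm)
      rwa [div_le_iff₀ (pos_iff_ne_zero.2 ht0)] at h1
    have hfm : φ t ≤ f m t := by
      refine le_min hφt ?_
      refine hφt.trans (mul_le_mul_right ?_ _)
      rw [hm] at hnlt
      exact hnlt.le
    exact hfm.trans (hle_ψ m t)
end

section
/- Let φ : ℝ₊ → ℝ₊ be a metric-compatible function, let T ∈ Aut(X,μ) be an aperiodic transformation, let A ⊆ X be a measurable subset, and let C > 0. Then ∫_A φ(n_{T,A}(x)) dμ ≤ C φ(1) μ(A) + sup_{t > C} φ(t)/t, where n_{T,A} is the first return time of T to A. -/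
open MeasureTheory Filter Topology
open scoped ENNReal NNReal

lemma phi_nat_le (φ : ℝ≥0 → ℝ≥0) (hsub : ∀ s t, φ (s+t) ≤ φ s + φ t) (h0 : φ 0 = 0) :
    ∀ n : ℕ, φ (n : ℝ≥0) ≤ n * φ 1 := by
  intro n; induction n with
  | zero => simp [h0]
  | succ n ih =>
    push_cast
    calc φ ((n:ℝ≥0)+1) ≤ φ n + φ 1 := hsub _ _
    _ ≤ n * φ 1 + φ 1 := add_le_add_left ih _
    _ = ((n:ℝ≥0)+1) * φ 1 := by ring

lemma kac_le_one {X : Type*} [MeasurableSpace X] (μ : Measure X) [IsProbabilityMeasure μ]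
    (T : X ≃ᵐ X) (hT : MeasurePreserving (⇑T) μ μ)
    (A' : Set X) (hA' : MeasurableSet A') (ρ : X → ℕ) (hρ : Measurable ρ)
    (hmem : ∀ x ∈ A', ∀ m : ℕ, 0 < m → m < ρ x → (⇑T)^[m] x ∉ A') :
    ∫⁻ x in A', (ρ x : ℝ≥0∞) ∂μ ≤ 1 := by
  set E : ℕ → Set X := fun k => {y | k < ρ y} ∩ A' with hE
  have hEk : ∀ k, MeasurableSet (E k) := fun k =>
    (hρ measurableSet_Ioi).inter hA'
  have hTsymm : MeasurePreserving (⇑T.symm) μ μ := (MeasurePreserving.symm T hT)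
  set F : ℕ → Set X := fun k => (⇑T.symm)^[k] ⁻¹' (E k) with hF
  have hFk : ∀ k, MeasurableSet (F k) := fun k =>
    (hTsymm.iterate k).measurable (hEk k)
  have hμF : ∀ k, μ (F k) = μ (E k) := fun k =>
    (hTsymm.iterate k).measure_preimage (hEk k).nullMeasurableSet
  have hTTsymm : ∀ n x, (⇑T)^[n] ((⇑T.symm)^[n] x) = x := by
    intro n x
    exact Function.LeftInverse.iterate (fun y => T.apply_symm_apply y) n x
  have key : ∀ j k, j < k → Disjoint (F j) (F k) := by
    intro j k hlt
    rw [Set.disjoint_left]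
    rintro z hzj hzk
    have hy : (⇑T.symm)^[k] z ∈ E k := hzk
    have hx : (⇑T.symm)^[j] z ∈ E j := hzj
    set y := (⇑T.symm)^[k] z
    set x := (⇑T.symm)^[j] z
    have hyx : (⇑T)^[k - j] y = x := by
      have : y = (⇑T.symm)^[k - j] x := by
        simp only [y, x]
        rw [← Function.iterate_add_apply]
        congr 1; omega
      rw [this, hTTsymm]
    have hyA : y ∈ A' := hy.2
    have hyρ : k < ρ y := hy.1
    exact hmem y hyA (k - j) (by omega) (by omega) (hyx ▸ hx.2)
  have hdisj : Pairwise (Function.onFun Disjoint F) := by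
    intro j k hjk
    rcases lt_or_gt_of_ne hjk with h | h
    · exact key j k h
    · exact (key k j h).symm
  have hsum : ∑' k, μ (E k) ≤ 1 := by
    calc ∑' k, μ (E k) = ∑' k, μ (F k) := by simp_rw [hμF]
    _ = μ (⋃ k, F k) := (measure_iUnion hdisj hFk).symm
    _ ≤ 1 := prob_le_one
  refine le_trans (le_of_eq ?_) hsum
  have hcast : ∀ n : ℕ, (∑' k : ℕ, if k < n then (1:ℝ≥0∞) else 0) = n := by
    intro n
    rw [tsum_eq_sum (s := Finset.range n)
      (by intro k hk; simp only [Finset.mem_range] at hk; simp [hk])]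
    rw [Finset.sum_congr rfl (fun k hk => if_pos (Finset.mem_range.mp hk))]
    simp
  calc ∫⁻ x in A', (ρ x : ℝ≥0∞) ∂μ
      = ∫⁻ x in A', ∑' k : ℕ, Set.indicator {y | k < ρ y} (fun _ => (1:ℝ≥0∞)) x ∂μ := by
        refine lintegral_congr fun x => ?_
        rw [← hcast (ρ x)]
        congr 1; ext k
        simp [Set.indicator_apply]
    _ = ∑' k : ℕ, ∫⁻ x in A', Set.indicator {y | k < ρ y} (fun _ => (1:ℝ≥0∞)) x ∂μ :=
        lintegral_tsum fun k =>
          ((measurable_const.indicator (hρ measurableSet_Ioi))).aemeasurable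
    _ = ∑' k, μ (E k) := by
        refine tsum_congr fun k => ?_
        have hs : MeasurableSet {y | k < ρ y} := hρ measurableSet_Ioi
        rw [lintegral_indicator hs, setLIntegral_one, Measure.restrict_apply hs]

/-- For a metric-compatible `φ`, an aperiodic `T`, a measurable set `A` and `C > 0`,
the first return time `ρ = n_{T,A}` satisfies
`∫_A φ(ρ) dμ ≤ C φ(1) μ(A) + sup_{t > C} φ(t)/t`. -/
theorem lintegral_phi_first_return_time_le {X : Type*} [MeasurableSpace X]
    [StandardBorelSpace X] (μ : Measure X) [IsProbabilityMeasure μ] [NullSingletonClass μ]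
    (φ : ℝ≥0 → ℝ≥0) (hmc : MetricCompatible φ)
    (T : X ≃ᵐ X) (hT : MeasurePreserving (⇑T) μ μ) (hap : Aperiodic μ T)
    (A : Set X) (hA : MeasurableSet A) (C : ℝ≥0) (hC : 0 < C)
    (ρ : X → ℕ) (hρ : Measurable ρ)
    (hret : ∀ᵐ x ∂μ, x ∈ A → (0 < ρ x ∧ (T.toEquiv ^ ρ x) x ∈ A ∧
      ∀ m : ℕ, 0 < m → m < ρ x → (T.toEquiv ^ m) x ∉ A)) :
    ∫⁻ x in A, (φ (ρ x : ℝ≥0) : ℝ≥0∞) ∂μ ≤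
      (C : ℝ≥0∞) * (φ 1 : ℝ≥0∞) * μ A +
        ⨆ (t : ℝ≥0) (_ : C < t), ((φ t : ℝ≥0∞) / (t : ℝ≥0∞)) := by
  obtain ⟨hsub, hmono, h0, hpos⟩ := hmc
  set S := ⨆ (t : ℝ≥0) (_ : C < t), ((φ t : ℝ≥0∞) / (t : ℝ≥0∞)) with hSdef
  set P : X → Prop := fun x => x ∈ A → (0 < ρ x ∧ (T.toEquiv ^ ρ x) x ∈ A ∧
      ∀ m : ℕ, 0 < m → m < ρ x → (T.toEquiv ^ m) x ∉ A) with hP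
  have hN0 : μ {x | ¬ P x} = 0 := hret
  set N := toMeasurable μ {x | ¬ P x} with hNdef
  have hN : μ N = 0 := by rw [hNdef, measure_toMeasurable]; exact hN0
  set A' := A \ N with hA'def
  have hA' : MeasurableSet A' := hA.diff (measurableSet_toMeasurable μ _)
  have hAeq : A' =ᵐ[μ] A := by
    refine (MeasureTheory.diff_ae_eq_self (s := A) (t := N)).mpr ?_
    exact measure_mono_null Set.inter_subset_right hN
  have hμA' : μ A' = μ A := measure_congr hAeq
  have hPx : ∀ x ∈ A', P x := by
    intro x hx
    by_contra h
    exact hx.2 (subset_toMeasurable μ _ h)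
  have hpow : ∀ (m : ℕ) (x : X), (T.toEquiv ^ m) x = (⇑T)^[m] x := by
    intro m x
    rw [← Equiv.Perm.iterate_eq_pow]
    rfl
  -- pointwise bound
  have hφn := phi_nat_le φ hsub h0
  set g : X → ℝ≥0∞ := fun x => if C < (ρ x : ℝ≥0) then (((ρ x : ℝ≥0)) : ℝ≥0∞) else 0
    with hgdef
  have hg : Measurable g := by
    have : g = (fun n : ℕ => if C < (n : ℝ≥0) then (((n : ℝ≥0)) : ℝ≥0∞) else 0) ∘ ρ := rfl
    rw [this]
    exact (measurable_from_top).comp hρ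
  have hbound : ∀ x, (φ (ρ x : ℝ≥0) : ℝ≥0∞) ≤ (C : ℝ≥0∞) * (φ 1 : ℝ≥0∞) + S * g x := by
    intro x
    by_cases h : C < (ρ x : ℝ≥0)
    · have h1 : (φ (ρ x : ℝ≥0) : ℝ≥0∞) / (((ρ x : ℝ≥0)) : ℝ≥0∞) ≤ S := by
        rw [hSdef]
        exact le_iSup₂ (f := fun (t : ℝ≥0) (_ : C < t) => ((φ t : ℝ≥0∞) / (t : ℝ≥0∞)))
          (ρ x : ℝ≥0) h
      have hne : (((ρ x : ℝ≥0)) : ℝ≥0∞) ≠ 0 := by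
        simp only [ne_eq, ENNReal.coe_eq_zero]
        exact (hC.trans h).ne'
      calc (φ (ρ x : ℝ≥0) : ℝ≥0∞)
          = (φ (ρ x : ℝ≥0) : ℝ≥0∞) / (((ρ x : ℝ≥0)) : ℝ≥0∞) * (((ρ x : ℝ≥0)) : ℝ≥0∞) :=
            (ENNReal.div_mul_cancel hne ENNReal.coe_ne_top).symm
        _ ≤ S * g x := by
            rw [hgdef]; simp only [if_pos h]
            exact mul_le_mul_left h1 _
        _ ≤ (C : ℝ≥0∞) * (φ 1 : ℝ≥0∞) + S * g x := le_add_self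
    · have hgx : g x = 0 := by rw [hgdef]; simp [h]
      rw [hgx, mul_zero, add_zero]
      calc (φ (ρ x : ℝ≥0) : ℝ≥0∞) ≤ (((ρ x : ℝ≥0) * φ 1 : ℝ≥0) : ℝ≥0∞) := by
            exact_mod_cast hφn (ρ x)
        _ = (((ρ x : ℝ≥0)) : ℝ≥0∞) * (φ 1 : ℝ≥0∞) := by push_cast; ring
        _ ≤ (C : ℝ≥0∞) * (φ 1 : ℝ≥0∞) := by
            refine mul_le_mul_left ?_ _
            exact_mod_cast not_lt.mp h
  -- Kac bound
  have hkac : ∫⁻ x in A', ((ρ x : ℕ) : ℝ≥0∞) ∂μ ≤ 1 := by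
    refine kac_le_one μ T hT A' hA' ρ hρ ?_
    intro x hx m hm hmρ hTm
    have := (hPx x hx hx.1).2.2 m hm hmρ
    rw [hpow] at this
    exact this (hTm.1)
  have hgle : ∫⁻ x in A', g x ∂μ ≤ 1 := by
    refine le_trans (lintegral_mono fun x => ?_) hkac
    rw [hgdef]
    dsimp only
    split
    · simp
    · simp
  calc ∫⁻ x in A, (φ (ρ x : ℝ≥0) : ℝ≥0∞) ∂μ
      = ∫⁻ x in A', (φ (ρ x : ℝ≥0) : ℝ≥0∞) ∂μ := (setLIntegral_congr hAeq).symm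
    _ ≤ ∫⁻ x in A', ((C : ℝ≥0∞) * (φ 1 : ℝ≥0∞) + S * g x) ∂μ :=
        lintegral_mono fun x => hbound x
    _ = (C : ℝ≥0∞) * (φ 1 : ℝ≥0∞) * μ A' + S * ∫⁻ x in A', g x ∂μ := by
        rw [lintegral_add_left measurable_const, lintegral_const_mul _ hg,
          setLIntegral_const]
    _ ≤ (C : ℝ≥0∞) * (φ 1 : ℝ≥0∞) * μ A + S := by
        rw [hμA']
        refine add_le_add le_rfl ?_
        calc S * ∫⁻ x in A', g x ∂μ ≤ S * 1 := mul_le_mul_right hgle _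
          _ = S := mul_one S
end

section
/- Let T ∈ Aut(X,μ) be an aperiodic transformation and let φ : ℝ₊ → ℝ₊ be a metric-compatible function. For every U ∈ [T]_φ and every measurable subset A ⊆ X, the first return map U_A satisfies ∫_X φ(|c_{U_A}(x)|) dμ ≤ ∫_X φ(|c_U(x)|) dμ, where c_{U_A} and c_U are the T-cocycles of U_A and U respectively; in particular U_A ∈ [T]_φ. -/
open MeasureTheory Filter Topology
open scoped ENNReal NNReal

/-- `V` is the first return map of `U` to `A`: a.e., for `x ∈ A`, `V x = Uⁿ x` where `n`
is the first return time of `x` to `A`, and `V x = x` for `x ∉ A`. -/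
def IsFirstReturnMap {X : Type*} [MeasurableSpace X] (μ : Measure X) (U V : X ≃ᵐ X)
    (A : Set X) : Prop :=
  ∀ᵐ x ∂μ, (x ∈ A → ∃ n : ℕ, 0 < n ∧ (U.toEquiv ^ n) x ∈ A ∧
      (∀ m : ℕ, 0 < m → m < n → (U.toEquiv ^ m) x ∉ A) ∧ V x = (U.toEquiv ^ n) x) ∧
    (x ∉ A → V x = x)

private lemma equivPow_apply_iterate' {X : Type*} (e : Equiv.Perm X) (k : ℕ) (x : X) :
    (e ^ k) x = (⇑e)^[k] x := by
  induction k generalizing x with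
  | zero => rfl
  | succ n ih => rw [pow_succ, Equiv.Perm.mul_apply, Function.iterate_succ_apply, ih]

private lemma symm_pow_eq' {X : Type*} (e : Equiv.Perm X) (k : ℕ) :
    (e ^ k).symm = e.symm ^ k := by
  calc (e ^ k).symm = (e ^ k)⁻¹ := ((e ^ k).inv_def).symm
    _ = e⁻¹ ^ k := (inv_pow e k).symm
    _ = e.symm ^ k := by rw [Equiv.Perm.inv_def]

private lemma phi_finsum_le' (φ : ℝ≥0 → ℝ≥0) (hsub : ∀ s t, φ (s + t) ≤ φ s + φ t)
    (h0 : φ 0 = 0) (n : ℕ) (b : ℕ → ℝ≥0) :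
    φ (∑ k ∈ Finset.range n, b k) ≤ ∑ k ∈ Finset.range n, φ (b k) := by
  induction n with
  | zero => simp [h0]
  | succ n ih =>
    rw [Finset.sum_range_succ, Finset.sum_range_succ]
    exact (hsub _ _).trans (add_le_add ih le_rfl)

private lemma natAbs_finsum_le' (n : ℕ) (b : ℕ → ℤ) :
    (∑ k ∈ Finset.range n, b k).natAbs ≤ ∑ k ∈ Finset.range n, (b k).natAbs := by
  induction n with
  | zero => simp
  | succ n ih =>
    rw [Finset.sum_range_succ, Finset.sum_range_succ]
    exact (Int.natAbs_add_le _ _).trans (Nat.add_le_add_right ih _)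

/-- **Kac-type inequality for `φ`-integrable full groups**: for `U ∈ [T]_φ` with
`T`-cocycle `cU` and any measurable `A`, the first return map `V = U_A` with `T`-cocycle
`cV` satisfies `∫ φ(|cV|) dμ ≤ ∫ φ(|cU|) dμ`; in particular `U_A ∈ [T]_φ`. -/
theorem lintegral_phi_cocycle_first_return_le {X : Type*} [MeasurableSpace X]
    [StandardBorelSpace X] (μ : Measure X) [IsProbabilityMeasure μ] [NullSingletonClass μ]
    (φ : ℝ≥0 → ℝ≥0) (hmc : MetricCompatible φ)
    (T : X ≃ᵐ X) (hT : MeasurePreserving (⇑T) μ μ) (hap : Aperiodic μ T)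
    (U : X ≃ᵐ X) (hU : MeasurePreserving (⇑U) μ μ)
    (cU : X → ℤ) (hcU : Measurable cU) (hUcoc : ∀ᵐ x ∂μ, U x = (T.toEquiv ^ cU x) x)
    (hUint : ∫⁻ x, (φ ((cU x).natAbs : ℝ≥0) : ℝ≥0∞) ∂μ < ⊤)
    (A : Set X) (hA : MeasurableSet A)
    (V : X ≃ᵐ X) (hV : MeasurePreserving (⇑V) μ μ) (hfr : IsFirstReturnMap μ U V A)
    (cV : X → ℤ) (hcV : Measurable cV) (hVcoc : ∀ᵐ x ∂μ, V x = (T.toEquiv ^ cV x) x) :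
    ∫⁻ x, (φ ((cV x).natAbs : ℝ≥0) : ℝ≥0∞) ∂μ ≤
      ∫⁻ x, (φ ((cU x).natAbs : ℝ≥0) : ℝ≥0∞) ∂μ := by
  classical
  set φk : ℕ → X → X := fun k x => (U.toEquiv ^ k) x with hφk_def
  have hφk_iter : ∀ k, φk k = (⇑U)^[k] := by
    intro k; funext x; exact equivPow_apply_iterate' U.toEquiv k x
  have hφk_mp : ∀ k, MeasurePreserving (φk k) μ μ := by
    intro k; rw [hφk_iter k]; exact hU.iterate k
  have hφk_meas : ∀ k, Measurable (φk k) := fun k => (hφk_mp k).measurable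
  have hφmeas : Measurable φ := hmc.2.1.measurable
  set f : X → ℝ≥0∞ := fun x => (φ ((cU x).natAbs : ℝ≥0) : ℝ≥0∞) with hf_def
  have hcUabs : Measurable fun x => ((cU x).natAbs : ℝ≥0) :=
    (measurable_from_top (f := fun z : ℤ => ((z.natAbs : ℝ≥0)))).comp hcU
  have hf : Measurable f := measurable_coe_nnreal_ennreal.comp (hφmeas.comp hcUabs)
  -- the Kac tower bases
  set B : ℕ → Set X := fun k => {x | x ∈ A ∧ ∀ m, 1 ≤ m → m ≤ k → φk m x ∉ A} with hB_def
  have hBmeas : ∀ k, MeasurableSet (B k) := by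
    intro k
    have hBeq : B k = A ∩ ⋂ (m : ℕ) (_ : 1 ≤ m) (_ : m ≤ k), (φk m) ⁻¹' Aᶜ := by
      ext x
      simp only [hB_def, Set.mem_setOf_eq, Set.mem_inter_iff, Set.mem_iInter,
        Set.mem_preimage, Set.mem_compl_iff]
    rw [hBeq]
    exact hA.inter (MeasurableSet.iInter fun m => MeasurableSet.iInter fun _ =>
      MeasurableSet.iInter fun _ => (hφk_meas m) hA.compl)
  -- the Kac tower levels
  set ψ : ℕ → X → X := fun k x => (U.toEquiv ^ k).symm x with hψ_def
  have hψmeas : ∀ k, Measurable (ψ k) := by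
    intro k
    have h1 : ψ k = (⇑U.symm)^[k] := by
      funext x
      show (U.toEquiv ^ k).symm x = (⇑U.symm)^[k] x
      rw [symm_pow_eq']
      exact equivPow_apply_iterate' U.toEquiv.symm k x
    rw [h1]
    exact ((MeasurePreserving.symm U hU).iterate k).measurable
  set C : ℕ → Set X := fun k => (ψ k) ⁻¹' B k with hC_def
  have hCmeas : ∀ k, MeasurableSet (C k) := fun k => (hψmeas k) (hBmeas k)
  have hmemC : ∀ k x, φk k x ∈ C k ↔ x ∈ B k := by
    intro k x
    simp only [hC_def, Set.mem_preimage, hψ_def, hφk_def, Equiv.symm_apply_apply]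
  -- disjointness of the tower levels
  have hdisj_lt : ∀ k j : ℕ, k < j → Disjoint (C k) (C j) := by
    intro k j hkj
    rw [Set.disjoint_left]
    rintro y hyk hyj
    have h1 : ψ k y ∈ B k := hyk
    have h2 : ψ j y ∈ B j := hyj
    have key : φk (j - k) (ψ j y) = ψ k y := by
      apply (U.toEquiv ^ k).injective
      show (U.toEquiv ^ k) ((U.toEquiv ^ (j - k)) ((U.toEquiv ^ j).symm y)) =
        (U.toEquiv ^ k) ((U.toEquiv ^ k).symm y)
      rw [← Equiv.Perm.mul_apply, ← pow_add, Nat.add_sub_cancel' hkj.le,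
        Equiv.apply_symm_apply, Equiv.apply_symm_apply]
    have h3 := h2.2 (j - k) (by omega) (by omega)
    rw [key] at h3
    exact h3 h1.1
  have hdisj : Pairwise (Function.onFun Disjoint C) := by
    intro k j hkj
    rcases lt_or_gt_of_ne hkj with h | h
    · exact hdisj_lt k j h
    · exact (hdisj_lt j k h).symm
  -- a.e. propagation of the cocycle identity along the orbit
  have horb : ∀ᵐ x ∂μ, ∀ k : ℕ, U (φk k x) = (T.toEquiv ^ cU (φk k x)) (φk k x) := by
    rw [ae_all_iff]
    intro k
    exact ((hφk_mp k).quasiMeasurePreserving.tendsto_ae).eventually hUcoc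
  -- pointwise a.e. bound
  have hbound : ∀ᵐ x ∂μ, (φ ((cV x).natAbs : ℝ≥0) : ℝ≥0∞) ≤
      ∑' k : ℕ, (B k).indicator (fun y => f (φk k y)) x := by
    filter_upwards [hfr, hVcoc, hap, horb] with x hx hVx hapx horbx
    by_cases hxA : x ∈ A
    case neg =>
      have hVxx : V x = x := hx.2 hxA
      have hTx : (T.toEquiv ^ cV x) x = x := by rw [← hVx, hVxx]
      have hc0 : cV x = 0 := by
        by_contra h
        exact hapx _ h hTx
      simp [hc0, hmc.2.2.1]
    case pos =>
      obtain ⟨n, hn, hUnA, hmin, hVeq⟩ := hx.1 hxA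
      -- Birkhoff sums of the cocycle along the orbit
      have hsum : ∀ j : ℕ, φk j x =
          (T.toEquiv ^ (∑ i ∈ Finset.range j, cU (φk i x))) x := by
        intro j
        induction j with
        | zero => simp [hφk_def]
        | succ m ih =>
          calc φk (m + 1) x = U (φk m x) := by
                show (U.toEquiv ^ (m + 1)) x = U ((U.toEquiv ^ m) x)
                rw [pow_succ', Equiv.Perm.mul_apply]
                rfl
            _ = (T.toEquiv ^ cU (φk m x)) (φk m x) := horbx m
            _ = (T.toEquiv ^ cU (φk m x))
                ((T.toEquiv ^ (∑ i ∈ Finset.range m, cU (φk i x))) x) := congrArg _ ih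
            _ = (T.toEquiv ^ (cU (φk m x) + ∑ i ∈ Finset.range m, cU (φk i x))) x := by
                rw [zpow_add, Equiv.Perm.mul_apply]
            _ = (T.toEquiv ^ (∑ i ∈ Finset.range (m + 1), cU (φk i x))) x := by
                rw [Finset.sum_range_succ, add_comm]
      set S : ℤ := ∑ i ∈ Finset.range n, cU (φk i x) with hS_def
      have h1 : (T.toEquiv ^ cV x) x = (T.toEquiv ^ S) x := by
        rw [← hVx, hVeq]; exact hsum n
      have hcVS : cV x = S := by
        have e1 : (T.toEquiv ^ (-S)) ((T.toEquiv ^ cV x) x) =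
            (T.toEquiv ^ (cV x - S)) x := by
          rw [← Equiv.Perm.mul_apply, ← zpow_add, neg_add_eq_sub]
        have e2 : (T.toEquiv ^ (-S)) ((T.toEquiv ^ S) x) = x := by
          rw [← Equiv.Perm.mul_apply, ← zpow_add, neg_add_cancel, zpow_zero,
            Equiv.Perm.one_apply]
        have h2 : (T.toEquiv ^ (cV x - S)) x = x := by rw [← e1, h1, e2]
        have : cV x - S = 0 := by
          by_contra h
          exact hapx _ h h2
        omega
      -- now estimate
      have hle1 : (cV x).natAbs ≤ ∑ i ∈ Finset.range n, (cU (φk i x)).natAbs := by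
        rw [hcVS, hS_def]; exact natAbs_finsum_le' n _
      have hle2 : φ ((cV x).natAbs : ℝ≥0) ≤
          ∑ i ∈ Finset.range n, φ ((cU (φk i x)).natAbs : ℝ≥0) := by
        calc φ ((cV x).natAbs : ℝ≥0)
            ≤ φ (∑ i ∈ Finset.range n, ((cU (φk i x)).natAbs : ℝ≥0)) := by
              apply hmc.2.1
              rw [← Nat.cast_sum]
              exact_mod_cast hle1
          _ ≤ ∑ i ∈ Finset.range n, φ ((cU (φk i x)).natAbs : ℝ≥0) :=
              phi_finsum_le' φ hmc.1 hmc.2.2.1 n _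
      have hxB : ∀ i, i < n → x ∈ B i := by
        intro i hi
        exact ⟨hxA, fun m hm1 hm2 => hmin m hm1 (lt_of_le_of_lt hm2 hi)⟩
      calc (φ ((cV x).natAbs : ℝ≥0) : ℝ≥0∞)
          ≤ ((∑ i ∈ Finset.range n, φ ((cU (φk i x)).natAbs : ℝ≥0) : ℝ≥0) : ℝ≥0∞) :=
            ENNReal.coe_le_coe.2 hle2
        _ = ∑ i ∈ Finset.range n, (φ ((cU (φk i x)).natAbs : ℝ≥0) : ℝ≥0∞) := by
            push_cast; rfl
        _ = ∑ i ∈ Finset.range n, (B i).indicator (fun y => f (φk i y)) x := by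
            apply Finset.sum_congr rfl
            intro i hi
            rw [Set.indicator_of_mem (hxB i (Finset.mem_range.1 hi))]
        _ ≤ ∑' k : ℕ, (B k).indicator (fun y => f (φk k y)) x :=
            ENNReal.sum_le_tsum _
  -- integrate
  calc ∫⁻ x, (φ ((cV x).natAbs : ℝ≥0) : ℝ≥0∞) ∂μ
      ≤ ∫⁻ x, ∑' k : ℕ, (B k).indicator (fun y => f (φk k y)) x ∂μ :=
        lintegral_mono_ae hbound
    _ = ∑' k : ℕ, ∫⁻ x, (B k).indicator (fun y => f (φk k y)) x ∂μ :=
        lintegral_tsum fun k =>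
          ((hf.comp (hφk_meas k)).indicator (hBmeas k)).aemeasurable
    _ = ∑' k : ℕ, ∫⁻ y in C k, f y ∂μ := by
        apply tsum_congr
        intro k
        have hpt : ∀ x, (B k).indicator (fun y => f (φk k y)) x =
            (C k).indicator f (φk k x) := by
          intro x
          by_cases hx : x ∈ B k
          · rw [Set.indicator_of_mem hx, Set.indicator_of_mem ((hmemC k x).2 hx)]
          · rw [Set.indicator_of_notMem hx,
              Set.indicator_of_notMem (fun h => hx ((hmemC k x).1 h))]
        calc ∫⁻ x, (B k).indicator (fun y => f (φk k y)) x ∂μ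
            = ∫⁻ x, (C k).indicator f (φk k x) ∂μ := by
              apply lintegral_congr hpt
          _ = ∫⁻ y, (C k).indicator f y ∂μ :=
              (hφk_mp k).lintegral_comp (hf.indicator (hCmeas k))
          _ = ∫⁻ y in C k, f y ∂μ := lintegral_indicator (hCmeas k) f
    _ = ∫⁻ y in ⋃ k, C k, f y ∂μ := (lintegral_iUnion hCmeas hdisj f).symm
    _ ≤ ∫⁻ y, f y ∂μ := setLIntegral_le_lintegral _ _
end

section
/- Let φ be a metric-compatible function, let f : X → ℤ be a measurable function with ∫_X φ(|f(x)|) dμ < ∞, and let (f_n) be a sequence of measurable functions f_n : X → ℤ converging in measure to f. If limsup_n ∫_X φ(|f_n(x)|) dμ ≤ ∫_X φ(|f(x)|) dμ, then ∫_X φ(|f_n(x) − f(x)|) dμ → 0 as n → ∞. -/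
open MeasureTheory Filter Topology
open scoped ENNReal NNReal

/-- **A Scheffé-type lemma** for `ℤ`-valued `φ`-integrable functions: if `fs n → f` in
measure and `limsup ∫ φ(|fs n|) ≤ ∫ φ(|f|) < ∞`, then `∫ φ(|fs n − f|) → 0`. -/
theorem scheffe_phi_integrable {X : Type*} [MeasurableSpace X]
    (μ : Measure X) [IsProbabilityMeasure μ]
    (φ : ℝ≥0 → ℝ≥0) (hmc : MetricCompatible φ)
    (f : X → ℤ) (hf : Measurable f)
    (hfint : ∫⁻ x, (φ ((f x).natAbs : ℝ≥0) : ℝ≥0∞) ∂μ < ⊤)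
    (fs : ℕ → X → ℤ) (hfs : ∀ n, Measurable (fs n))
    (hmeasconv : Tendsto (fun n => μ {x | fs n x ≠ f x}) atTop (nhds 0))
    (hlimsup : Filter.limsup (fun n => ∫⁻ x, (φ ((fs n x).natAbs : ℝ≥0) : ℝ≥0∞) ∂μ) atTop ≤
      ∫⁻ x, (φ ((f x).natAbs : ℝ≥0) : ℝ≥0∞) ∂μ) :
    Tendsto (fun n => ∫⁻ x, (φ ((fs n x - f x).natAbs : ℝ≥0) : ℝ≥0∞) ∂μ)
      atTop (nhds 0) := by
  obtain ⟨hsub, hmono, hzero, hpos⟩ := hmc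
  set I : ℝ≥0∞ := ∫⁻ x, (φ ((f x).natAbs : ℝ≥0) : ℝ≥0∞) ∂μ with hI
  set A : ℕ → Set X := fun n => {x | fs n x ≠ f x} with hA
  have hAmeas : ∀ n, MeasurableSet (A n) := by
    intro n
    have : A n = (fun x => fs n x - f x) ⁻¹' {0}ᶜ := by
      ext x; simp [hA, sub_eq_zero]
    rw [this]
    exact ((hfs n).sub hf) (measurableSet_singleton 0).compl
  set B : ℕ → ℝ≥0∞ := fun n => ∫⁻ x in A n, (φ ((f x).natAbs : ℝ≥0) : ℝ≥0∞) ∂μ with hB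
  have hBtendsto : Tendsto B atTop (nhds 0) :=
    tendsto_setLIntegral_zero hfint.ne hmeasconv
  -- D_n : integral over complement equals I - B
  have hDeq : ∀ n, (∫⁻ x in (A n)ᶜ, (φ ((fs n x).natAbs : ℝ≥0) : ℝ≥0∞) ∂μ)
      = ∫⁻ x in (A n)ᶜ, (φ ((f x).natAbs : ℝ≥0) : ℝ≥0∞) ∂μ := by
    intro n
    refine setLIntegral_congr_fun (hAmeas n).compl ?_
    intro x hx
    simp only [hA, Set.mem_compl_iff, Set.mem_setOf_eq, not_not] at hx
    simp only [hx]
  have hIsplit : ∀ n, B n + (∫⁻ x in (A n)ᶜ, (φ ((f x).natAbs : ℝ≥0) : ℝ≥0∞) ∂μ) = I := by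
    intro n
    exact lintegral_add_compl _ (hAmeas n)
  rw [ENNReal.tendsto_nhds_zero]
  intro ε hε
  have hε3 : (0:ℝ≥0∞) < ε / 3 := by
    simp [ENNReal.div_pos_iff, hε.ne']
  have h1 : ∀ᶠ n in atTop,
      (∫⁻ x, (φ ((fs n x).natAbs : ℝ≥0) : ℝ≥0∞) ∂μ) < I + ε / 3 :=
    eventually_lt_of_limsup_lt (lt_of_le_of_lt hlimsup
      (ENNReal.lt_add_right hfint.ne hε3.ne'))
  have h2 : ∀ᶠ n in atTop, B n < ε / 3 :=
    hBtendsto.eventually (gt_mem_nhds hε3)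
  filter_upwards [h1, h2] with n h1n h2n
  -- bound target
  set In : ℝ≥0∞ := ∫⁻ x, (φ ((fs n x).natAbs : ℝ≥0) : ℝ≥0∞) ∂μ with hIn
  have hTzero : (∫⁻ x in (A n)ᶜ, (φ ((fs n x - f x).natAbs : ℝ≥0) : ℝ≥0∞) ∂μ) = 0 := by
    rw [setLIntegral_congr_fun (hAmeas n).compl (fun x hx => ?_),
      lintegral_zero]
    simp only [hA, Set.mem_compl_iff, Set.mem_setOf_eq, not_not] at hx
    simp [hx, hzero]
  have hTsplit : (∫⁻ x, (φ ((fs n x - f x).natAbs : ℝ≥0) : ℝ≥0∞) ∂μ)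
      = ∫⁻ x in A n, (φ ((fs n x - f x).natAbs : ℝ≥0) : ℝ≥0∞) ∂μ := by
    rw [← lintegral_add_compl (fun x => (φ ((fs n x - f x).natAbs : ℝ≥0) : ℝ≥0∞)) (hAmeas n),
      hTzero, add_zero]
  have hbound : (∫⁻ x in A n, (φ ((fs n x - f x).natAbs : ℝ≥0) : ℝ≥0∞) ∂μ)
      ≤ (∫⁻ x in A n, (φ ((fs n x).natAbs : ℝ≥0) : ℝ≥0∞) ∂μ) + B n := by
    rw [hB, ← lintegral_add_left]
    · refine lintegral_mono (fun x => ?_)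
      have hnat : ((fs n x - f x).natAbs : ℝ≥0) ≤ ((fs n x).natAbs : ℝ≥0) + ((f x).natAbs : ℝ≥0) := by
        rw [← Nat.cast_add]
        exact_mod_cast Int.natAbs_sub_le _ _
      calc (φ ((fs n x - f x).natAbs : ℝ≥0) : ℝ≥0∞)
          ≤ (φ (((fs n x).natAbs : ℝ≥0) + ((f x).natAbs : ℝ≥0)) : ℝ≥0∞) := by
            exact_mod_cast hmono hnat
        _ ≤ (φ ((fs n x).natAbs : ℝ≥0) : ℝ≥0∞) + (φ ((f x).natAbs : ℝ≥0) : ℝ≥0∞) := by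
            have := hsub ((fs n x).natAbs : ℝ≥0) ((f x).natAbs : ℝ≥0)
            exact_mod_cast this
    · exact (Measurable.of_discrete (f := fun k : ℤ => (φ (k.natAbs : ℝ≥0) : ℝ≥0∞))).comp (hfs n)
  have hC : (∫⁻ x in A n, (φ ((fs n x).natAbs : ℝ≥0) : ℝ≥0∞) ∂μ) ≤ In - (I - B n) := by
    have hsum : (∫⁻ x in A n, (φ ((fs n x).natAbs : ℝ≥0) : ℝ≥0∞) ∂μ)
        + (∫⁻ x in (A n)ᶜ, (φ ((fs n x).natAbs : ℝ≥0) : ℝ≥0∞) ∂μ) = In :=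
      lintegral_add_compl _ (hAmeas n)
    have hle : I - B n ≤ ∫⁻ x in (A n)ᶜ, (φ ((fs n x).natAbs : ℝ≥0) : ℝ≥0∞) ∂μ := by
      rw [hDeq n]
      exact tsub_le_iff_left.mpr (hIsplit n).ge
    calc (∫⁻ x in A n, (φ ((fs n x).natAbs : ℝ≥0) : ℝ≥0∞) ∂μ)
        ≤ In - (∫⁻ x in (A n)ᶜ, (φ ((fs n x).natAbs : ℝ≥0) : ℝ≥0∞) ∂μ) := by
          refine ENNReal.le_sub_of_add_le_right ?_ hsum.le
          rw [hDeq n]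
          exact ((le_add_self.trans (hIsplit n).le).trans_lt hfint).ne
      _ ≤ In - (I - B n) := tsub_le_tsub_left hle _
  calc (∫⁻ x, (φ ((fs n x - f x).natAbs : ℝ≥0) : ℝ≥0∞) ∂μ)
      ≤ (In - (I - B n)) + B n := by
        rw [hTsplit]; exact hbound.trans (add_le_add_left hC _)
    _ ≤ ((I + ε/3) - (I - ε/3)) + ε/3 := by
        refine add_le_add (tsub_le_tsub h1n.le (tsub_le_tsub_left h2n.le _)) h2n.le
    _ ≤ ε/3 + ε/3 + ε/3 := by
        refine add_le_add_left ?_ _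
        rw [tsub_le_iff_right, add_comm (ε/3 + ε/3)]
        calc I + ε/3 ≤ ((I - ε/3) + ε/3) + ε/3 := add_le_add_left le_tsub_add _
          _ = (I - ε/3) + (ε/3 + ε/3) := by ring
    _ = ε := ENNReal.add_thirds ε
end

section
/- Let φ be a sublinear metric-compatible function and let T ∈ Aut(X,μ) be an aperiodic transformation. Let U ∈ [T]_φ be aperiodic and let A ⊆ X be a measurable subset intersecting almost every U-orbit. Then there exists a sequence (A_k) of measurable subsets of A, each intersecting almost every U-orbit, such that μ(A_k) → 0 and ∫_X φ(|c_{U_{A_k}}(x)|) dμ → 0 as k → ∞, where c_{U_{A_k}} is the T-cocycle of the first return map U_{A_k}. -/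
open MeasureTheory Filter Topology
open scoped ENNReal NNReal

namespace FRAux


variable {X : Type*} [MeasurableSpace X] {μ : Measure X}

lemma meas_npow (U : X ≃ᵐ X) (n : ℕ) : Measurable fun x => (U.toEquiv ^ n) x := by
  induction n with
  | zero => exact measurable_id
  | succ n ih =>
      have : (fun x => (U.toEquiv ^ (n+1)) x) = (fun x => (U.toEquiv ^ n) x) ∘ ⇑U := by
        funext x; simp [pow_succ, Equiv.Perm.mul_apply]
      rw [this]; exact ih.comp U.measurable

lemma mp_npow (U : X ≃ᵐ X) (hU : MeasurePreserving (⇑U) μ μ) (n : ℕ) :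
    MeasurePreserving (fun x => (U.toEquiv ^ n) x) μ μ := by
  induction n with
  | zero => exact MeasurePreserving.id μ
  | succ n ih =>
      have : (fun x => (U.toEquiv ^ (n+1)) x) = (fun x => (U.toEquiv ^ n) x) ∘ ⇑U := by
        funext x; simp [pow_succ, Equiv.Perm.mul_apply]
      rw [this]; exact ih.comp hU

/-- The `n`-th power of a measurable equiv's permutation, as a measurable equiv. -/
def powME (U : X ≃ᵐ X) (n : ℕ) : X ≃ᵐ X where
  toEquiv := U.toEquiv ^ n
  measurable_toFun := meas_npow U n
  measurable_invFun := by
    have : ⇑(U.toEquiv ^ n).symm = fun x => (U.symm.toEquiv ^ n) x := by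
      funext x
      show ⇑(U.toEquiv ^ n)⁻¹ x = _
      rw [← inv_pow]; rfl
    rw [this]; exact meas_npow U.symm n

lemma mp_zpow (U : X ≃ᵐ X) (hU : MeasurePreserving (⇑U) μ μ) (m : ℤ) :
    MeasurePreserving (fun x => (U.toEquiv ^ m) x) μ μ := by
  cases m with
  | ofNat n => simpa using mp_npow U hU n
  | negSucc n =>
      have h1 : (fun x => (U.toEquiv ^ (Int.negSucc n)) x)
          = (fun x => (U.symm.toEquiv ^ (n+1)) x) := by
        funext x
        rw [zpow_negSucc, ← inv_pow]
        rfl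
      rw [h1]
      exact mp_npow U.symm (MeasurePreserving.symm U hU) (n+1)

lemma zpow_comp (e : Equiv.Perm X) (a b : ℤ) (x : X) :
    (e ^ a) ((e ^ b) x) = (e ^ (a + b)) x := by
  rw [zpow_add, Equiv.Perm.mul_apply]

lemma npow_cast (e : Equiv.Perm X) (n : ℕ) (x : X) : (e ^ n) x = (e ^ (n : ℤ)) x := by
  rw [zpow_natCast]

lemma symm_npow (U : X ≃ᵐ X) (n : ℕ) (x : X) :
    (U.symm.toEquiv ^ n) x = (U.toEquiv ^ (-(n : ℤ))) x := by
  show ((U.toEquiv⁻¹) ^ n) x = _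
  rw [inv_pow, ← zpow_natCast, ← zpow_neg]

lemma iterApply (U : X ≃ᵐ X) (n : ℕ) (x : X) : (⇑U)^[n] x = (U.toEquiv ^ n) x := by
  induction n with
  | zero => simp
  | succ n ih =>
      rw [Function.iterate_succ_apply', ih, pow_succ']
      rfl

lemma null_preimage (f : X → X) (hf : MeasurePreserving f μ μ) {s : Set X} (hs : μ s = 0) :
    μ (f ⁻¹' s) = 0 := by
  have h1 : f ⁻¹' s ⊆ f ⁻¹' (toMeasurable μ s) := Set.preimage_mono (subset_toMeasurable μ s)
  refine measure_mono_null h1 ?_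
  rw [hf.measure_preimage (measurableSet_toMeasurable μ s).nullMeasurableSet,
    measure_toMeasurable, hs]

lemma meas_piece {β : Type*} [MeasurableSpace β] {f : X → β} (P : ℕ → Set X) (g : ℕ → X → β)
    (hP : ∀ n, MeasurableSet (P n)) (hg : ∀ n, Measurable (g n))
    (hcov : ∀ x, ∃ n, x ∈ P n) (hfg : ∀ n, ∀ x ∈ P n, f x = g n x) : Measurable f := by
  intro S hS
  have h2 : f ⁻¹' S = ⋃ n, P n ∩ g n ⁻¹' S := by
    ext x
    simp only [Set.mem_iUnion, Set.mem_inter_iff, Set.mem_preimage]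
    constructor
    · intro hx
      obtain ⟨n, hn⟩ := hcov x
      exact ⟨n, hn, by rw [← hfg n x hn]; exact hx⟩
    · rintro ⟨n, hn, hx⟩
      rw [hfg n x hn]; exact hx
  rw [h2]
  exact MeasurableSet.iUnion fun n => (hP n).inter (hg n hS)

lemma phi_finsum' {φ : ℝ≥0 → ℝ≥0} (hmc : MetricCompatible φ) {ι : Type*} (s : Finset ι)
    (g : ι → ℝ≥0) : φ (∑ i ∈ s, g i) ≤ ∑ i ∈ s, φ (g i) := by
  classical
  induction s using Finset.induction_on with
  | empty => simp [hmc.2.2.1]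
  | insert _ _ hn ih =>
      rename_i a s
      rw [Finset.sum_insert hn, Finset.sum_insert hn]
      exact le_trans (hmc.1 _ _) (add_le_add_right ih _)

lemma phi_linear {φ : ℝ≥0 → ℝ≥0} (hmc : MetricCompatible φ)
    (hsub : Tendsto (fun t => φ t / t) atTop (nhds 0)) :
    ∀ ε : ℝ≥0, 0 < ε → ∃ C : ℝ≥0, ∀ t, φ t ≤ ε * t + C := by
  intro ε hε
  have h1 : ∀ᶠ t in atTop, φ t / t < ε := hsub.eventually_lt_const hε
  obtain ⟨t₀, ht₀⟩ := eventually_atTop.1 h1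
  refine ⟨φ (max t₀ 1), fun t => ?_⟩
  rcases le_total t (max t₀ 1) with h | h
  · calc φ t ≤ φ (max t₀ 1) := hmc.2.1 h
      _ ≤ ε * t + φ (max t₀ 1) := le_add_self
  · have ht : t₀ ≤ t := le_trans (le_max_left _ _) h
    have htpos : 0 < t := lt_of_lt_of_le (lt_of_lt_of_le one_pos (le_max_right t₀ 1)) h
    have h2 := ht₀ t ht
    rw [div_lt_iff₀ htpos] at h2
    calc φ t ≤ ε * t := le_of_lt h2
      _ ≤ ε * t + φ (max t₀ 1) := le_self_add


lemma symm_zpow (U : X ≃ᵐ X) (m : ℤ) (x : X) :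
    (U.symm.toEquiv ^ m) x = (U.toEquiv ^ (-m)) x := by
  show ((U.toEquiv⁻¹) ^ m) x = _
  rw [inv_zpow, ← zpow_neg]

open scoped Classical in
/-- First return time of `U` to `B` (0 if the point never returns). -/
noncomputable def retn (U : X ≃ᵐ X) (B : Set X) (x : X) : ℕ :=
  if h : ∃ n : ℕ, 0 < n ∧ (U.toEquiv ^ n) x ∈ B then Nat.find h else 0

open scoped Classical in
/-- The first-return map of `U` to `B`, cut off to the set `Ω`. -/
noncomputable def Vfun (U : X ≃ᵐ X) (B Ω : Set X) (x : X) : X :=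
  if x ∈ B ∩ Ω then (U.toEquiv ^ retn U B x) x else x

section Toolkit

variable (U : X ≃ᵐ X) (B Ω : Set X)

def InvHyp (U : X ≃ᵐ X) (Ω : Set X) : Prop := ∀ x ∈ Ω, ∀ m : ℤ, (U.toEquiv ^ m) x ∈ Ω
def ExHyp (U : X ≃ᵐ X) (B Ω : Set X) : Prop :=
  ∀ x ∈ B ∩ Ω, ∃ n : ℕ, 0 < n ∧ (U.toEquiv ^ n) x ∈ B

lemma hinvΩ_symm (hinvΩ : InvHyp U Ω) : ∀ x ∈ Ω, ∀ m : ℤ, (U.symm.toEquiv ^ m) x ∈ Ω := by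
  intro x hx m
  rw [symm_zpow]
  exact hinvΩ x hx (-m)

lemma hexV_symm (hexU : ExHyp U B Ω) : ExHyp U.symm.symm B Ω := by
  intro x hx
  simpa using hexU x hx

lemma retn_spec (hexU : ExHyp U B Ω) : ∀ x ∈ B ∩ Ω, 0 < retn U B x ∧ (U.toEquiv ^ retn U B x) x ∈ B ∧
    ∀ m : ℕ, 0 < m → m < retn U B x → (U.toEquiv ^ m) x ∉ B := by
  classical
  intro x hx
  have h := hexU x hx
  rw [retn, dif_pos h]
  refine ⟨(Nat.find_spec h).1, (Nat.find_spec h).2, fun m hm hmlt hmem => ?_⟩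
  exact Nat.find_min h hmlt ⟨hm, hmem⟩

lemma retn_eq_of (hexU : ExHyp U B Ω) (x : X) (hx : x ∈ B ∩ Ω) (k : ℕ) (hk : 0 < k)
    (hkB : (U.toEquiv ^ k) x ∈ B) (hmin : ∀ m : ℕ, 0 < m → m < k → (U.toEquiv ^ m) x ∉ B) :
    retn U B x = k := by
  classical
  have h := hexU x hx
  rw [retn, dif_pos h]
  rw [Nat.find_eq_iff h]
  exact ⟨⟨hk, hkB⟩, fun m hmlt hc => hmin m hc.1 hmlt hc.2⟩

lemma Vfun_mem (hinvΩ : InvHyp U Ω) (hexU : ExHyp U B Ω) : ∀ x ∈ B ∩ Ω, Vfun U B Ω x ∈ B ∩ Ω := by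
  intro x hx
  rw [Vfun, if_pos hx]
  refine ⟨(retn_spec U B Ω hexU x hx).2.1, ?_⟩
  rw [npow_cast]
  exact hinvΩ x hx.2 _

lemma Vfun_inv (hinvΩ : InvHyp U Ω) (hexU : ExHyp U B Ω) (hexV : ExHyp U.symm B Ω) : ∀ x ∈ B ∩ Ω, Vfun U.symm B Ω (Vfun U B Ω x) = x := by
  intro x hx
  obtain ⟨hpos, hB', hmin⟩ := retn_spec U B Ω hexU x hx
  set n := retn U B x with hn
  have hy : Vfun U B Ω x = (U.toEquiv ^ n) x := by rw [Vfun, if_pos hx]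
  have hymem : Vfun U B Ω x ∈ B ∩ Ω := Vfun_mem U B Ω hinvΩ hexU x hx
  set y := Vfun U B Ω x with hydef
  -- backward powers of y are forward powers of x
  have hkey : ∀ k : ℕ, (U.symm.toEquiv ^ k) y = (U.toEquiv ^ ((n : ℤ) - k)) x := by
    intro k
    rw [hy, symm_npow, npow_cast, zpow_comp,
      show (-(k : ℤ) + (n : ℤ)) = (n : ℤ) - k from by omega]
  have hrn : retn U.symm B y = n := by
    apply retn_eq_of U.symm B Ω hexV y hymem n hpos
    · rw [hkey n]
      simpa using hx.1
    · intro m hm hmlt hmem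
      rw [hkey m] at hmem
      have h1 : (n : ℤ) - m = ((n - m : ℕ) : ℤ) := by omega
      rw [h1, ← npow_cast] at hmem
      exact hmin (n - m) (by omega) (by omega) hmem
  rw [Vfun, if_pos hymem, hrn, hkey n]
  simp

lemma Vfun_id : ∀ x, x ∉ B ∩ Ω → Vfun U B Ω x = x := by
  intro x hx; rw [Vfun, if_neg hx]

lemma Vfun_left_inverse (hinvΩ : InvHyp U Ω) (hexU : ExHyp U B Ω) (hexV : ExHyp U.symm B Ω) : ∀ x, Vfun U.symm B Ω (Vfun U B Ω x) = x := by
  intro x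
  by_cases hx : x ∈ B ∩ Ω
  · exact Vfun_inv U B Ω hinvΩ hexU hexV x hx
  · rw [Vfun_id U B Ω x hx, Vfun_id U.symm B Ω x hx]

/-- The pieces of `B ∩ Ω` according to the value of the first return time. -/
def BkSet (U : X ≃ᵐ X) (B Ω : Set X) (k : ℕ) : Set X := (B ∩ Ω) ∩ {x | retn U B x = k}

lemma Bk_zero (hexU : ExHyp U B Ω) : BkSet U B Ω 0 = ∅ := by
  ext x
  simp only [BkSet, Set.mem_inter_iff, Set.mem_setOf_eq, Set.mem_empty_iff_false, iff_false]
  rintro ⟨hx, h0⟩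
  exact absurd h0 (Nat.pos_iff_ne_zero.1 (retn_spec U B Ω hexU x hx).1)

lemma Bk_meas (hexU : ExHyp U B Ω) (hB : MeasurableSet B) (hΩ : MeasurableSet Ω) (k : ℕ) :
    MeasurableSet (BkSet U B Ω k) := by
  rcases Nat.eq_zero_or_pos k with rfl | hk
  · rw [Bk_zero U B Ω hexU]; exact MeasurableSet.empty
  · have : BkSet U B Ω k = ((B ∩ Ω) ∩ (fun x => (U.toEquiv ^ k) x) ⁻¹' B) ∩
        ⋂ (m : ℕ), ⋂ (_ : 0 < m ∧ m < k), (fun x => (U.toEquiv ^ m) x) ⁻¹' Bᶜ := by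
      ext x
      simp only [BkSet, Set.mem_inter_iff, Set.mem_setOf_eq, Set.mem_iInter, Set.mem_preimage,
        Set.mem_compl_iff]
      constructor
      · rintro ⟨hx, hr⟩
        obtain ⟨hpos, hB', hmin⟩ := retn_spec U B Ω hexU x hx
        rw [hr] at hB' hmin
        exact ⟨⟨hx, hB'⟩, fun m hm => hmin m hm.1 hm.2⟩
      · rintro ⟨⟨hx, hkB⟩, hmin⟩
        exact ⟨hx, retn_eq_of U B Ω hexU x hx k hk hkB (fun m h1 h2 h3 => hmin m ⟨h1, h2⟩ h3)⟩
    rw [this]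
    refine (((hB.inter hΩ).inter (meas_npow U k hB)).inter ?_)
    exact MeasurableSet.iInter fun m => MeasurableSet.iInter fun _ => meas_npow U m hB.compl

lemma Bk_cover : ∀ x ∈ B ∩ Ω, x ∈ BkSet U B Ω (retn U B x) := fun x hx => ⟨hx, rfl⟩

lemma Vfun_meas (hexU : ExHyp U B Ω) (hB : MeasurableSet B) (hΩ : MeasurableSet Ω) :
    Measurable (Vfun U B Ω) := by
  apply meas_piece (fun k => Nat.rec (B ∩ Ω)ᶜ (fun n _ => BkSet U B Ω n) k)
      (fun k => Nat.rec id (fun n _ => fun x => (U.toEquiv ^ n) x) k)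
  · intro n
    cases n with
    | zero => exact (hB.inter hΩ).compl
    | succ n => exact Bk_meas U B Ω hexU hB hΩ n
  · intro n
    cases n with
    | zero => exact measurable_id
    | succ n => exact meas_npow U n
  · intro x
    by_cases hx : x ∈ B ∩ Ω
    · exact ⟨retn U B x + 1, Bk_cover U B Ω x hx⟩
    · exact ⟨0, hx⟩
  · intro n
    cases n with
    | zero => exact fun x hx => Vfun_id U B Ω x hx
    | succ n => exact fun x hx => by rw [Vfun, if_pos hx.1, hx.2]

lemma shift_eq (e : Equiv.Perm X) {i j : ℕ} (hij : i ≤ j) {a b : X}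
    (h : (e ^ i) a = (e ^ j) b) : a = (e ^ (j - i)) b := by
  have h2 : (e ^ (-(i:ℤ))) ((e ^ (i:ℤ)) a) = (e ^ (-(i:ℤ))) ((e ^ (j:ℤ)) b) := by
    rw [← npow_cast, ← npow_cast, h]
  rw [zpow_comp, zpow_comp, show (-(i:ℤ) + i) = 0 from by omega] at h2
  simpa [show (-(i:ℤ) + j) = ((j - i : ℕ) : ℤ) from by omega, ← npow_cast] using h2

lemma no_early_return (hexU : ExHyp U B Ω) {b : X} {l : ℕ} (hb : b ∈ BkSet U B Ω l)
    {d : ℕ} (hd : 0 < d) (hdl : d < l) : (U.toEquiv ^ d) b ∉ B := by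
  have := (retn_spec U B Ω hexU b hb.1).2.2 d hd (hb.2 ▸ hdl)
  exact this

lemma top_disj (hexU : ExHyp U B Ω) {k l : ℕ} (hkl : k < l) :
    Disjoint ((fun x => (U.toEquiv ^ k) x) '' BkSet U B Ω k)
      ((fun x => (U.toEquiv ^ l) x) '' BkSet U B Ω l) := by
  rw [Set.disjoint_left]
  rintro x ⟨a, ha, rfl⟩ ⟨b, hb, hba⟩
  have heq : a = (U.toEquiv ^ (l - k)) b := shift_eq U.toEquiv (le_of_lt hkl) hba.symm
  have hk0 : 0 < k := by
    have := (retn_spec U B Ω hexU a ha.1).1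
    rw [ha.2] at this; exact this
  exact no_early_return U B Ω hexU hb (by omega) (by omega) (heq ▸ ha.1.1)

lemma Bk_disj : Pairwise (Function.onFun Disjoint (BkSet U B Ω)) := by
  intro k l hkl
  rw [Function.onFun, Set.disjoint_left]
  rintro x ⟨_, h1⟩ ⟨_, h2⟩
  rw [Set.mem_setOf_eq] at h1 h2
  exact hkl (h1 ▸ h2 ▸ rfl)

lemma Vfun_on_Bk {x : X} {k : ℕ} (hx : x ∈ BkSet U B Ω k) :
    Vfun U B Ω x = (U.toEquiv ^ k) x := by
  rw [Vfun, if_pos hx.1, hx.2]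

lemma tower_cover0 (hinvΩ : InvHyp U Ω) (hexU : ExHyp U B Ω) (hexV : ExHyp U.symm B Ω) :
    (⋃ k, (fun x => (U.toEquiv ^ k) x) '' BkSet U B Ω k) = B ∩ Ω := by
  apply Set.Subset.antisymm
  · rintro y ⟨_, ⟨k, rfl⟩, a, ha, rfl⟩
    show (U.toEquiv ^ k) a ∈ B ∩ Ω
    rw [← Vfun_on_Bk U B Ω ha]
    exact Vfun_mem U B Ω hinvΩ hexU a ha.1
  · intro y hy
    have ha : Vfun U.symm B Ω y ∈ B ∩ Ω :=
      Vfun_mem U.symm B Ω (hinvΩ_symm U Ω hinvΩ) hexV y hy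
    have hVa : Vfun U B Ω (Vfun U.symm B Ω y) = y := by
      have := Vfun_inv U.symm B Ω (hinvΩ_symm U Ω hinvΩ) hexV
        (hexV_symm U B Ω hexU) y hy
      simpa using this
    refine Set.mem_iUnion.2 ⟨retn U B (Vfun U.symm B Ω y), ?_⟩
    refine ⟨Vfun U.symm B Ω y, Bk_cover U B Ω _ ha, ?_⟩
    show (U.toEquiv ^ retn U B (Vfun U.symm B Ω y)) (Vfun U.symm B Ω y) = y
    rw [← Vfun_on_Bk U B Ω (Bk_cover U B Ω _ ha), hVa]

lemma image_eq_preimage_symm (k : ℕ) (s : Set X) :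
    (fun x => (U.toEquiv ^ k) x) '' s = (fun x => (U.symm.toEquiv ^ k) x) ⁻¹' s := by
  have h1 : (fun x => (U.toEquiv ^ k) x) '' s = (U.toEquiv ^ k) '' s := rfl
  rw [h1, Equiv.image_eq_preimage_symm]
  have h2 : ⇑(U.toEquiv ^ k).symm = fun x => (U.symm.toEquiv ^ k) x := by
    funext x
    show ⇑(U.toEquiv ^ k)⁻¹ x = _
    rw [← inv_pow]; rfl
  rw [h2]

lemma image_meas (hB' : MeasurableSet B) {k : ℕ} {s : Set X} (hs : MeasurableSet s) :
    MeasurableSet ((fun x => (U.toEquiv ^ k) x) '' s) := by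
  rw [image_eq_preimage_symm]
  exact meas_npow U.symm k hs

lemma image_measure_eq (hU : MeasurePreserving (⇑U) μ μ) (k : ℕ) {s : Set X}
    (hs : MeasurableSet s) : μ ((fun x => (U.toEquiv ^ k) x) '' s) = μ s := by
  rw [image_eq_preimage_symm]
  exact (mp_npow U.symm (MeasurePreserving.symm U hU) k).measure_preimage
    hs.nullMeasurableSet

lemma Vfun_mp (hU : MeasurePreserving (⇑U) μ μ) (hB : MeasurableSet B) (hΩ : MeasurableSet Ω)
    (hinvΩ : InvHyp U Ω) (hexU : ExHyp U B Ω) (hexV : ExHyp U.symm B Ω) :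
    MeasurePreserving (Vfun U B Ω) μ μ := by
  have hmeas := Vfun_meas U B Ω hexU hB hΩ
  refine ⟨hmeas, ?_⟩
  refine Measure.ext fun S hS => ?_
  rw [Measure.map_apply hmeas hS]
  have hBkm : ∀ k, MeasurableSet (BkSet U B Ω k) := Bk_meas U B Ω hexU hB hΩ
  have hpre : Vfun U B Ω ⁻¹' S
      = ((B ∩ Ω)ᶜ ∩ S) ∪ ⋃ k, (BkSet U B Ω k ∩ (fun x => (U.toEquiv ^ k) x) ⁻¹' S) := by
    ext x
    simp only [Set.mem_preimage, Set.mem_union, Set.mem_inter_iff, Set.mem_compl_iff,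
      Set.mem_iUnion]
    by_cases hx : x ∈ B ∩ Ω
    · rw [Vfun, if_pos hx]
      constructor
      · intro h
        exact Or.inr ⟨retn U B x, Bk_cover U B Ω x hx, h⟩
      · rintro (⟨hc, _⟩ | ⟨k, hk, hS'⟩)
        · exact absurd hx hc
        · rwa [hk.2]
    · rw [Vfun, if_neg hx]
      constructor
      · intro h; exact Or.inl ⟨hx, h⟩
      · rintro (⟨_, h⟩ | ⟨k, hk, _⟩)
        · exact h
        · exact absurd hk.1 hx
  rw [hpre]
  have hDm : ∀ k, MeasurableSet (BkSet U B Ω k ∩ (fun x => (U.toEquiv ^ k) x) ⁻¹' S) :=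
    fun k => (hBkm k).inter (meas_npow U k hS)
  have hdisj : Disjoint ((B ∩ Ω)ᶜ ∩ S) (⋃ k, (BkSet U B Ω k ∩ (fun x => (U.toEquiv ^ k) x) ⁻¹' S)) := by
    rw [Set.disjoint_left]
    rintro x ⟨hxc, _⟩ hx2
    obtain ⟨_, ⟨k, rfl⟩, hk, _⟩ := hx2
    exact hxc hk.1
  rw [measure_union hdisj (MeasurableSet.iUnion hDm)]
  have hDdisj : Pairwise (Function.onFun Disjoint
      (fun k => BkSet U B Ω k ∩ (fun x => (U.toEquiv ^ k) x) ⁻¹' S)) := by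
    intro k l hkl
    exact (Bk_disj U B Ω hkl).mono Set.inter_subset_left Set.inter_subset_left
  rw [measure_iUnion hDdisj hDm]
  have himg : ∀ k, μ (BkSet U B Ω k ∩ (fun x => (U.toEquiv ^ k) x) ⁻¹' S)
      = μ ((fun x => (U.toEquiv ^ k) x) '' BkSet U B Ω k ∩ S) := by
    intro k
    rw [← Set.image_inter_preimage]
    exact (image_measure_eq U hU k (hDm k)).symm
  have hIdisj : Pairwise (Function.onFun Disjoint
      (fun k => (fun x => (U.toEquiv ^ k) x) '' BkSet U B Ω k ∩ S)) := by
    intro k l hkl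
    rcases hkl.lt_or_gt with h | h
    · exact (top_disj U B Ω hexU h).mono Set.inter_subset_left Set.inter_subset_left
    · exact ((top_disj U B Ω hexU h).symm).mono Set.inter_subset_left Set.inter_subset_left
  have hImeas : ∀ k, MeasurableSet ((fun x => (U.toEquiv ^ k) x) '' BkSet U B Ω k ∩ S) :=
    fun k => (image_meas U B hB (hBkm k)).inter hS
  calc μ ((B ∩ Ω)ᶜ ∩ S) + ∑' k, μ (BkSet U B Ω k ∩ (fun x => (U.toEquiv ^ k) x) ⁻¹' S)
      = μ ((B ∩ Ω)ᶜ ∩ S) + ∑' k, μ ((fun x => (U.toEquiv ^ k) x) '' BkSet U B Ω k ∩ S) := by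
        congr 1; exact tsum_congr himg
    _ = μ ((B ∩ Ω)ᶜ ∩ S) + μ (⋃ k, (fun x => (U.toEquiv ^ k) x) '' BkSet U B Ω k ∩ S) := by
        rw [measure_iUnion hIdisj hImeas]
    _ = μ ((B ∩ Ω)ᶜ ∩ S) + μ ((B ∩ Ω) ∩ S) := by
        rw [← Set.iUnion_inter, tower_cover0 U B Ω hinvΩ hexU hexV]
    _ = μ S := by
        rw [Set.inter_comm ((B ∩ Ω)ᶜ) S, Set.inter_comm (B ∩ Ω) S, ← Set.diff_eq, add_comm,
          measure_inter_add_diff S (hB.inter hΩ)]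

open scoped Classical in
/-- The `T`-cocycle of the first return map. -/
noncomputable def cocZ (U : X ≃ᵐ X) (cU : X → ℤ) (B Ω : Set X) (x : X) : ℤ :=
  if x ∈ B ∩ Ω then ∑ i ∈ Finset.range (retn U B x), cU ((U.toEquiv ^ i) x) else 0

lemma cocZ_meas (cU : X → ℤ) (hcU : Measurable cU) (hexU : ExHyp U B Ω)
    (hB : MeasurableSet B) (hΩ : MeasurableSet Ω) : Measurable (cocZ U cU B Ω) := by
  apply meas_piece (fun k => Nat.rec (B ∩ Ω)ᶜ (fun n _ => BkSet U B Ω n) k)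
      (fun k => Nat.rec (fun _ => (0 : ℤ))
        (fun n _ => fun x => ∑ i ∈ Finset.range n, cU ((U.toEquiv ^ i) x)) k)
  · intro n
    cases n with
    | zero => exact (hB.inter hΩ).compl
    | succ n => exact Bk_meas U B Ω hexU hB hΩ n
  · intro n
    cases n with
    | zero => exact measurable_const
    | succ n => exact Finset.measurable_sum _ fun i _ => hcU.comp (meas_npow U i)
  · intro x
    by_cases hx : x ∈ B ∩ Ω
    · exact ⟨retn U B x + 1, Bk_cover U B Ω x hx⟩
    · exact ⟨0, hx⟩
  · intro n
    cases n with
    | zero => exact fun x hx => by rw [cocZ, if_neg hx]; rfl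
    | succ n => exact fun x hx => by rw [cocZ, if_pos hx.1, hx.2]

lemma cocZ_eq_zero {cU : X → ℤ} {x : X} (hx : x ∉ B ∩ Ω) : cocZ U cU B Ω x = 0 := by
  rw [cocZ, if_neg hx]

lemma telescope (T : X ≃ᵐ X) (cU : X → ℤ) (x : X)
    (h : ∀ j : ℕ, U ((U.toEquiv ^ j) x) = (T.toEquiv ^ cU ((U.toEquiv ^ j) x)) ((U.toEquiv ^ j) x)) :
    ∀ j : ℕ, (U.toEquiv ^ j) x
      = (T.toEquiv ^ (∑ i ∈ Finset.range j, cU ((U.toEquiv ^ i) x))) x := by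
  intro j
  induction j with
  | zero => simp
  | succ j ih =>
      have h1 : (U.toEquiv ^ (j+1)) x = U ((U.toEquiv ^ j) x) := by
        rw [pow_succ']; rfl
      calc (U.toEquiv ^ (j+1)) x = U ((U.toEquiv ^ j) x) := h1
        _ = (T.toEquiv ^ cU ((U.toEquiv ^ j) x)) ((U.toEquiv ^ j) x) := h j
        _ = (T.toEquiv ^ cU ((U.toEquiv ^ j) x))
              ((T.toEquiv ^ (∑ i ∈ Finset.range j, cU ((U.toEquiv ^ i) x))) x) :=
            congrArg _ ih
        _ = (T.toEquiv ^ (cU ((U.toEquiv ^ j) x)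
              + ∑ i ∈ Finset.range j, cU ((U.toEquiv ^ i) x))) x := zpow_comp _ _ _ _
        _ = (T.toEquiv ^ (∑ i ∈ Finset.range (j+1), cU ((U.toEquiv ^ i) x))) x := by
            rw [Finset.sum_range_succ, add_comm]

lemma cocZ_identity (T : X ≃ᵐ X) (cU : X → ℤ) (hinvΩ : InvHyp U Ω)
    (hcoc : ∀ x ∈ Ω, U x = (T.toEquiv ^ cU x) x) :
    ∀ x ∈ Ω, Vfun U B Ω x = (T.toEquiv ^ cocZ U cU B Ω x) x := by
  intro x hx
  by_cases hxB : x ∈ B ∩ Ω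
  · rw [Vfun, if_pos hxB, cocZ, if_pos hxB]
    exact telescope U T cU x (fun j => hcoc _ (by
      rw [npow_cast]
      exact hinvΩ x hx j)) (retn U B x)
  · rw [Vfun, if_neg hxB, cocZ, if_neg hxB]
    simp

lemma natAbs_sum_le {ι : Type*} (s : Finset ι) (f : ι → ℤ) :
    (∑ i ∈ s, f i).natAbs ≤ ∑ i ∈ s, (f i).natAbs := by
  classical
  induction s using Finset.induction_on with
  | empty => simp
  | insert _ _ hn ih =>
      rename_i a s
      rw [Finset.sum_insert hn, Finset.sum_insert hn]
      exact le_trans (Int.natAbs_add_le _ _) (Nat.add_le_add_left ih _)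

/-- Tower sets: the `i`-th image level over the base piece with return time `k`. -/
def TkSet (U : X ≃ᵐ X) (B Ω : Set X) (p : ℕ × ℕ) : Set X :=
  if p.2 < p.1 then (fun x => (U.toEquiv ^ p.2) x) '' BkSet U B Ω p.1 else ∅

lemma Tk_meas (hB : MeasurableSet B) (hΩ : MeasurableSet Ω) (hexU : ExHyp U B Ω) (p : ℕ × ℕ) :
    MeasurableSet (TkSet U B Ω p) := by
  rw [TkSet]
  split
  · exact image_meas U B hB (Bk_meas U B Ω hexU hB hΩ p.1)
  · exact MeasurableSet.empty

lemma tk_aux (hexU : ExHyp U B Ω) {k l i j : ℕ} (hik : i < k) (hjl : j < l) (hij : i < j) :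
    Disjoint ((fun x => (U.toEquiv ^ i) x) '' BkSet U B Ω k)
      ((fun x => (U.toEquiv ^ j) x) '' BkSet U B Ω l) := by
  rw [Set.disjoint_left]
  rintro x ⟨a, ha, rfl⟩ ⟨b, hb, hba⟩
  have heq : a = (U.toEquiv ^ (j - i)) b := shift_eq U.toEquiv (le_of_lt hij) hba.symm
  exact no_early_return U B Ω hexU hb (by omega) (by omega) (heq ▸ ha.1.1)

lemma Tk_disj (hexU : ExHyp U B Ω) :
    Pairwise (Function.onFun Disjoint (TkSet U B Ω)) := by
  rintro ⟨k, i⟩ ⟨l, j⟩ hne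
  rw [Function.onFun, TkSet, TkSet]
  dsimp only
  split
  case isFalse => exact (Set.disjoint_empty _).symm
  split
  case isFalse => exact Set.disjoint_empty _
  rename_i hik hjl
  rcases lt_trichotomy i j with h | rfl | h
  · exact tk_aux U B Ω hexU hik hjl h
  · -- same level: distinct return times
    rw [Set.disjoint_left]
    rintro x ⟨a, ha, rfl⟩ ⟨b, hb, hba⟩
    have hab : a = b := (U.toEquiv ^ i).injective hba.symm
    exact hne (by rw [Prod.mk.injEq]; exact ⟨by rw [← ha.2, hab, hb.2], rfl⟩)
  · exact (tk_aux U B Ω hexU hjl hik h).symm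

lemma Tk_measure (hU : MeasurePreserving (⇑U) μ μ) (hB : MeasurableSet B)
    (hΩ : MeasurableSet Ω) (hexU : ExHyp U B Ω) {k i : ℕ} (hik : i < k) :
    μ (TkSet U B Ω (k, i)) = μ (BkSet U B Ω k) := by
  rw [TkSet, if_pos hik]
  exact image_measure_eq U hU i (Bk_meas U B Ω hexU hB hΩ k)

/-- The tail part of `φ ∘ |cU|`. -/
noncomputable def GMfun (φ : ℝ≥0 → ℝ≥0) (cU : X → ℤ) (M : ℕ) (x : X) : ℝ≥0∞ :=
  if M < (cU x).natAbs then (φ ((cU x).natAbs : ℝ≥0) : ℝ≥0∞) else 0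

lemma GM_meas (φ : ℝ≥0 → ℝ≥0) {cU : X → ℤ} (hcU : Measurable cU) (M : ℕ) :
    Measurable (GMfun φ cU M) := by
  have : GMfun φ cU M = (fun z : ℤ =>
      if M < z.natAbs then (φ (z.natAbs : ℝ≥0) : ℝ≥0∞) else 0) ∘ cU := rfl
  rw [this]
  exact (measurable_of_countable _).comp hcU

lemma GM_eq (φ : ℝ≥0 → ℝ≥0) (hmc : MetricCompatible φ) (cU : X → ℤ) (M : ℕ) (y : X) :
    ((φ (((if M < (cU y).natAbs then (cU y).natAbs else 0 : ℕ)) : ℝ≥0)) : ℝ≥0∞)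
      = GMfun φ cU M y := by
  rw [GMfun]
  split_ifs with h
  · rfl
  · simp [hmc.2.2.1]

lemma coc_int_bound [IsProbabilityMeasure μ] (φ : ℝ≥0 → ℝ≥0) (hmc : MetricCompatible φ)
    (hU : MeasurePreserving (⇑U) μ μ) (cU : X → ℤ) (hcU : Measurable cU)
    (hB : MeasurableSet B) (hΩ : MeasurableSet Ω) (hexU : ExHyp U B Ω)
    (M : ℕ) (ε C : ℝ≥0) (hC : ∀ t, φ t ≤ ε * t + C) :
    ∫⁻ x, (φ (((cocZ U cU B Ω) x).natAbs : ℝ≥0) : ℝ≥0∞) ∂μ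
      ≤ (∫⁻ x, GMfun φ cU M x ∂μ) + (ε : ℝ≥0∞) * M + (C : ℝ≥0∞) * μ B := by
  classical
  set F : X → ℝ≥0∞ := fun x => (φ (((cocZ U cU B Ω) x).natAbs : ℝ≥0) : ℝ≥0∞) with hF
  have hBkm : ∀ k, MeasurableSet (BkSet U B Ω k) := Bk_meas U B Ω hexU hB hΩ
  have hsplit : ∫⁻ x, F x ∂μ = ∫⁻ x in B ∩ Ω, F x ∂μ := by
    rw [← lintegral_add_compl F (hB.inter hΩ)]
    have h0 : ∫⁻ x in (B ∩ Ω)ᶜ, F x ∂μ = ∫⁻ _x in (B ∩ Ω)ᶜ, (0 : ℝ≥0∞) ∂μ :=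
      setLIntegral_congr_fun (hB.inter hΩ).compl (fun x hx => by
        rw [hF]; dsimp only; rw [cocZ_eq_zero U B Ω hx]
        simp [hmc.2.2.1])
    rw [h0, lintegral_zero, add_zero]
  have hcover : (B ∩ Ω : Set X) = ⋃ k, BkSet U B Ω k := by
    apply Set.Subset.antisymm
    · intro x hx; exact Set.mem_iUnion.2 ⟨retn U B x, Bk_cover U B Ω x hx⟩
    · exact Set.iUnion_subset fun k x hx => hx.1
  have hpieces : ∫⁻ x in B ∩ Ω, F x ∂μ = ∑' k, ∫⁻ x in BkSet U B Ω k, F x ∂μ := by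
    rw [hcover, lintegral_iUnion hBkm (Bk_disj U B Ω) F]
  have hptw : ∀ k, ∀ x ∈ BkSet U B Ω k, F x ≤
      (∑ i ∈ Finset.range k, GMfun φ cU M ((U.toEquiv ^ i) x))
        + (φ ((k * M : ℕ) : ℝ≥0) : ℝ≥0∞) := by
    intro k x hx
    have hcz : cocZ U cU B Ω x = ∑ i ∈ Finset.range k, cU ((U.toEquiv ^ i) x) := by
      rw [cocZ, if_pos hx.1, hx.2]
    set a : ℕ → ℕ := fun i => (cU ((U.toEquiv ^ i) x)).natAbs with ha
    set b : ℕ → ℕ := fun i => if M < a i then a i else 0 with hb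
    set c : ℕ → ℕ := fun i => if M < a i then 0 else a i with hc2
    have habs : (cocZ U cU B Ω x).natAbs ≤ ∑ i ∈ Finset.range k, a i := by
      rw [hcz]; exact natAbs_sum_le _ _
    have hsum : ∑ i ∈ Finset.range k, a i
        = (∑ i ∈ Finset.range k, b i) + ∑ i ∈ Finset.range k, c i := by
      rw [← Finset.sum_add_distrib]
      refine Finset.sum_congr rfl fun i _ => ?_
      rw [hb, hc2]; dsimp only; split <;> omega
    have hsle : (∑ i ∈ Finset.range k, c i) ≤ k * M := by
      calc ∑ i ∈ Finset.range k, c i ≤ ∑ _i ∈ Finset.range k, M := by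
            refine Finset.sum_le_sum fun i _ => ?_
            rw [hc2]; dsimp only; split
            · exact Nat.zero_le M
            · omega
        _ = k * M := by rw [Finset.sum_const, Finset.card_range, smul_eq_mul]
    have h1 : φ ((cocZ U cU B Ω x).natAbs : ℝ≥0) ≤
        (∑ i ∈ Finset.range k, φ (b i : ℝ≥0)) + φ ((k * M : ℕ) : ℝ≥0) := by
      calc φ ((cocZ U cU B Ω x).natAbs : ℝ≥0)
          ≤ φ ((∑ i ∈ Finset.range k, a i : ℕ) : ℝ≥0) := hmc.2.1 (by exact_mod_cast habs)
        _ = φ (((∑ i ∈ Finset.range k, b i : ℕ) : ℝ≥0)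
              + ((∑ i ∈ Finset.range k, c i : ℕ) : ℝ≥0)) := by rw [hsum]; push_cast; ring_nf
        _ ≤ φ ((∑ i ∈ Finset.range k, b i : ℕ) : ℝ≥0)
              + φ ((∑ i ∈ Finset.range k, c i : ℕ) : ℝ≥0) := hmc.1 _ _
        _ ≤ (∑ i ∈ Finset.range k, φ (b i : ℝ≥0)) + φ ((k * M : ℕ) : ℝ≥0) := by
            refine add_le_add ?_ (hmc.2.1 (by exact_mod_cast hsle))
            rw [show ((∑ i ∈ Finset.range k, b i : ℕ) : ℝ≥0)
              = ∑ i ∈ Finset.range k, (b i : ℝ≥0) from by push_cast; rfl]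
            exact phi_finsum' hmc _ _
    calc F x ≤ ((∑ i ∈ Finset.range k, φ (b i : ℝ≥0) : ℝ≥0) : ℝ≥0∞)
          + (φ ((k * M : ℕ) : ℝ≥0) : ℝ≥0∞) := by
          rw [← ENNReal.coe_add]
          exact ENNReal.coe_le_coe.2 h1
      _ = (∑ i ∈ Finset.range k, (φ (b i : ℝ≥0) : ℝ≥0∞))
          + (φ ((k * M : ℕ) : ℝ≥0) : ℝ≥0∞) := by rw [ENNReal.coe_finset_sum]
      _ = (∑ i ∈ Finset.range k, GMfun φ cU M ((U.toEquiv ^ i) x))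
          + (φ ((k * M : ℕ) : ℝ≥0) : ℝ≥0∞) := by
          congr 1
          refine Finset.sum_congr rfl fun i _ => ?_
          simp only [hb, ha]
          exact GM_eq φ hmc cU M _
  have hkbound : ∀ k, ∫⁻ x in BkSet U B Ω k, F x ∂μ ≤
      (∑ i ∈ Finset.range k, ∫⁻ y in TkSet U B Ω (k, i), GMfun φ cU M y ∂μ)
        + (φ ((k * M : ℕ) : ℝ≥0) : ℝ≥0∞) * μ (BkSet U B Ω k) := by
    intro k
    refine le_trans (setLIntegral_mono' (hBkm k) (hptw k)) ?_
    have hGmeas : ∀ i : ℕ, Measurable fun x => GMfun φ cU M ((U.toEquiv ^ i) x) :=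
      fun i => (GM_meas φ hcU M).comp (meas_npow U i)
    rw [lintegral_add_right _ measurable_const, lintegral_finset_sum _ (fun i _ => hGmeas i),
      setLIntegral_const]
    refine add_le_add ?_ le_rfl
    refine Finset.sum_le_sum fun i hi => ?_
    have hik : i < k := Finset.mem_range.1 hi
    have hemb : MeasurableEmbedding (fun x => (U.toEquiv ^ i) x) :=
      (powME U i).measurableEmbedding
    rw [(mp_npow U hU i).setLIntegral_comp_emb hemb (GMfun φ cU M) (BkSet U B Ω k),
      TkSet, if_pos hik]
  have htotal : ∑' k, ∫⁻ x in BkSet U B Ω k, F x ∂μ ≤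
      (∑' k, ∑ i ∈ Finset.range k, ∫⁻ y in TkSet U B Ω (k, i), GMfun φ cU M y ∂μ)
      + ∑' (k : ℕ), (φ ((k * M : ℕ) : ℝ≥0) : ℝ≥0∞) * μ (BkSet U B Ω k) := by
    rw [← ENNReal.tsum_add]
    exact ENNReal.tsum_le_tsum fun k => hkbound k
  have hT1 : (∑' k, ∑ i ∈ Finset.range k, ∫⁻ y in TkSet U B Ω (k, i), GMfun φ cU M y ∂μ)
      ≤ ∫⁻ y, GMfun φ cU M y ∂μ := by
    have h1 : ∀ k : ℕ, (∑ i ∈ Finset.range k, ∫⁻ y in TkSet U B Ω (k, i), GMfun φ cU M y ∂μ)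
        = ∑' i : ℕ, ∫⁻ y in TkSet U B Ω (k, i), GMfun φ cU M y ∂μ := by
      intro k
      refine (tsum_eq_sum fun i hi => ?_).symm
      rw [TkSet, if_neg (fun h => hi (Finset.mem_range.2 h))]
      exact setLIntegral_empty _
    calc (∑' k, ∑ i ∈ Finset.range k, ∫⁻ y in TkSet U B Ω (k, i), GMfun φ cU M y ∂μ)
        = ∑' (k : ℕ) (i : ℕ), ∫⁻ y in TkSet U B Ω (k, i), GMfun φ cU M y ∂μ := tsum_congr h1
      _ = ∑' p : ℕ × ℕ, ∫⁻ y in TkSet U B Ω p, GMfun φ cU M y ∂μ :=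
          (ENNReal.tsum_prod' (f := fun p => ∫⁻ y in TkSet U B Ω p, GMfun φ cU M y ∂μ)).symm
      _ = ∫⁻ y in ⋃ p : ℕ × ℕ, TkSet U B Ω p, GMfun φ cU M y ∂μ :=
          (lintegral_iUnion (Tk_meas U B Ω hB hΩ hexU) (Tk_disj U B Ω hexU) _).symm
      _ ≤ ∫⁻ y, GMfun φ cU M y ∂μ := setLIntegral_le_lintegral _ _
  have hkac : ∑' (k : ℕ), (k : ℝ≥0∞) * μ (BkSet U B Ω k) ≤ 1 := by
    have h1 : ∀ k : ℕ, (k : ℝ≥0∞) * μ (BkSet U B Ω k) = ∑' i : ℕ, μ (TkSet U B Ω (k, i)) := by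
      intro k
      rw [tsum_eq_sum (s := Finset.range k) (fun i hi => by
        rw [TkSet, if_neg (fun h => hi (Finset.mem_range.2 h))]; exact measure_empty)]
      rw [Finset.sum_congr rfl (fun i hi => Tk_measure U B Ω hU hB hΩ hexU (Finset.mem_range.1 hi)),
        Finset.sum_const, Finset.card_range, nsmul_eq_mul]
    calc ∑' (k : ℕ), (k : ℝ≥0∞) * μ (BkSet U B Ω k)
        = ∑' (k : ℕ) (i : ℕ), μ (TkSet U B Ω (k, i)) := tsum_congr h1
      _ = ∑' p : ℕ × ℕ, μ (TkSet U B Ω p) :=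
          (ENNReal.tsum_prod' (f := fun p => μ (TkSet U B Ω p))).symm
      _ = μ (⋃ p : ℕ × ℕ, TkSet U B Ω p) :=
          (measure_iUnion (Tk_disj U B Ω hexU) (Tk_meas U B Ω hB hΩ hexU)).symm
      _ ≤ 1 := prob_le_one
  have hBsum : ∑' (k : ℕ), μ (BkSet U B Ω k) ≤ μ B := by
    rw [← measure_iUnion (Bk_disj U B Ω) hBkm, ← hcover]
    exact measure_mono Set.inter_subset_left
  have hT2 : ∑' (k : ℕ), (φ ((k * M : ℕ) : ℝ≥0) : ℝ≥0∞) * μ (BkSet U B Ω k)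
      ≤ (ε : ℝ≥0∞) * M + (C : ℝ≥0∞) * μ B := by
    have h1 : ∀ k : ℕ, (φ ((k * M : ℕ) : ℝ≥0) : ℝ≥0∞) * μ (BkSet U B Ω k)
        ≤ ((ε : ℝ≥0∞) * M) * ((k : ℝ≥0∞) * μ (BkSet U B Ω k))
          + (C : ℝ≥0∞) * μ (BkSet U B Ω k) := by
      intro k
      calc (φ ((k * M : ℕ) : ℝ≥0) : ℝ≥0∞) * μ (BkSet U B Ω k)
          ≤ ((ε * ((k * M : ℕ) : ℝ≥0) + C : ℝ≥0) : ℝ≥0∞) * μ (BkSet U B Ω k) :=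
            mul_le_mul_left (ENNReal.coe_le_coe.2 (hC _)) _
        _ = ((ε : ℝ≥0∞) * M) * ((k : ℝ≥0∞) * μ (BkSet U B Ω k))
            + (C : ℝ≥0∞) * μ (BkSet U B Ω k) := by
            push_cast
            ring
    calc ∑' (k : ℕ), (φ ((k * M : ℕ) : ℝ≥0) : ℝ≥0∞) * μ (BkSet U B Ω k)
        ≤ ∑' (k : ℕ), (((ε : ℝ≥0∞) * M) * ((k : ℝ≥0∞) * μ (BkSet U B Ω k))
            + (C : ℝ≥0∞) * μ (BkSet U B Ω k)) := ENNReal.tsum_le_tsum h1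
      _ = ((ε : ℝ≥0∞) * M) * (∑' (k : ℕ), (k : ℝ≥0∞) * μ (BkSet U B Ω k))
            + (C : ℝ≥0∞) * ∑' (k : ℕ), μ (BkSet U B Ω k) := by
          rw [ENNReal.tsum_add, ENNReal.tsum_mul_left, ENNReal.tsum_mul_left]
      _ ≤ ((ε : ℝ≥0∞) * M) * 1 + (C : ℝ≥0∞) * μ B :=
          add_le_add (mul_le_mul_right hkac _) (mul_le_mul_right hBsum _)
      _ = (ε : ℝ≥0∞) * M + (C : ℝ≥0∞) * μ B := by rw [mul_one]
  calc ∫⁻ x, F x ∂μ = ∑' k, ∫⁻ x in BkSet U B Ω k, F x ∂μ := by rw [hsplit, hpieces]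
    _ ≤ _ := htotal
    _ ≤ (∫⁻ y, GMfun φ cU M y ∂μ) + ((ε : ℝ≥0∞) * M + (C : ℝ≥0∞) * μ B) := add_le_add hT1 hT2
    _ = (∫⁻ x, GMfun φ cU M x ∂μ) + (ε : ℝ≥0∞) * M + (C : ℝ≥0∞) * μ B := by rw [← add_assoc]

/-- The first-return map as a measurable equivalence. -/
noncomputable def VME (hB : MeasurableSet B) (hΩ : MeasurableSet Ω)
    (hinvΩ : InvHyp U Ω) (hexU : ExHyp U B Ω) (hexV : ExHyp U.symm B Ω) : X ≃ᵐ X where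
  toEquiv :=
    { toFun := Vfun U B Ω
      invFun := Vfun U.symm B Ω
      left_inv := Vfun_left_inverse U B Ω hinvΩ hexU hexV
      right_inv := fun y => by
        have := Vfun_left_inverse U.symm B Ω (hinvΩ_symm U Ω hinvΩ) hexV
          (hexV_symm U B Ω hexU) y
        simpa using this }
  measurable_toFun := Vfun_meas U B Ω hexU hB hΩ
  measurable_invFun := Vfun_meas U.symm B Ω hexV hB hΩ

lemma VME_coe (hB : MeasurableSet B) (hΩ : MeasurableSet Ω)
    (hinvΩ : InvHyp U Ω) (hexU : ExHyp U B Ω) (hexV : ExHyp U.symm B Ω) :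
    ⇑(VME U B Ω hB hΩ hinvΩ hexU hexV) = Vfun U B Ω := rfl

lemma master [IsProbabilityMeasure μ] (φ : ℝ≥0 → ℝ≥0) (hmc : MetricCompatible φ)
    (T U : X ≃ᵐ X) (hU : MeasurePreserving (⇑U) μ μ) (hapU : Aperiodic μ U)
    (cU : X → ℤ) (hcU : Measurable cU) (hUcoc : ∀ᵐ x ∂μ, U x = (T.toEquiv ^ cU x) x)
    (B : Set X) (hB : MeasurableSet B) :
    ∃ (V : X ≃ᵐ X) (c : X → ℤ) (Ω : Set X),
      MeasurableSet Ω ∧ μ Ωᶜ = 0 ∧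
      MeasurePreserving (⇑V) μ μ ∧
      (∀ x, x ∉ B ∩ Ω → V x = x) ∧
      (∀ x ∈ B ∩ Ω, V x ∈ B ∩ Ω ∧ V x ≠ x ∧
        ∃ n : ℕ, 0 < n ∧ (U.toEquiv ^ n) x ∈ B ∧
          (∀ m : ℕ, 0 < m → m < n → (U.toEquiv ^ m) x ∉ B) ∧ V x = (U.toEquiv ^ n) x) ∧
      Measurable c ∧ (∀ x ∈ Ω, V x = (T.toEquiv ^ c x) x) ∧
      (∀ (M : ℕ) (ε C : ℝ≥0), (∀ t, φ t ≤ ε * t + C) →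
        ∫⁻ x, (φ ((c x).natAbs : ℝ≥0) : ℝ≥0∞) ∂μ
          ≤ (∫⁻ x, GMfun φ cU M x ∂μ) + (ε : ℝ≥0∞) * M + (C : ℝ≥0∞) * μ B) := by
  classical
  set gd : Set X := {x | (∀ n : ℤ, n ≠ 0 → (U.toEquiv ^ n) x ≠ x)
      ∧ U x = (T.toEquiv ^ cU x) x ∧
      (x ∈ B → (∃ n : ℕ, 0 < n ∧ (U.toEquiv ^ n) x ∈ B)
        ∧ (∃ n : ℕ, 0 < n ∧ (U.symm.toEquiv ^ n) x ∈ B))} with hgd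
  have hrecU : ∀ᵐ x ∂μ, x ∈ B → ∃ n : ℕ, 0 < n ∧ (U.toEquiv ^ n) x ∈ B := by
    have hcons := hU.conservative
    filter_upwards [hcons.ae_mem_imp_frequently_image_mem hB.nullMeasurableSet] with x hx hxB
    obtain ⟨n, hn1, hn2⟩ := ((hx hxB).and_eventually (eventually_ge_atTop 1)).exists
    exact ⟨n, by omega, by rw [← iterApply]; exact hn1⟩
  have hrecV : ∀ᵐ x ∂μ, x ∈ B → ∃ n : ℕ, 0 < n ∧ (U.symm.toEquiv ^ n) x ∈ B := by
    have hcons := (MeasurePreserving.symm U hU).conservative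
    filter_upwards [hcons.ae_mem_imp_frequently_image_mem hB.nullMeasurableSet] with x hx hxB
    obtain ⟨n, hn1, hn2⟩ := ((hx hxB).and_eventually (eventually_ge_atTop 1)).exists
    exact ⟨n, by omega, by rw [← iterApply]; exact hn1⟩
  have hgdae : ∀ᵐ x ∂μ, x ∈ gd := by
    filter_upwards [hapU, hUcoc, hrecU, hrecV] with x h1 h2 h3 h4
    exact ⟨h1, h2, fun hxB => ⟨h3 hxB, h4 hxB⟩⟩
  have hgdnull : μ gdᶜ = 0 := by rw [ae_iff] at hgdae; exact hgdae
  set tB := toMeasurable μ gdᶜ with htBdef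
  have htBm : MeasurableSet tB := measurableSet_toMeasurable μ _
  have htB0 : μ tB = 0 := by rw [htBdef, measure_toMeasurable]; exact hgdnull
  set Ω : Set X := ⋂ m : ℤ, (fun x => (U.toEquiv ^ m) x) ⁻¹' tBᶜ with hΩdef
  have hΩm : MeasurableSet Ω :=
    MeasurableSet.iInter fun m => (mp_zpow U hU m).measurable htBm.compl
  have hΩc : μ Ωᶜ = 0 := by
    rw [hΩdef, Set.compl_iInter]
    refine measure_iUnion_null fun m => ?_
    have h2 : ((fun x => (U.toEquiv ^ m) x) ⁻¹' tBᶜ)ᶜ = (fun x => (U.toEquiv ^ m) x) ⁻¹' tB := by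
      rw [← Set.preimage_compl, compl_compl]
    rw [h2]
    exact null_preimage _ (mp_zpow U hU m) htB0
  have hΩsub : Ω ⊆ gd := by
    intro x hx
    have h0 := Set.mem_iInter.1 hx 0
    simp only [Set.mem_preimage, zpow_zero, Equiv.Perm.one_apply, Set.mem_compl_iff] at h0
    by_contra hxgd
    exact h0 (subset_toMeasurable μ _ hxgd)
  have hinvΩ : InvHyp U Ω := by
    intro x hx m
    rw [hΩdef, Set.mem_iInter]
    intro k
    rw [Set.mem_preimage, zpow_comp]
    exact Set.mem_iInter.1 hx (k + m)
  have hexU : ExHyp U B Ω := fun x hx => ((hΩsub hx.2).2.2 hx.1).1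
  have hexV : ExHyp U.symm B Ω := fun x hx => ((hΩsub hx.2).2.2 hx.1).2
  refine ⟨VME U B Ω hB hΩm hinvΩ hexU hexV, cocZ U cU B Ω, Ω, hΩm, hΩc, ?_, ?_, ?_, ?_, ?_, ?_⟩
  · exact Vfun_mp U B Ω hU hB hΩm hinvΩ hexU hexV
  · exact fun x hx => Vfun_id U B Ω x hx
  · intro x hx
    obtain ⟨hpos, hBmem, hmin⟩ := retn_spec U B Ω hexU x hx
    refine ⟨Vfun_mem U B Ω hinvΩ hexU x hx, ?_, retn U B x, hpos, hBmem, hmin, by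
      show Vfun U B Ω x = _
      rw [Vfun, if_pos hx]⟩
    show Vfun U B Ω x ≠ x
    rw [Vfun, if_pos hx, npow_cast]
    exact (hΩsub hx.2).1 _ (by exact_mod_cast hpos.ne')
  · exact cocZ_meas U B Ω cU hcU hexU hB hΩm
  · exact cocZ_identity U B Ω T cU hinvΩ (fun x hx => (hΩsub hx).2.1)
  · intro M ε C hC
    exact coc_int_bound U B Ω φ hmc hU cU hcU hB hΩm hexU M ε C hC

lemma shrink [IsProbabilityMeasure μ] [StandardBorelSpace X]
    (φ : ℝ≥0 → ℝ≥0) (hmc : MetricCompatible φ)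
    (T U : X ≃ᵐ X) (hU : MeasurePreserving (⇑U) μ μ) (hapU : Aperiodic μ U)
    (cU : X → ℤ) (hcU : Measurable cU) (hUcoc : ∀ᵐ x ∂μ, U x = (T.toEquiv ^ cU x) x)
    (hB : MeasurableSet B)
    (hsw : ∀ᵐ x ∂μ, ∃ n : ℤ, (U.toEquiv ^ n) x ∈ B) :
    ∃ B' : Set X, B' ⊆ B ∧ MeasurableSet B' ∧
      (∀ᵐ x ∂μ, ∃ n : ℤ, (U.toEquiv ^ n) x ∈ B') ∧ μ B' ≤ 2/3 * μ B := by
  classical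
  obtain ⟨V, c, Ω, hΩm, hΩc, hVmp, hVid, hVmem, -, -, -⟩ :=
    master (U := U) (B := B) (φ := φ) (hmc := hmc) (T := T) (hU := hU) (hapU := hapU)
      (cU := cU) (hcU := hcU) (hUcoc := hUcoc) (hB := hB)
  set Adm : Set X → Prop := fun D => MeasurableSet D ∧ D ⊆ B ∩ Ω ∧ ∀ x ∈ D, V x ∉ D with hAdm
  set RC : Set X → Set X :=
    fun Cs => (B ∩ Ω) \ (⇑V ⁻¹' Cs ∪ Cs ∪ ⇑V.symm ⁻¹' Cs) with hRC
  have hpick : ∀ Cs : Set X, ∃ D, (Adm D ∧ D ⊆ RC Cs) ∧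
      (∀ D', Adm D' → D' ⊆ RC Cs → μ D' ≤ 2 * μ D) := by
    intro Cs
    set s : ℝ≥0∞ := ⨆ (D' : Set X) (_ : Adm D' ∧ D' ⊆ RC Cs), μ D' with hs
    have hsle : ∀ D', Adm D' → D' ⊆ RC Cs → μ D' ≤ s := by
      intro D' h1 h2
      exact le_iSup₂ (f := fun (D' : Set X) (_ : Adm D' ∧ D' ⊆ RC Cs) => μ D') D' ⟨h1, h2⟩
    rcases eq_or_ne s 0 with hs0 | hs0
    · refine ⟨∅, ⟨⟨MeasurableSet.empty, Set.empty_subset _, by simp⟩, Set.empty_subset _⟩, ?_⟩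
      intro D' h1 h2
      have h9 : μ D' = 0 := le_antisymm ((hsle D' h1 h2).trans hs0.le) zero_le
      simp [h9]
    · have hstop : s ≠ ⊤ := by
        refine ne_top_of_le_ne_top (by simp : (1:ℝ≥0∞) ≠ ⊤) ?_
        exact iSup₂_le fun D' _ => prob_le_one
      have hhalf : s / 2 < s := ENNReal.half_lt_self hs0 hstop
      rw [hs] at hhalf
      rw [lt_iSup_iff] at hhalf
      obtain ⟨D, hD⟩ := hhalf
      rw [lt_iSup_iff] at hD
      obtain ⟨⟨h1, h2⟩, hDgt⟩ := hD
      refine ⟨D, ⟨h1, h2⟩, ?_⟩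
      intro D' hD'1 hD'2
      calc μ D' ≤ s := hsle D' hD'1 hD'2
        _ = s / 2 * 2 := by
            rw [ENNReal.div_mul_cancel (by norm_num) (by norm_num)]
        _ ≤ μ D * 2 := mul_le_mul_left hDgt.le _
        _ = 2 * μ D := mul_comm _ _
  set pick : Set X → Set X := fun Cs => Classical.choose (hpick Cs) with hpickdef
  have hpickspec : ∀ Cs, (Adm (pick Cs) ∧ pick Cs ⊆ RC Cs) ∧
      (∀ D', Adm D' → D' ⊆ RC Cs → μ D' ≤ 2 * μ (pick Cs)) :=
    fun Cs => Classical.choose_spec (hpick Cs)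
  set cseq : ℕ → Set X := fun k => Nat.rec ∅ (fun _ Ck => Ck ∪ pick Ck) k with hcseq
  have hcsucc : ∀ k, cseq (k+1) = cseq k ∪ pick (cseq k) := fun k => rfl
  have hAdmUnion : ∀ Cs, Adm Cs → Adm (Cs ∪ pick Cs) := by
    intro Cs hCs
    obtain ⟨⟨hD, hDR⟩, -⟩ := hpickspec Cs
    refine ⟨hCs.1.union hD.1, Set.union_subset hCs.2.1 hD.2.1, ?_⟩
    rintro x (hx | hx) (hV | hV)
    · exact hCs.2.2 x hx hV
    · have hmem : V x ∈ ⇑V.symm ⁻¹' Cs := by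
        rw [Set.mem_preimage, MeasurableEquiv.symm_apply_apply]; exact hx
      exact (hDR hV).2 (Or.inr hmem)
    · exact (hDR hx).2 (Or.inl (Or.inl hV))
    · exact hD.2.2 x hx hV
  have hAdmseq : ∀ k, Adm (cseq k) := by
    intro k; induction k with
    | zero => exact ⟨MeasurableSet.empty, Set.empty_subset _,
        fun x hx => absurd hx (Set.notMem_empty x)⟩
    | succ k ih => rw [hcsucc]; exact hAdmUnion _ ih
  have hmono : Monotone cseq :=
    monotone_nat_of_le_succ fun k => by rw [hcsucc]; exact Set.subset_union_left
  set CC : Set X := ⋃ k, cseq k with hCC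
  have hCCm : MeasurableSet CC := MeasurableSet.iUnion fun k => (hAdmseq k).1
  have hCCsub : CC ⊆ B ∩ Ω := Set.iUnion_subset fun k => (hAdmseq k).2.1
  have hCCadm : ∀ x ∈ CC, V x ∉ CC := by
    intro x hx hVx
    obtain ⟨_, ⟨j, rfl⟩, hj⟩ := hx
    obtain ⟨_, ⟨l, rfl⟩, hl⟩ := hVx
    exact (hAdmseq (max j l)).2.2 x (hmono (le_max_left _ _) hj)
      (hmono (le_max_right _ _) hl)
  have hRCsub : ∀ k, RC CC ⊆ RC (cseq k) := by
    intro k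
    have hsub : cseq k ⊆ CC := Set.subset_iUnion cseq k
    refine Set.diff_subset_diff_right ?_
    refine Set.union_subset_union (Set.union_subset_union ?_ hsub) ?_
    · exact Set.preimage_mono hsub
    · exact Set.preimage_mono hsub
  have hdisjpick : ∀ j k, j < k → Disjoint (pick (cseq j)) (pick (cseq k)) := by
    intro j k hjk
    have h1 : pick (cseq j) ⊆ cseq k := by
      have h0 : pick (cseq j) ⊆ cseq (j+1) := by
        rw [hcsucc]; exact Set.subset_union_right
      exact h0.trans (hmono hjk)
    refine Set.disjoint_left.2 fun x hxj hxk => ?_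
    exact ((hpickspec (cseq k)).1.2 hxk).2 (Or.inl (Or.inr (h1 hxj)))
  have hRCnull : μ (RC CC) = 0 := by
    have hD0 : ∀ D, Adm D → D ⊆ RC CC → μ D = 0 := by
      intro D hD hDR
      have hle : ∀ k, μ D ≤ 2 * μ (pick (cseq k)) :=
        fun k => (hpickspec (cseq k)).2 D hD (hDR.trans (hRCsub k))
      by_contra h0
      have hsum : ∀ K : ℕ, (K : ℝ≥0∞) * μ D ≤ 2 := by
        intro K
        have h1 : (K : ℝ≥0∞) * μ D = ∑ _k ∈ Finset.range K, μ D := by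
          rw [Finset.sum_const, Finset.card_range, nsmul_eq_mul]
        rw [h1]
        have hpd : (↑(Finset.range K) : Set ℕ).PairwiseDisjoint (fun k => pick (cseq k)) := by
          intro a _ b _ hab
          rcases hab.lt_or_gt with h | h
          · exact hdisjpick a b h
          · exact (hdisjpick b a h).symm
        calc ∑ _k ∈ Finset.range K, μ D
            ≤ ∑ k ∈ Finset.range K, 2 * μ (pick (cseq k)) :=
              Finset.sum_le_sum fun k _ => hle k
          _ = 2 * ∑ k ∈ Finset.range K, μ (pick (cseq k)) := by rw [Finset.mul_sum]
          _ = 2 * μ (⋃ k ∈ Finset.range K, pick (cseq k)) := by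
              rw [measure_biUnion_finset hpd fun k _ => (hpickspec (cseq k)).1.1.1]
          _ ≤ 2 * 1 := mul_le_mul_right prob_le_one _
          _ = 2 := mul_one 2
      have hfin : 2 / μ D ≠ ⊤ :=
        (ENNReal.div_lt_top (by norm_num) h0).ne
      obtain ⟨K, hK⟩ := ENNReal.exists_nat_gt hfin
      rw [ENNReal.div_lt_iff (Or.inl h0) (Or.inl (measure_ne_top μ D))] at hK
      exact absurd (hsum K) (not_le.2 hK)
    obtain ⟨S, hScnt, hSmeas, hSsep⟩ := exists_countable_separating X MeasurableSet Set.univ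
    have hVne : ∀ x ∈ RC CC, V x ≠ x := fun x hx => (hVmem x hx.1).2.1
    have hcover : RC CC ⊆ ⋃ s ∈ S,
        ((RC CC ∩ s ∩ ⇑V ⁻¹' sᶜ) ∪ (RC CC ∩ sᶜ ∩ ⇑V ⁻¹' s)) := by
      intro x hx
      by_contra hxn
      refine hVne x hx ?_
      refine (hSsep x trivial (V x) trivial ?_).symm
      intro s hs
      constructor
      · intro hxs
        by_contra hVs
        exact hxn (Set.mem_biUnion hs (Or.inl ⟨⟨hx, hxs⟩, hVs⟩))
      · intro hVs
        by_contra hxs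
        exact hxn (Set.mem_biUnion hs (Or.inr ⟨⟨hx, hxs⟩, hVs⟩))
    have hRCm : MeasurableSet (RC CC) :=
      ((hB.inter hΩm).diff (((hVmp.measurable hCCm).union hCCm).union
        ((MeasurePreserving.symm V hVmp).measurable hCCm)))
    refine measure_mono_null hcover ?_
    refine (measure_biUnion_null_iff hScnt).2 fun s hs => ?_
    refine measure_union_null ?_ ?_
    · refine hD0 _ ⟨(hRCm.inter (hSmeas s hs)).inter (hVmp.measurable (hSmeas s hs).compl),
        ?_, ?_⟩ ?_
      · exact (Set.inter_subset_left.trans Set.inter_subset_left).trans Set.diff_subset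
      · rintro x ⟨⟨_, hxs⟩, hVs⟩ ⟨⟨_, hVxs⟩, _⟩
        exact hVs hVxs
      · exact Set.inter_subset_left.trans Set.inter_subset_left
    · refine hD0 _ ⟨(hRCm.inter (hSmeas s hs).compl).inter (hVmp.measurable (hSmeas s hs)),
        ?_, ?_⟩ ?_
      · exact (Set.inter_subset_left.trans Set.inter_subset_left).trans Set.diff_subset
      · rintro x ⟨⟨_, hxs⟩, hVs⟩ ⟨⟨_, hVxs⟩, _⟩
        exact hVxs hVs
      · exact Set.inter_subset_left.trans Set.inter_subset_left
  have hBle : μ B ≤ 3 * μ CC := by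
    have hsub : B ∩ Ω ⊆ (⇑V ⁻¹' CC ∪ CC ∪ ⇑V.symm ⁻¹' CC) ∪ RC CC := by
      intro x hx
      by_cases h : x ∈ ⇑V ⁻¹' CC ∪ CC ∪ ⇑V.symm ⁻¹' CC
      · exact Or.inl h
      · exact Or.inr ⟨hx, h⟩
    have h1 : μ B = μ (B ∩ Ω) := by
      refine le_antisymm ?_ (measure_mono Set.inter_subset_left)
      calc μ B ≤ μ ((B ∩ Ω) ∪ Ωᶜ) := measure_mono (by
            intro x hx
            by_cases hΩx : x ∈ Ω
            exacts [Or.inl ⟨hx, hΩx⟩, Or.inr hΩx])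
        _ ≤ μ (B ∩ Ω) + μ Ωᶜ := measure_union_le _ _
        _ = μ (B ∩ Ω) := by rw [hΩc, add_zero]
    rw [h1]
    calc μ (B ∩ Ω) ≤ μ (⇑V ⁻¹' CC ∪ CC ∪ ⇑V.symm ⁻¹' CC) + μ (RC CC) :=
          (measure_mono hsub).trans (measure_union_le _ _)
      _ = μ (⇑V ⁻¹' CC ∪ CC ∪ ⇑V.symm ⁻¹' CC) := by rw [hRCnull, add_zero]
      _ ≤ μ (⇑V ⁻¹' CC) + μ CC + μ (⇑V.symm ⁻¹' CC) :=
          le_trans (measure_union_le _ _) (add_le_add_left (measure_union_le _ _) _)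
      _ = μ CC + μ CC + μ CC := by
          rw [hVmp.measure_preimage hCCm.nullMeasurableSet,
            (MeasurePreserving.symm V hVmp).measure_preimage hCCm.nullMeasurableSet]
      _ = 3 * μ CC := by ring
  refine ⟨B \ CC, Set.diff_subset, hB.diff hCCm, ?_, ?_⟩
  · have horb : ∀ᵐ x ∂μ, ∀ m : ℤ, (U.toEquiv ^ m) x ∈ Ω := by
      rw [ae_iff]
      have hsub2 : {x | ¬ ∀ m : ℤ, (U.toEquiv ^ m) x ∈ Ω}
          ⊆ ⋃ m : ℤ, (fun x => (U.toEquiv ^ m) x) ⁻¹' Ωᶜ := by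
        intro x hx
        push_neg at hx
        obtain ⟨m, hm⟩ := hx
        exact Set.mem_iUnion.2 ⟨m, hm⟩
      exact measure_mono_null hsub2
        (measure_iUnion_null fun m => null_preimage _ (mp_zpow U hU m) hΩc)
    filter_upwards [hsw, horb] with x hx hall
    obtain ⟨n, hn⟩ := hx
    have hyΩ : (U.toEquiv ^ n) x ∈ Ω := hall n
    by_cases hyC : (U.toEquiv ^ n) x ∈ CC
    · obtain ⟨hVB, hVne, m, hm0, hmB, hmmin, hVy⟩ := hVmem _ ⟨hn, hyΩ⟩
      have hkey : (U.toEquiv ^ ((m : ℤ) + n)) x = V ((U.toEquiv ^ n) x) := by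
        rw [← zpow_comp, ← npow_cast, ← hVy]
      refine ⟨(m : ℤ) + n, ?_, ?_⟩
      · rw [hkey]; exact hVB.1
      · rw [hkey]; exact hCCadm _ hyC
    · exact ⟨n, hn, hyC⟩
  · have hCCB : CC ⊆ B := hCCsub.trans Set.inter_subset_left
    have hadd : μ (B \ CC) + μ CC = μ B := by
      have h5 := measure_inter_add_diff (μ := μ) B hCCm
      rw [Set.inter_eq_self_of_subset_right hCCB] at h5
      rw [add_comm]
      exact h5
    have h2 : μ (B \ CC) ≤ 2 * μ CC := by
      have h3 : μ (B \ CC) + μ CC ≤ 3 * μ CC := by rw [hadd]; exact hBle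
      have h4 : (3 : ℝ≥0∞) * μ CC = 2 * μ CC + μ CC := by ring
      rw [h4] at h3
      exact (ENNReal.add_le_add_iff_right (measure_ne_top μ CC)).1 h3
    have h5 : μ (B \ CC) * 3 ≤ 2 * μ B := by
      calc μ (B \ CC) * 3 = 2 * μ (B \ CC) + μ (B \ CC) := by ring
        _ ≤ 2 * μ (B \ CC) + 2 * μ CC := add_le_add_right h2 _
        _ = 2 * (μ (B \ CC) + μ CC) := by ring
        _ = 2 * μ B := by rw [hadd]
    have h6 : (2 : ℝ≥0∞) / 3 * μ B = 2 * μ B / 3 := by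
      rw [ENNReal.div_eq_inv_mul, ENNReal.div_eq_inv_mul]; ring
    rw [h6]
    exact (ENNReal.le_div_iff_mul_le (Or.inl (by norm_num)) (Or.inl (by norm_num))).2 h5

lemma GM_tendsto (φ : ℝ≥0 → ℝ≥0) {cU : X → ℤ} (hcU : Measurable cU)
    (hUint : ∫⁻ x, (φ ((cU x).natAbs : ℝ≥0) : ℝ≥0∞) ∂μ < ⊤) :
    Tendsto (fun M : ℕ => ∫⁻ x, GMfun φ cU M x ∂μ) atTop (nhds 0) := by
  have h := tendsto_lintegral_of_dominated_convergence (μ := μ)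
    (F := fun M x => GMfun φ cU M x) (f := fun _ => 0)
    (bound := fun x => (φ ((cU x).natAbs : ℝ≥0) : ℝ≥0∞))
    (fun M => GM_meas φ hcU M)
    (fun M => Filter.Eventually.of_forall fun x => by
      simp only [GMfun]
      split
      · exact le_rfl
      · exact zero_le)
    hUint.ne
    (Filter.Eventually.of_forall fun x => by
      have hev : ∀ᶠ M in (atTop : Filter ℕ), GMfun φ cU M x = 0 :=
        eventually_atTop.2 ⟨(cU x).natAbs, fun M hM => by
          simp only [GMfun]
          rw [if_neg (not_lt.2 hM)]⟩
      exact tendsto_const_nhds.congr' (hev.mono fun M h => h.symm))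
  simpa using h

end Toolkit


end FRAux

/-- For sublinear metric-compatible `φ`, aperiodic `T` and aperiodic `U ∈ [T]_φ`, and any
measurable `A` meeting a.e. `U`-orbit, there are subsets `A_k ⊆ A` meeting a.e. `U`-orbit
with `μ(A_k) → 0` and `d_{φ,T}(U_{A_k}, id) → 0`. -/
theorem exists_small_sets_first_return_tendsto_id {X : Type*} [MeasurableSpace X]
    [StandardBorelSpace X] (μ : Measure X) [IsProbabilityMeasure μ] [NullSingletonClass μ]
    (φ : ℝ≥0 → ℝ≥0) (hmc : MetricCompatible φ)
    (hsub : Tendsto (fun t => φ t / t) atTop (nhds 0))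
    (T : X ≃ᵐ X) (hT : MeasurePreserving (⇑T) μ μ) (hapT : Aperiodic μ T)
    (U : X ≃ᵐ X) (hU : MeasurePreserving (⇑U) μ μ) (hapU : Aperiodic μ U)
    (cU : X → ℤ) (hcU : Measurable cU) (hUcoc : ∀ᵐ x ∂μ, U x = (T.toEquiv ^ cU x) x)
    (hUint : ∫⁻ x, (φ ((cU x).natAbs : ℝ≥0) : ℝ≥0∞) ∂μ < ⊤)
    (A : Set X) (hA : MeasurableSet A)
    (hmeets : ∀ᵐ x ∂μ, ∃ n : ℤ, (U.toEquiv ^ n) x ∈ A) :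
    ∃ (As : ℕ → Set X) (Vs : ℕ → X ≃ᵐ X) (cs : ℕ → X → ℤ),
      (∀ k, MeasurableSet (As k)) ∧
      (∀ k, As k ⊆ A) ∧
      (∀ k, ∀ᵐ x ∂μ, ∃ n : ℤ, (U.toEquiv ^ n) x ∈ As k) ∧
      (∀ k, MeasurePreserving (⇑(Vs k)) μ μ) ∧
      (∀ k, IsFirstReturnMap μ U (Vs k) (As k)) ∧
      (∀ k, Measurable (cs k)) ∧
      (∀ k, ∀ᵐ x ∂μ, (Vs k) x = (T.toEquiv ^ cs k x) x) ∧
      Tendsto (fun k => μ (As k)) atTop (nhds 0) ∧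
      Tendsto (fun k => ∫⁻ x, (φ ((cs k x).natAbs : ℝ≥0) : ℝ≥0∞) ∂μ) atTop (nhds 0) := by
  classical
  open FRAux in
  have hstep2 : ∀ g : {B : Set X // MeasurableSet B ∧ B ⊆ A
        ∧ (∀ᵐ x ∂μ, ∃ n : ℤ, (U.toEquiv ^ n) x ∈ B)},
      ∃ g' : {B : Set X // MeasurableSet B ∧ B ⊆ A
        ∧ (∀ᵐ x ∂μ, ∃ n : ℤ, (U.toEquiv ^ n) x ∈ B)},
      g'.1 ⊆ g.1 ∧ μ g'.1 ≤ 2/3 * μ g.1 := by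
    rintro ⟨B, hBm, hBA, hBs⟩
    obtain ⟨B', h1, h2, h3, h4⟩ := FRAux.shrink (U := U) (B := B) (φ := φ) (hmc := hmc)
      (T := T) (hU := hU) (hapU := hapU) (cU := cU) (hcU := hcU) (hUcoc := hUcoc)
      (hB := hBm) (hsw := hBs)
    exact ⟨⟨B', h2, h1.trans hBA, h3⟩, h1, h4⟩
  choose step hstepsub hstepmu using hstep2
  set seq : ℕ → {B : Set X // MeasurableSet B ∧ B ⊆ A
      ∧ (∀ᵐ x ∂μ, ∃ n : ℤ, (U.toEquiv ^ n) x ∈ B)} :=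
    fun k => step^[k] ⟨A, hA, subset_rfl, hmeets⟩ with hseq
  have hseqsucc : ∀ k, seq (k+1) = step (seq k) := fun k => Function.iterate_succ_apply' _ _ _
  set As : ℕ → Set X := fun k => (seq k).1 with hAs
  have hAsm : ∀ k, MeasurableSet (As k) := fun k => (seq k).2.1
  have hAsA : ∀ k, As k ⊆ A := fun k => (seq k).2.2.1
  have hAssw : ∀ k, ∀ᵐ x ∂μ, ∃ n : ℤ, (U.toEquiv ^ n) x ∈ As k := fun k => (seq k).2.2.2
  have hAsbound : ∀ k, μ (As k) ≤ (2/3 : ℝ≥0∞) ^ k := by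
    intro k
    induction k with
    | zero => simpa using prob_le_one
    | succ k ih =>
        have h1 : μ (As (k+1)) ≤ 2/3 * μ (As k) := by
          rw [hAs]; dsimp only; rw [hseqsucc]
          exact hstepmu (seq k)
        calc μ (As (k+1)) ≤ 2/3 * μ (As k) := h1
          _ ≤ 2/3 * (2/3)^k := mul_le_mul_right ih _
          _ = (2/3)^(k+1) := (pow_succ' _ _).symm
  have h23 : (2/3 : ℝ≥0∞) < 1 := by
    rw [ENNReal.div_lt_iff (by norm_num) (by norm_num)]
    norm_num
  have hAstend : Tendsto (fun k => μ (As k)) atTop (nhds 0) :=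
    tendsto_of_tendsto_of_tendsto_of_le_of_le tendsto_const_nhds
      (ENNReal.tendsto_pow_atTop_nhds_zero_of_lt_one h23)
      (fun k => zero_le) hAsbound
  have hmas : ∀ k, ∃ (V : X ≃ᵐ X) (c : X → ℤ), MeasurePreserving (⇑V) μ μ ∧
      (∀ᵐ x ∂μ, (x ∈ As k → ∃ n : ℕ, 0 < n ∧ (U.toEquiv ^ n) x ∈ As k ∧
        (∀ m : ℕ, 0 < m → m < n → (U.toEquiv ^ m) x ∉ As k) ∧ V x = (U.toEquiv ^ n) x) ∧
        (x ∉ As k → V x = x)) ∧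
      Measurable c ∧ (∀ᵐ x ∂μ, V x = (T.toEquiv ^ c x) x) ∧
      (∀ (M : ℕ) (ε C : ℝ≥0), (∀ t, φ t ≤ ε * t + C) →
        ∫⁻ x, (φ ((c x).natAbs : ℝ≥0) : ℝ≥0∞) ∂μ
          ≤ (∫⁻ x, GMfun φ cU M x ∂μ) + (ε : ℝ≥0∞) * M + (C : ℝ≥0∞) * μ (As k)) := by
    intro k
    obtain ⟨V, c, Ω, hΩm, hΩc, hVmp, hVid, hVmem, hcmeas, hcid, hbound⟩ :=
      FRAux.master (U := U) (B := As k) (φ := φ) (hmc := hmc) (T := T) (hU := hU)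
        (hapU := hapU) (cU := cU) (hcU := hcU) (hUcoc := hUcoc) (hB := hAsm k)
    have hΩae : ∀ᵐ x ∂μ, x ∈ Ω := by
      rw [ae_iff]
      exact hΩc
    refine ⟨V, c, hVmp, ?_, hcmeas, ?_, hbound⟩
    · filter_upwards [hΩae] with x hx
      constructor
      · intro hxA
        obtain ⟨hVB, hVne, n, hn0, hnB, hnmin, hVeq⟩ := hVmem x ⟨hxA, hx⟩
        exact ⟨n, hn0, hnB, hnmin, hVeq⟩
      · intro hxA
        exact hVid x (fun hmem => hxA hmem.1)
    · filter_upwards [hΩae] with x hx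
      exact hcid x hx
  choose Vs cs hVmp' hfrm hcmeas' hcid' hbound' using hmas
  refine ⟨As, Vs, cs, hAsm, hAsA, hAssw, hVmp', hfrm, hcmeas', hcid', hAstend, ?_⟩
  rw [ENNReal.tendsto_atTop_zero]
  intro εt hεt
  obtain ⟨r, hr0, hr⟩ : ∃ r : ℝ≥0, 0 < r ∧ 3 * (r : ℝ≥0∞) ≤ εt := by
    rcases eq_or_ne εt ⊤ with rfl | hne
    · exact ⟨1, one_pos, le_top⟩
    · refine ⟨εt.toNNReal / 3, ?_, ?_⟩
      · exact div_pos (ENNReal.toNNReal_pos hεt.ne' hne) (by norm_num)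
      · rw [show (3 : ℝ≥0∞) * ((εt.toNNReal / 3 : ℝ≥0) : ℝ≥0∞)
            = ((3 * (εt.toNNReal / 3) : ℝ≥0) : ℝ≥0∞) from by push_cast; ring,
          mul_div_cancel₀ _ (by norm_num : (3:ℝ≥0) ≠ 0), ENNReal.coe_toNNReal hne]
  have hGMten := FRAux.GM_tendsto (μ := μ) φ hcU hUint
  have hrpos : (0 : ℝ≥0∞) < r := by exact_mod_cast hr0
  obtain ⟨M, hM⟩ := (hGMten.eventually_lt_const hrpos).exists
  set ε' : ℝ≥0 := r / (M + 1 : ℕ) with hε'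
  have hMne : ((M : ℕ) + 1 : ℝ≥0) ≠ 0 := by positivity
  have hε'pos : 0 < ε' := by
    rw [hε']
    refine div_pos hr0 ?_
    exact_mod_cast Nat.succ_pos M
  obtain ⟨C, hC⟩ := FRAux.phi_linear hmc hsub ε' hε'pos
  have hεM : (ε' : ℝ≥0∞) * M ≤ r := by
    calc (ε' : ℝ≥0∞) * M ≤ (ε' : ℝ≥0∞) * ((M : ℝ≥0∞) + 1) :=
        mul_le_mul_right (le_add_right le_rfl) _
      _ = ((ε' * ((M : ℝ≥0) + 1) : ℝ≥0) : ℝ≥0∞) := by push_cast; ring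
      _ = (r : ℝ≥0∞) := by
          rw [hε']
          congr 1
          rw [show ((M : ℕ) + 1 : ℝ≥0) = ((M + 1 : ℕ) : ℝ≥0) from by push_cast; ring]
          exact div_mul_cancel₀ _ (by exact_mod_cast Nat.succ_ne_zero M)
  have hCmu : Tendsto (fun k => (C : ℝ≥0∞) * μ (As k)) atTop (nhds 0) := by
    have h9 : Tendsto (fun k => (C : ℝ≥0∞) * μ (As k)) atTop (nhds ((C : ℝ≥0∞) * 0)) :=
      ENNReal.Tendsto.const_mul hAstend (Or.inr ENNReal.coe_ne_top)
    simpa using h9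
  obtain ⟨K, hK⟩ := eventually_atTop.1 (hCmu.eventually_lt_const hrpos)
  refine ⟨K, fun k hk => ?_⟩
  calc ∫⁻ x, (φ ((cs k x).natAbs : ℝ≥0) : ℝ≥0∞) ∂μ
      ≤ (∫⁻ x, GMfun φ cU M x ∂μ) + (ε' : ℝ≥0∞) * M + (C : ℝ≥0∞) * μ (As k) :=
        hbound' k M ε' C hC
    _ ≤ (r : ℝ≥0∞) + (r : ℝ≥0∞) + (r : ℝ≥0∞) :=
        add_le_add (add_le_add hM.le hεM) (hK k hk).le
    _ = 3 * (r : ℝ≥0∞) := by ring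
    _ ≤ εt := hr
end

section
/- Let T be an aperiodic measure-preserving transformation of a standard atomless probability space (X,μ) and suppose U ∈ Aut(X,μ) has the same orbits as T and that for almost every x ∈ X the symmetric difference {Tⁿ(x) : n ≥ 0} △ {Uⁿ(x) : n ≥ 0} of the forward T-orbit and forward U-orbit of x is finite. Then T and U are conjugate: there exists S ∈ Aut(X,μ) with S U S⁻¹ = T (up to null sets). -/
open MeasureTheory Filter Topology
open scoped ENNReal NNReal symmDiff

/-- Two transformations of `(X, μ)` have the same orbits if for almost every `x`
the `T`-orbit of `x` coincides with the `U`-orbit of `x`. -/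
def SameOrbits {X : Type*} [MeasurableSpace X] (μ : Measure X) (T U : X ≃ᵐ X) : Prop :=
  ∀ᵐ x ∂μ, {y | ∃ n : ℤ, (T.toEquiv ^ n) x = y} = {y | ∃ n : ℤ, (U.toEquiv ^ n) x = y}

namespace KatzAux
open Set MeasureTheory
open scoped symmDiff

def posP (F : Set ℤ) : Set ℤ := {k | 0 ≤ k ∧ k ∉ F}
def negP (F : Set ℤ) : Set ℤ := {k | k < 0 ∧ k ∈ F}
noncomputable def gval (F : Set ℤ) : ℤ := (posP F).ncard - (negP F).ncard
def shf (F : Set ℤ) (c : ℤ) : Set ℤ := {k | k + c ∈ F}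

lemma shf_shf (F : Set ℤ) (c d : ℤ) : shf (shf F c) d = shf F (d + c) := by
  ext k; simp [shf, add_assoc]

lemma posP_shf_finite {F : Set ℤ} (hp : (posP F).Finite) (c : ℤ) :
    (posP (shf F c)).Finite := by
  have hinj : Function.Injective (fun k : ℤ => k + c) := add_left_injective c
  apply Set.Finite.of_finite_image (f := fun k : ℤ => k + c) _ hinj.injOn
  apply Set.Finite.subset (hp.union (Set.finite_Ico c 0))
  rintro j ⟨k, ⟨hk0, hkF⟩, rfl⟩
  dsimp only
  by_cases h : 0 ≤ k + c
  · exact Or.inl ⟨h, hkF⟩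
  · exact Or.inr ⟨by omega, by omega⟩

lemma negP_shf_finite {F : Set ℤ} (hn : (negP F).Finite) (c : ℤ) :
    (negP (shf F c)).Finite := by
  have hinj : Function.Injective (fun k : ℤ => k + c) := add_left_injective c
  apply Set.Finite.of_finite_image (f := fun k : ℤ => k + c) _ hinj.injOn
  apply Set.Finite.subset (hn.union (Set.finite_Ico 0 c))
  rintro j ⟨k, ⟨hk0, hkF⟩, rfl⟩
  dsimp only
  by_cases h : k + c < 0
  · exact Or.inl ⟨h, hkF⟩
  · exact Or.inr ⟨by omega, by omega⟩

lemma gval_shf_one (F : Set ℤ) (hp : (posP F).Finite) (hn : (negP F).Finite) :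
    gval (shf F 1) = gval F - 1 := by
  have hinj : Function.Injective (fun k : ℤ => k + 1) := add_left_injective 1
  have hpos : (fun k : ℤ => k + 1) '' posP (shf F 1) = {k | 1 ≤ k ∧ k ∉ F} := by
    ext j; constructor
    · rintro ⟨k, ⟨hk0, hkF⟩, rfl⟩; dsimp only; exact ⟨by omega, hkF⟩
    · rintro ⟨h1, hF⟩
      exact ⟨j - 1, ⟨by omega, by simpa [shf] using hF⟩, by ring⟩
  have hneg : (fun k : ℤ => k + 1) '' negP (shf F 1) = {k | k < 1 ∧ k ∈ F} := by
    ext j; constructor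
    · rintro ⟨k, ⟨hk0, hkF⟩, rfl⟩; dsimp only; exact ⟨by omega, hkF⟩
    · rintro ⟨h1, hF⟩
      exact ⟨j - 1, ⟨by omega, by simpa [shf] using hF⟩, by ring⟩
  by_cases h0 : (0 : ℤ) ∈ F
  · have e1 : {k : ℤ | 1 ≤ k ∧ k ∉ F} = posP F := by
      ext k; constructor
      · rintro ⟨h1, h2⟩; exact ⟨by omega, h2⟩
      · rintro ⟨h1, h2⟩
        have : k ≠ 0 := fun h => h2 (h ▸ h0)
        exact ⟨by omega, h2⟩
    have e2 : {k : ℤ | k < 1 ∧ k ∈ F} = insert 0 (negP F) := by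
      ext k; constructor
      · rintro ⟨h1, h2⟩
        rcases eq_or_lt_of_le (by omega : k ≤ 0) with h | h
        · exact Or.inl h
        · exact Or.inr ⟨h, h2⟩
      · rintro (rfl | ⟨h1, h2⟩)
        · exact ⟨by omega, h0⟩
        · exact ⟨by omega, h2⟩
    have c1 : (posP (shf F 1)).ncard = (posP F).ncard := by
      rw [← Set.ncard_image_of_injective _ hinj, hpos, e1]
    have c2 : (negP (shf F 1)).ncard = (negP F).ncard + 1 := by
      rw [← Set.ncard_image_of_injective _ hinj, hneg, e2,
        Set.ncard_insert_of_notMem (by simp [negP]) hn]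
    unfold gval; rw [c1, c2]; push_cast; ring
  · have h0p : (0 : ℤ) ∈ posP F := ⟨le_refl 0, h0⟩
    have e1 : {k : ℤ | 1 ≤ k ∧ k ∉ F} = posP F \ {0} := by
      ext k; constructor
      · rintro ⟨h1, h2⟩; exact ⟨⟨by omega, h2⟩, by simp; omega⟩
      · rintro ⟨⟨h1, h2⟩, h3⟩
        simp only [mem_singleton_iff] at h3
        exact ⟨by omega, h2⟩
    have e2 : {k : ℤ | k < 1 ∧ k ∈ F} = negP F := by
      ext k; constructor
      · rintro ⟨h1, h2⟩
        have : k ≠ 0 := fun h => h0 (h ▸ h2)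
        exact ⟨by omega, h2⟩
      · rintro ⟨h1, h2⟩; exact ⟨by omega, h2⟩
    have c1 : (posP (shf F 1)).ncard = (posP F).ncard - 1 := by
      rw [← Set.ncard_image_of_injective _ hinj, hpos, e1,
        Set.ncard_diff_singleton_of_mem h0p]
    have c2 : (negP (shf F 1)).ncard = (negP F).ncard := by
      rw [← Set.ncard_image_of_injective _ hinj, hneg, e2]
    have hcard1 : 1 ≤ (posP F).ncard := by
      rw [Nat.one_le_iff_ne_zero]
      intro h
      have := (Set.ncard_eq_zero hp).mp h
      rw [this] at h0p; exact h0p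
    unfold gval; rw [c1, c2]
    push_cast [Nat.cast_sub hcard1]; ring

lemma gval_shf (F : Set ℤ) (hp : (posP F).Finite) (hn : (negP F).Finite) (c : ℤ) :
    gval (shf F c) = gval F - c := by
  induction c using Int.induction_on with
  | zero =>
    have : shf F 0 = F := by ext k; simp [shf]
    rw [this]; ring
  | succ n ih =>
    have h1 : shf (shf F n) 1 = shf F ((n : ℤ) + 1) := by rw [shf_shf]; ring_nf
    rw [← h1, gval_shf_one _ (posP_shf_finite hp n) (negP_shf_finite hn n), ih]; ring
  | pred n ih =>
    have h1 : shf (shf F (-(n + 1) : ℤ)) 1 = shf F (-n) := by rw [shf_shf]; ring_nf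
    have h2 := gval_shf_one (shf F (-(n + 1) : ℤ))
      (posP_shf_finite hp _) (negP_shf_finite hn _)
    rw [h1] at h2
    rw [h2] at ih
    have h3 : (-(n:ℤ) - 1) = -((n:ℤ) + 1) := by ring
    rw [h3]
    linarith [ih]

lemma posP_diff_zero {F : Set ℤ} (h0 : (0 : ℤ) ∈ F) :
    posP (F \ {0}) = insert 0 (posP F) := by
  ext k; constructor
  · rintro ⟨hk0, hk⟩
    by_cases h : k = 0
    · exact Or.inl h
    · refine Or.inr ⟨hk0, fun hf => hk ⟨hf, by simpa using h⟩⟩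
  · rintro (rfl | ⟨hk0, hkF⟩)
    · exact ⟨le_refl 0, by simp⟩
    · exact ⟨hk0, fun hf => hkF hf.1⟩

lemma negP_diff_zero (F : Set ℤ) : negP (F \ {0}) = negP F := by
  ext k; constructor
  · rintro ⟨hk0, hk⟩; exact ⟨hk0, hk.1⟩
  · rintro ⟨hk0, hk⟩; exact ⟨hk0, ⟨hk, by simp; omega⟩⟩

lemma gval_diff_zero {F : Set ℤ} (h0 : (0 : ℤ) ∈ F) (hp : (posP F).Finite) :
    gval (F \ {0}) = gval F + 1 := by
  have h0n : (0 : ℤ) ∉ posP F := fun h => h.2 h0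
  unfold gval
  rw [posP_diff_zero h0, negP_diff_zero, Set.ncard_insert_of_notMem h0n hp]
  push_cast; ring

variable {X : Type*}

lemma zpow_add_apply (e : Equiv.Perm X) (a b : ℤ) (x : X) :
    (e ^ (a + b)) x = (e ^ a) ((e ^ b) x) := by
  rw [zpow_add]; rfl

variable [MeasurableSpace X]

lemma measurable_zpow (T : X ≃ᵐ X) (n : ℤ) :
    Measurable fun x => (T.toEquiv ^ n) x := by
  obtain ⟨m, rfl | rfl⟩ := Int.eq_nat_or_neg n
  · have h : (fun x => (T.toEquiv ^ (m : ℤ)) x) = (⇑T)^[m] := by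
      rw [zpow_natCast]; rfl
    rw [h]; exact T.measurable.iterate m
  · have h : (fun x => (T.toEquiv ^ (-(m : ℤ))) x) = (⇑T.symm)^[m] := by
      rw [zpow_neg, zpow_natCast, ← inv_pow]; rfl
    rw [h]; exact T.symm.measurable.iterate m

lemma mp_zpow {μ : Measure X} (T : X ≃ᵐ X) (hT : MeasurePreserving (⇑T) μ μ) (n : ℤ) :
    MeasurePreserving (fun x => (T.toEquiv ^ n) x) μ μ := by
  obtain ⟨m, rfl | rfl⟩ := Int.eq_nat_or_neg n
  · have h : (fun x => (T.toEquiv ^ (m : ℤ)) x) = (⇑T)^[m] := by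
      rw [zpow_natCast]; rfl
    rw [h]; exact hT.iterate m
  · have h : (fun x => (T.toEquiv ^ (-(m : ℤ))) x) = (⇑T.symm)^[m] := by
      rw [zpow_neg, zpow_natCast, ← inv_pow]; rfl
    rw [h]; exact (hT.symm T).iterate m

def Bset (T U : X ≃ᵐ X) (x : X) : Set ℤ :=
  {k | ∃ m : ℕ, (U.toEquiv ^ m) x = (T.toEquiv ^ k) x}

noncomputable def fI (T U : X ≃ᵐ X) (x : X) : ℤ := gval (Bset T U x)

lemma measurableSet_mem_Bset [StandardBorelSpace X] (T U : X ≃ᵐ X) (k : ℤ) :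
    MeasurableSet {x | k ∈ Bset T U x} := by
  letI := upgradeStandardBorel X
  have h : {x | k ∈ Bset T U x}
      = ⋃ m : ℕ, {x | (U.toEquiv ^ m) x = (T.toEquiv ^ k) x} := by
    ext x; simp [Bset]
  rw [h]
  refine MeasurableSet.iUnion fun m => ?_
  have hm : Measurable fun x => (U.toEquiv ^ m) x := by
    have h2 : (fun x => (U.toEquiv ^ m) x) = (⇑U)^[m] := rfl
    rw [h2]; exact U.measurable.iterate m
  exact MeasureTheory.StronglyMeasurable.measurableSet_eq_fun
    hm.stronglyMeasurable (measurable_zpow T k).stronglyMeasurable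

section Pointwise

variable {X : Type*} [MeasurableSpace X] (T U : X ≃ᵐ X)

lemma exp_inj {x : X} (hap : ∀ n : ℤ, n ≠ 0 → (T.toEquiv ^ n) x ≠ x)
    {a b : ℤ} (h : (T.toEquiv ^ a) x = (T.toEquiv ^ b) x) : a = b := by
  by_contra hne
  have h1 : (T.toEquiv ^ (-b + a)) x = (T.toEquiv ^ (-b)) ((T.toEquiv ^ a) x) :=
    zpow_add_apply T.toEquiv (-b) a x
  have h3 : (T.toEquiv ^ (-b)) ((T.toEquiv ^ b) x) = x := by
    rw [← zpow_add_apply]; simp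
  rw [h, h3] at h1
  exact hap (-b + a) (by omega) h1

lemma U_aperiodic {x : X}
    (hap : ∀ n : ℤ, n ≠ 0 → (T.toEquiv ^ n) x ≠ x)
    (horb : {y | ∃ n : ℤ, (T.toEquiv ^ n) x = y} = {y | ∃ n : ℤ, (U.toEquiv ^ n) x = y}) :
    ∀ m : ℤ, m ≠ 0 → (U.toEquiv ^ m) x ≠ x := by
  have key : ∀ m : ℤ, 0 < m → (U.toEquiv ^ m) x = x → False := by
    intro m hm hfix
    have hmul : ∀ q : ℤ, (U.toEquiv ^ (m * q)) x = x := by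
      intro q; induction q using Int.induction_on with
      | zero => simp
      | succ n ih =>
        have he : m * ((n : ℤ) + 1) = m * n + m := by ring
        rw [he, zpow_add_apply, hfix, ih]
      | pred n ih =>
        calc (U.toEquiv ^ (m * (-(n : ℤ) - 1))) x
            = (U.toEquiv ^ (m * (-(n : ℤ) - 1))) ((U.toEquiv ^ m) x) := by rw [hfix]
          _ = (U.toEquiv ^ (m * (-(n : ℤ) - 1) + m)) x := (zpow_add_apply _ _ _ _).symm
          _ = (U.toEquiv ^ (m * (-(n : ℤ)))) x := by
              rw [show m * (-(n : ℤ) - 1) + m = m * (-(n : ℤ)) by ring]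
          _ = x := ih
    have hsub : {y | ∃ n : ℤ, (U.toEquiv ^ n) x = y}
        ⊆ (fun j : ℤ => (U.toEquiv ^ j) x) '' (Set.Ico 0 m) := by
      rintro y ⟨n, rfl⟩
      refine ⟨n % m, ⟨Int.emod_nonneg n (by omega), Int.emod_lt_of_pos n hm⟩, ?_⟩
      dsimp only
      conv_rhs => rw [show n = n % m + m * (n / m) from (Int.emod_add_mul_ediv n m).symm]
      rw [zpow_add_apply, hmul]
    have hfinite : {y | ∃ n : ℤ, (U.toEquiv ^ n) x = y}.Finite :=
      ((Set.finite_Ico 0 m).image _).subset hsub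
    rw [← horb] at hfinite
    have hinf : {y | ∃ n : ℤ, (T.toEquiv ^ n) x = y}.Infinite :=
      Set.infinite_of_injective_forall_mem (f := fun k : ℤ => (T.toEquiv ^ k) x)
        (fun a b h => exp_inj T hap h) (fun a => ⟨a, rfl⟩)
    exact hinf hfinite
  intro m hm hfix
  rcases lt_trichotomy m 0 with h | h | h
  · apply key (-m) (by omega)
    have h2 : (U.toEquiv ^ (-m + m)) x = (U.toEquiv ^ (-m)) ((U.toEquiv ^ m) x) :=
      zpow_add_apply U.toEquiv (-m) m x
    rw [hfix, show -m + m = (0:ℤ) by ring, zpow_zero] at h2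
    simp only [Equiv.Perm.one_def, Equiv.refl_apply] at h2
    exact h2.symm
  · exact absurd h hm
  · exact key m h hfix

lemma posP_Bset_finite {x : X}
    (hap : ∀ n : ℤ, n ≠ 0 → (T.toEquiv ^ n) x ≠ x)
    (hfin : ({y | ∃ n : ℕ, (T.toEquiv ^ n) x = y} ∆ {y | ∃ n : ℕ, (U.toEquiv ^ n) x = y}).Finite) :
    (posP (Bset T U x)).Finite := by
  apply Set.Finite.of_finite_image (f := fun k : ℤ => (T.toEquiv ^ k) x)
  · refine Set.Finite.subset hfin ?_
    rintro y ⟨k, ⟨hk0, hkB⟩, rfl⟩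
    rw [Set.mem_symmDiff]
    left
    constructor
    · exact ⟨k.toNat, by rw [← zpow_natCast, Int.toNat_of_nonneg hk0]⟩
    · rintro ⟨m, hm⟩; exact hkB ⟨m, hm⟩
  · intro a _ b _ h; exact exp_inj T hap h

lemma negP_Bset_finite {x : X}
    (hap : ∀ n : ℤ, n ≠ 0 → (T.toEquiv ^ n) x ≠ x)
    (hfin : ({y | ∃ n : ℕ, (T.toEquiv ^ n) x = y} ∆ {y | ∃ n : ℕ, (U.toEquiv ^ n) x = y}).Finite) :
    (negP (Bset T U x)).Finite := by
  apply Set.Finite.of_finite_image (f := fun k : ℤ => (T.toEquiv ^ k) x)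
  · refine Set.Finite.subset hfin ?_
    rintro y ⟨k, ⟨hk0, hkB⟩, rfl⟩
    rw [Set.mem_symmDiff]
    right
    constructor
    · obtain ⟨m, hm⟩ := hkB; exact ⟨m, hm⟩
    · rintro ⟨n, hn⟩
      have := exp_inj T hap (a := (n : ℤ)) (b := k) (by rw [zpow_natCast]; exact hn)
      omega
  · intro a _ b _ h; exact exp_inj T hap h

lemma Bset_rec {x : X}
    (hap : ∀ n : ℤ, n ≠ 0 → (T.toEquiv ^ n) x ≠ x)
    (hUap : ∀ m : ℤ, m ≠ 0 → (U.toEquiv ^ m) x ≠ x)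
    {c : ℤ} (hc : U x = (T.toEquiv ^ c) x) :
    Bset T U (U x) = shf (Bset T U x \ {0}) c := by
  ext k
  simp only [Bset, shf, Set.mem_setOf_eq, Set.mem_diff, Set.mem_singleton_iff]
  constructor
  · rintro ⟨m, hm⟩
    have h1 : (U.toEquiv ^ (m + 1)) x = (T.toEquiv ^ (k + c)) x := by
      rw [pow_succ, zpow_add_apply, ← hc]
      exact hm
    refine ⟨⟨m + 1, h1⟩, ?_⟩
    intro h0
    rw [h0] at h1; simp only [zpow_zero, Equiv.Perm.one_def, Equiv.refl_apply] at h1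
    refine hUap ((m : ℤ) + 1) (by omega) ?_
    rw [show ((m : ℤ) + 1) = ((m + 1 : ℕ) : ℤ) by push_cast; ring, zpow_natCast]
    exact h1
  · rintro ⟨⟨m, hm⟩, hne⟩
    cases m with
    | zero =>
      simp only [pow_zero, Equiv.Perm.one_def, Equiv.refl_apply] at hm
      have h2 : (0 : ℤ) = k + c := exp_inj T hap (a := 0) (b := k + c) (by simpa using hm)
      exact absurd h2.symm hne
    | succ m' =>
      refine ⟨m', ?_⟩
      have h1 : (U.toEquiv ^ (m' + 1)) x = (U.toEquiv ^ m') (U x) := by rw [pow_succ]; rfl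
      rw [← h1, hm, hc, ← zpow_add_apply]

lemma fI_rec {x : X}
    (hap : ∀ n : ℤ, n ≠ 0 → (T.toEquiv ^ n) x ≠ x)
    (hUap : ∀ m : ℤ, m ≠ 0 → (U.toEquiv ^ m) x ≠ x)
    (hfin : ({y | ∃ n : ℕ, (T.toEquiv ^ n) x = y} ∆ {y | ∃ n : ℕ, (U.toEquiv ^ n) x = y}).Finite)
    {c : ℤ} (hc : U x = (T.toEquiv ^ c) x) :
    fI T U (U x) = fI T U x + 1 - c := by
  have h0 : (0 : ℤ) ∈ Bset T U x := ⟨0, by simp⟩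
  have hp := posP_Bset_finite T U hap hfin
  have hn := negP_Bset_finite T U hap hfin
  have hp' : (posP (Bset T U x \ {0})).Finite := by
    rw [posP_diff_zero h0]; exact hp.insert 0
  have hn' : (negP (Bset T U x \ {0})).Finite := by
    rw [negP_diff_zero]; exact hn
  unfold fI
  rw [Bset_rec T U hap hUap hc, gval_shf _ hp' hn' c, gval_diff_zero h0 hp]

lemma conj_at {x : X}
    (hap : ∀ n : ℤ, n ≠ 0 → (T.toEquiv ^ n) x ≠ x)
    (hUap : ∀ m : ℤ, m ≠ 0 → (U.toEquiv ^ m) x ≠ x)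
    (hfin : ({y | ∃ n : ℕ, (T.toEquiv ^ n) x = y} ∆ {y | ∃ n : ℕ, (U.toEquiv ^ n) x = y}).Finite)
    {c : ℤ} (hc : U x = (T.toEquiv ^ c) x) :
    (T.toEquiv ^ fI T U (U x)) (U x) = T ((T.toEquiv ^ fI T U x) x) := by
  rw [fI_rec T U hap hUap hfin hc, hc, ← zpow_add_apply,
    show fI T U x + 1 - c + c = 1 + fI T U x by ring, zpow_add_apply, zpow_one]
  rfl

lemma measurableSet_fI_level [StandardBorelSpace X] (G : Set X) (hG : MeasurableSet G)
    (hfinG : ∀ x ∈ G, (posP (Bset T U x)).Finite ∧ (negP (Bset T U x)).Finite) (j : ℤ) :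
    MeasurableSet (G ∩ {x | fI T U x = j}) := by
  classical
  have hposMeas : ∀ k : ℤ, MeasurableSet {x | k ∈ posP (Bset T U x)} := by
    intro k
    by_cases hk : 0 ≤ k
    · have h : {x | k ∈ posP (Bset T U x)} = {x | k ∈ Bset T U x}ᶜ := by
        ext x; simp [posP, hk]
      rw [h]; exact (measurableSet_mem_Bset T U k).compl
    · have h : {x | k ∈ posP (Bset T U x)} = ∅ := by
        ext x; simp only [Set.mem_setOf_eq, Set.mem_empty_iff_false, iff_false]
        rintro ⟨h1, _⟩; exact hk h1
      rw [h]; exact MeasurableSet.empty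
  have hnegMeas : ∀ k : ℤ, MeasurableSet {x | k ∈ negP (Bset T U x)} := by
    intro k
    by_cases hk : k < 0
    · have h : {x | k ∈ negP (Bset T U x)} = {x | k ∈ Bset T U x} := by
        ext x; simp [negP, hk]
      rw [h]; exact measurableSet_mem_Bset T U k
    · have h : {x | k ∈ negP (Bset T U x)} = ∅ := by
        ext x; simp only [Set.mem_setOf_eq, Set.mem_empty_iff_false, iff_false]
        rintro ⟨h1, _⟩; exact hk h1
      rw [h]; exact MeasurableSet.empty
  have hEqP : ∀ s : Finset ℤ, MeasurableSet {x | posP (Bset T U x) = ↑s} := by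
    intro s
    have h : {x | posP (Bset T U x) = ↑s}
        = ⋂ k : ℤ, {x | k ∈ posP (Bset T U x) ↔ k ∈ s} := by
      ext x
      simp only [Set.mem_setOf_eq, Set.mem_iInter]
      constructor
      · intro h k; rw [h]; simp
      · intro h; ext k; simp [h k]
    rw [h]
    refine MeasurableSet.iInter fun k => ?_
    by_cases hk : k ∈ s
    · have h2 : {x | k ∈ posP (Bset T U x) ↔ k ∈ s} = {x | k ∈ posP (Bset T U x)} := by
        ext x; simp [hk]
      rw [h2]; exact hposMeas k
    · have h2 : {x | k ∈ posP (Bset T U x) ↔ k ∈ s} = {x | k ∈ posP (Bset T U x)}ᶜ := by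
        ext x; simp [hk]
      rw [h2]; exact (hposMeas k).compl
  have hEqN : ∀ s : Finset ℤ, MeasurableSet {x | negP (Bset T U x) = ↑s} := by
    intro s
    have h : {x | negP (Bset T U x) = ↑s}
        = ⋂ k : ℤ, {x | k ∈ negP (Bset T U x) ↔ k ∈ s} := by
      ext x
      simp only [Set.mem_setOf_eq, Set.mem_iInter]
      constructor
      · intro h k; rw [h]; simp
      · intro h; ext k; simp [h k]
    rw [h]
    refine MeasurableSet.iInter fun k => ?_
    by_cases hk : k ∈ s
    · have h2 : {x | k ∈ negP (Bset T U x) ↔ k ∈ s} = {x | k ∈ negP (Bset T U x)} := by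
        ext x; simp [hk]
      rw [h2]; exact hnegMeas k
    · have h2 : {x | k ∈ negP (Bset T U x) ↔ k ∈ s} = {x | k ∈ negP (Bset T U x)}ᶜ := by
        ext x; simp [hk]
      rw [h2]; exact (hnegMeas k).compl
  have hdecomp : G ∩ {x | fI T U x = j}
      = ⋃ (p : Finset ℤ × Finset ℤ), ⋃ (_ : (p.1.card : ℤ) - (p.2.card : ℤ) = j),
        (G ∩ ({x | posP (Bset T U x) = ↑p.1} ∩ {x | negP (Bset T U x) = ↑p.2})) := by
    ext x
    simp only [Set.mem_inter_iff, Set.mem_iUnion, Set.mem_setOf_eq]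
    constructor
    · rintro ⟨hxG, hfx⟩
      obtain ⟨hp, hn⟩ := hfinG x hxG
      refine ⟨⟨hp.toFinset, hn.toFinset⟩, ?_, hxG, ?_, ?_⟩
      · have c1 : (posP (Bset T U x)).ncard = hp.toFinset.card := by
          rw [← Set.ncard_coe_finset, hp.coe_toFinset]
        have c2 : (negP (Bset T U x)).ncard = hn.toFinset.card := by
          rw [← Set.ncard_coe_finset, hn.coe_toFinset]
        rw [← hfx]
        show (hp.toFinset.card : ℤ) - (hn.toFinset.card : ℤ) = fI T U x
        rw [← c1, ← c2]; rfl
      · exact hp.coe_toFinset.symm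
      · exact hn.coe_toFinset.symm
    · rintro ⟨p, hcard, hxG, h1, h2⟩
      refine ⟨hxG, ?_⟩
      show gval (Bset T U x) = j
      unfold gval
      rw [h1, h2, Set.ncard_coe_finset, Set.ncard_coe_finset]
      exact hcard
  rw [hdecomp]
  exact MeasurableSet.iUnion fun p => MeasurableSet.iUnion fun _ =>
    hG.inter ((hEqP p.1).inter (hEqN p.2))

end Pointwise

end KatzAux

open KatzAux

/-- **Katznelson's theorem**: if `T` is aperiodic, `U` has the same orbits as `T`, and
for a.e. `x` the symmetric difference of the forward `T`-orbit and the forward `U`-orbit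
of `x` is finite, then `T` and `U` are conjugate: there is a measure-preserving `S` with
`S U S⁻¹ = T` up to null sets. -/
theorem conjugate_of_finite_symmDiff_forward_orbits {X : Type*} [MeasurableSpace X]
    [StandardBorelSpace X] (μ : Measure X) [IsProbabilityMeasure μ] [NullSingletonClass μ]
    (T : X ≃ᵐ X) (hT : MeasurePreserving (⇑T) μ μ) (hap : Aperiodic μ T)
    (U : X ≃ᵐ X) (hU : MeasurePreserving (⇑U) μ μ)
    (horb : SameOrbits μ T U)
    (hfin : ∀ᵐ x ∂μ,
      ({y | ∃ n : ℕ, (T.toEquiv ^ n) x = y} ∆ {y | ∃ n : ℕ, (U.toEquiv ^ n) x = y}).Finite) :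
    ∃ S : X ≃ᵐ X, MeasurePreserving (⇑S) μ μ ∧ ∀ᵐ x ∂μ, S (U x) = T (S x) := by
  classical
  -- the pointwise property
  set P : X → Prop := fun x =>
    (∀ n : ℤ, n ≠ 0 → (T.toEquiv ^ n) x ≠ x) ∧
    ({y | ∃ n : ℤ, (T.toEquiv ^ n) x = y} = {y | ∃ n : ℤ, (U.toEquiv ^ n) x = y}) ∧
    ({y | ∃ n : ℕ, (T.toEquiv ^ n) x = y} ∆ {y | ∃ n : ℕ, (U.toEquiv ^ n) x = y}).Finite
    with hPdef
  have hPae : ∀ᵐ x ∂μ, P x := by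
    filter_upwards [hap, horb, hfin] with x h1 h2 h3
    exact ⟨h1, h2, h3⟩
  set G0 : Set X := (toMeasurable μ {x | ¬ P x})ᶜ with hG0def
  have hG0meas : MeasurableSet G0 := (measurableSet_toMeasurable μ _).compl
  have hG0null : μ G0ᶜ = 0 := by
    rw [hG0def, compl_compl, measure_toMeasurable]
    exact ae_iff.1 hPae
  have hG0P : ∀ x ∈ G0, P x := by
    intro x hx
    by_contra h
    exact hx (subset_toMeasurable μ _ h)
  -- words in T and U
  set step : ℤ × ℤ → Equiv.Perm X → Equiv.Perm X :=
    fun p e => T.toEquiv ^ p.1 * (U.toEquiv ^ p.2 * e) with hstepdef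
  set w : List (ℤ × ℤ) → Equiv.Perm X := fun l => l.foldr step 1 with hwdef
  have hwmul : ∀ (l : List (ℤ × ℤ)) (e : Equiv.Perm X), l.foldr step e = w l * e := by
    intro l
    induction l with
    | nil => intro e; simp [hwdef]
    | cons p l ih =>
      intro e
      show step p (l.foldr step e) = w (p :: l) * e
      rw [ih]
      have h2 : w (p :: l) = T.toEquiv ^ p.1 * (U.toEquiv ^ p.2 * w l) := rfl
      rw [h2, hstepdef, mul_assoc, mul_assoc]
  have hwmeas : ∀ l, Measurable fun x => w l x := by
    intro l; induction l with
    | nil => exact measurable_id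
    | cons p l ih =>
      have h : (fun x => w (p :: l) x)
          = (fun x => (T.toEquiv ^ p.1) x) ∘ (fun x => (U.toEquiv ^ p.2) x) ∘ (fun x => w l x) := rfl
      rw [h]
      exact (measurable_zpow T p.1).comp ((measurable_zpow U p.2).comp ih)
  have hwmp : ∀ l, MeasurePreserving (fun x => w l x) μ μ := by
    intro l; induction l with
    | nil => exact MeasurePreserving.id μ
    | cons p l ih =>
      have h : (fun x => w (p :: l) x)
          = (fun x => (T.toEquiv ^ p.1) x) ∘ (fun x => (U.toEquiv ^ p.2) x) ∘ (fun x => w l x) := rfl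
      rw [h]
      exact (mp_zpow T hT p.1).comp ((mp_zpow U hU p.2).comp ih)
  set G : Set X := ⋂ l : List (ℤ × ℤ), (fun x => w l x) ⁻¹' G0 with hGdef
  have hGmeas : MeasurableSet G := MeasurableSet.iInter fun l => (hwmeas l) hG0meas
  have hGnull : μ Gᶜ = 0 := by
    rw [hGdef, Set.compl_iInter]
    refine measure_iUnion_null fun l => ?_
    rw [← Set.preimage_compl, (hwmp l).measure_preimage hG0meas.compl.nullMeasurableSet]
    exact hG0null
  have hGae : ∀ᵐ x ∂μ, x ∈ G := by
    rw [ae_iff]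
    exact hGnull
  have hGsub : ∀ x ∈ G, P x := by
    intro x hx
    have h := Set.mem_iInter.1 hx []
    simpa [hwdef] using hG0P _ h
  have hstepG : ∀ (a b : ℤ), ∀ x ∈ G, (T.toEquiv ^ a) ((U.toEquiv ^ b) x) ∈ G := by
    intro a b x hx
    rw [hGdef, Set.mem_iInter]
    intro l
    have h1 := Set.mem_iInter.1 hx (l ++ [(a, b)])
    have he : w (l ++ [(a, b)]) x = w l ((T.toEquiv ^ a) ((U.toEquiv ^ b) x)) := by
      show (List.foldr step 1 (l ++ [(a, b)])) x = _
      rw [List.foldr_append, hwmul]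
      have h2 : List.foldr step 1 [(a, b)] = T.toEquiv ^ a * (U.toEquiv ^ b * 1) := rfl
      rw [h2, mul_one]
      rfl
    show w l ((T.toEquiv ^ a) ((U.toEquiv ^ b) x)) ∈ G0
    rw [← he]
    exact h1
  have hGT : ∀ x ∈ G, ∀ n : ℤ, (T.toEquiv ^ n) x ∈ G := by
    intro x hx n
    have h := hstepG n 0 x hx
    simpa using h
  have hGU : ∀ x ∈ G, ∀ n : ℤ, (U.toEquiv ^ n) x ∈ G := by
    intro x hx n
    have h := hstepG 0 n x hx
    simpa using h
  -- pointwise facts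
  have hPa : ∀ x ∈ G, ∀ n : ℤ, n ≠ 0 → (T.toEquiv ^ n) x ≠ x := fun x hx => (hGsub x hx).1
  have hPorb : ∀ x ∈ G,
      {y | ∃ n : ℤ, (T.toEquiv ^ n) x = y} = {y | ∃ n : ℤ, (U.toEquiv ^ n) x = y} :=
    fun x hx => (hGsub x hx).2.1
  have hPfin : ∀ x ∈ G,
      ({y | ∃ n : ℕ, (T.toEquiv ^ n) x = y} ∆ {y | ∃ n : ℕ, (U.toEquiv ^ n) x = y}).Finite :=
    fun x hx => (hGsub x hx).2.2
  have hUapG : ∀ x ∈ G, ∀ m : ℤ, m ≠ 0 → (U.toEquiv ^ m) x ≠ x :=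
    fun x hx => U_aperiodic T U (hPa x hx) (hPorb x hx)
  have hcex : ∀ x ∈ G, ∃ c : ℤ, U x = (T.toEquiv ^ c) x := by
    intro x hx
    have hmem : U x ∈ {y | ∃ n : ℤ, (U.toEquiv ^ n) x = y} := ⟨1, by rw [zpow_one]; rfl⟩
    rw [← hPorb x hx] at hmem
    obtain ⟨k, hk⟩ := hmem
    exact ⟨k, hk.symm⟩
  have hGU1 : ∀ x ∈ G, U x ∈ G := by
    intro x hx
    have h := hGU x hx 1
    rw [zpow_one] at h
    exact h
  -- the conjugating map
  set Sf : X → X := fun x => if x ∈ G then (T.toEquiv ^ fI T U x) x else x with hSfdef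
  have hSfG : ∀ x ∈ G, Sf x = (T.toEquiv ^ fI T U x) x := fun x hx => if_pos hx
  have hSfG' : ∀ x ∉ G, Sf x = x := fun x hx => if_neg hx
  have hSfmemG : ∀ x ∈ G, Sf x ∈ G := by
    intro x hx; rw [hSfG x hx]; exact hGT x hx _
  have hSfmemG' : ∀ x ∉ G, Sf x ∉ G := by
    intro x hx; rw [hSfG' x hx]; exact hx
  have hconj : ∀ x ∈ G, Sf (U x) = T (Sf x) := by
    intro x hx
    obtain ⟨c, hc⟩ := hcex x hx
    rw [hSfG _ (hGU1 x hx), hSfG _ hx]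
    exact conj_at T U (hPa x hx) (hUapG x hx) (hPfin x hx) hc
  have hconjz : ∀ x ∈ G, ∀ n : ℤ, Sf ((U.toEquiv ^ n) x) = (T.toEquiv ^ n) (Sf x) := by
    intro x hx n
    induction n using Int.induction_on with
    | zero => simp
    | succ n ih =>
      have hxn : (U.toEquiv ^ (n : ℤ)) x ∈ G := hGU x hx n
      have h1 : (U.toEquiv ^ ((n : ℤ) + 1)) x = U ((U.toEquiv ^ (n : ℤ)) x) := by
        rw [show (n : ℤ) + 1 = 1 + (n : ℤ) by ring, zpow_add_apply, zpow_one]; rfl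
      have h2 : (T.toEquiv ^ ((n : ℤ) + 1)) (Sf x) = T ((T.toEquiv ^ (n : ℤ)) (Sf x)) := by
        rw [show (n : ℤ) + 1 = 1 + (n : ℤ) by ring, zpow_add_apply, zpow_one]; rfl
      rw [h1, h2, hconj _ hxn, ih]
    | pred n ih =>
      have hy : (U.toEquiv ^ (-(n : ℤ) - 1)) x ∈ G := hGU x hx _
      have h1 : U ((U.toEquiv ^ (-(n : ℤ) - 1)) x) = (U.toEquiv ^ (-(n : ℤ))) x := by
        conv_rhs => rw [show -(n : ℤ) = 1 + (-(n : ℤ) - 1) by ring]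
        rw [zpow_add_apply, zpow_one]; rfl
      have h2 := hconj _ hy
      rw [h1, ih] at h2
      have h3 : (T.toEquiv ^ (-(n : ℤ))) (Sf x)
          = T.toEquiv ((T.toEquiv ^ (-(n : ℤ) - 1)) (Sf x)) := by
        conv_lhs => rw [show -(n : ℤ) = 1 + (-(n : ℤ) - 1) by ring]
        rw [zpow_add_apply, zpow_one]
      rw [h3] at h2
      exact (T.toEquiv.injective h2).symm
  -- bijectivity
  have hSfinj : Function.Injective Sf := by
    intro y z hyz
    by_cases hy : y ∈ G
    · by_cases hz : z ∈ G
      · have h1 : Sf y = (T.toEquiv ^ fI T U y) y := hSfG y hy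
        have h2 : Sf z = (T.toEquiv ^ fI T U z) z := hSfG z hz
        have h0 : (T.toEquiv ^ (-(fI T U z))) (Sf z) = z := by
          rw [h2, ← zpow_add_apply]; simp
        have h3 : z = (T.toEquiv ^ (-(fI T U z) + fI T U y)) y := by
          calc z = (T.toEquiv ^ (-(fI T U z))) (Sf z) := h0.symm
            _ = (T.toEquiv ^ (-(fI T U z))) (Sf y) := by rw [hyz]
            _ = (T.toEquiv ^ (-(fI T U z) + fI T U y)) y := by rw [h1, zpow_add_apply]
        have h4 : z ∈ {y' | ∃ n : ℤ, (T.toEquiv ^ n) y = y'} := ⟨_, h3.symm⟩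
        rw [hPorb y hy] at h4
        obtain ⟨n, hn⟩ := h4
        have h5 : (T.toEquiv ^ n) (Sf y) = (T.toEquiv ^ (0 : ℤ)) (Sf y) := by
          rw [← hconjz y hy n, hn, ← hyz]; simp
        have hn0 : n = 0 := exp_inj T (hPa _ (hSfmemG y hy)) h5
        rw [hn0] at hn
        simpa using hn
      · have h := hSfmemG y hy
        rw [hyz] at h
        exact absurd h (hSfmemG' z hz)
    · by_cases hz : z ∈ G
      · have h := hSfmemG z hz
        rw [← hyz] at h
        exact absurd h (hSfmemG' y hy)
      · rw [hSfG' y hy, hSfG' z hz] at hyz; exact hyz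
  have hSfsurj : Function.Surjective Sf := by
    intro z
    by_cases hz : z ∈ G
    · refine ⟨(U.toEquiv ^ (-(fI T U z))) z, ?_⟩
      rw [hconjz z hz (-(fI T U z)), hSfG z hz, ← zpow_add_apply]
      simp
    · exact ⟨z, hSfG' z hz⟩
  have hSfbij : Function.Bijective Sf := ⟨hSfinj, hSfsurj⟩
  -- measurability
  have hfinG : ∀ x ∈ G, (posP (Bset T U x)).Finite ∧ (negP (Bset T U x)).Finite :=
    fun x hx => ⟨posP_Bset_finite T U (hPa x hx) (hPfin x hx),
      negP_Bset_finite T U (hPa x hx) (hPfin x hx)⟩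
  have hPjmeas : ∀ j : ℤ, MeasurableSet (G ∩ {x | fI T U x = j}) :=
    fun j => measurableSet_fI_level T U G hGmeas hfinG j
  have hSfmeas : Measurable Sf := by
    intro E hE
    have hpre : Sf ⁻¹' E = (Gᶜ ∩ E)
        ∪ ⋃ j : ℤ, ((G ∩ {x | fI T U x = j}) ∩ (fun x => (T.toEquiv ^ j) x) ⁻¹' E) := by
      ext x
      simp only [Set.mem_preimage, Set.mem_union, Set.mem_inter_iff, Set.mem_iUnion,
        Set.mem_compl_iff, Set.mem_setOf_eq]
      by_cases hx : x ∈ G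
      · constructor
        · intro h
          exact Or.inr ⟨fI T U x, ⟨⟨hx, rfl⟩, by rwa [← hSfG x hx]⟩⟩
        · rintro (⟨h, _⟩ | ⟨j, ⟨⟨_, hj⟩, hmem⟩⟩)
          · exact absurd hx h
          · rw [hSfG x hx, hj]; exact hmem
      · rw [hSfG' x hx]
        constructor
        · intro h; exact Or.inl ⟨hx, h⟩
        · rintro (⟨_, h⟩ | ⟨j, ⟨⟨hxG, _⟩, _⟩⟩)
          · exact h
          · exact absurd hxG hx
    rw [hpre]
    exact (hGmeas.compl.inter hE).union
      (MeasurableSet.iUnion fun j => (hPjmeas j).inter ((measurable_zpow T j) hE))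
  have hemb : MeasurableEmbedding Sf := hSfmeas.measurableEmbedding hSfinj
  -- image measure facts for powers of T
  have himgT : ∀ (A : Set X) (j : ℤ), MeasurableSet A →
      MeasurableSet ((fun x => (T.toEquiv ^ j) x) '' A)
      ∧ μ ((fun x => (T.toEquiv ^ j) x) '' A) = μ A := by
    intro A j hA
    have hsym : (T.toEquiv ^ j).symm = T.toEquiv ^ (-j) := by
      rw [← Equiv.Perm.inv_def, ← zpow_neg]
    have heq : (fun x => (T.toEquiv ^ j) x) '' A = (fun x => (T.toEquiv ^ (-j)) x) ⁻¹' A := by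
      rw [show (fun x => (T.toEquiv ^ j) x) = ⇑(T.toEquiv ^ j) from rfl,
        Equiv.image_eq_preimage_symm, hsym]
    refine ⟨?_, ?_⟩
    · rw [heq]; exact (measurable_zpow T (-j)) hA
    · rw [heq]; exact (mp_zpow T hT (-j)).measure_preimage hA.nullMeasurableSet
  -- images preserve measure
  have himgμ : ∀ E : Set X, MeasurableSet E → μ (Sf '' E) = μ E := by
    intro E hE
    set Q : Option ℤ → Set X :=
      fun o => Option.rec (E ∩ Gᶜ) (fun j => E ∩ (G ∩ {x | fI T U x = j})) o with hQdef
    have hQmeas : ∀ o, MeasurableSet (Q o) := by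
      rintro (_ | j)
      · exact hE.inter hGmeas.compl
      · exact hE.inter (hPjmeas j)
    have hQdisj : Pairwise (Function.onFun Disjoint Q) := by
      rintro (_ | i) (_ | j) hij
      · exact absurd rfl hij
      · refine Set.disjoint_left.2 ?_
        rintro x ⟨_, hx2⟩ ⟨_, hx3, _⟩
        exact hx2 hx3
      · refine Set.disjoint_left.2 ?_
        rintro x ⟨_, hx2, _⟩ ⟨_, hx3⟩
        exact hx3 hx2
      · refine Set.disjoint_left.2 ?_
        rintro x ⟨_, _, hx2⟩ ⟨_, _, hx3⟩
        exact hij (by rw [← hx2, ← hx3])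
    have hQunion : ⋃ o, Q o = E := by
      ext x
      simp only [Set.mem_iUnion]
      constructor
      · rintro ⟨(_ | j), hx⟩
        · exact hx.1
        · exact hx.1
      · intro hx
        by_cases hxG : x ∈ G
        · exact ⟨some (fI T U x), hx, hxG, rfl⟩
        · exact ⟨none, hx, hxG⟩
    have h1 : μ E = ∑' o, μ (Q o) := by
      rw [← hQunion, measure_iUnion hQdisj hQmeas]
    have himg : ∀ o, Sf '' Q o
        = Option.rec (E ∩ Gᶜ) (fun j => (fun x => (T.toEquiv ^ j) x) '' (Q (some j))) o := by
      rintro (_ | j)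
      · have h2 : Sf '' (Q none) = id '' (Q none) :=
          Set.image_congr fun x hx => hSfG' x hx.2
        rw [h2, Set.image_id]
      · exact Set.image_congr fun x hx => by rw [hSfG x hx.2.1, hx.2.2]
    have h2 : μ (Sf '' E) = ∑' o, μ (Sf '' Q o) := by
      rw [← hQunion, Set.image_iUnion]
      refine measure_iUnion ?_ ?_
      · intro i j hij
        exact Set.disjoint_image_of_injective hSfinj (hQdisj hij)
      · intro o
        rw [himg o]
        rcases o with _ | j
        · exact hE.inter hGmeas.compl
        · exact (himgT _ j (hQmeas (some j))).1
    rw [h2, h1]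
    congr 1
    funext o
    rcases o with _ | j
    · rw [himg none]
    · rw [himg (some j)]
      exact (himgT _ j (hQmeas (some j))).2
  -- build the measurable equiv
  let SE : X ≃ X := Equiv.ofBijective Sf hSfbij
  let SME : X ≃ᵐ X :=
    { toEquiv := SE
      measurable_toFun := hSfmeas
      measurable_invFun := by
        intro A hA
        have himg2 : ⇑SE.symm ⁻¹' A = SE '' A := (Equiv.image_eq_preimage_symm SE A).symm
        rw [himg2]
        exact hemb.measurableSet_image.2 hA }
  have hmpsymm : MeasurePreserving ⇑SME.symm μ μ := by
    refine ⟨SME.symm.measurable, ?_⟩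
    refine Measure.ext fun A hA => ?_
    rw [Measure.map_apply SME.symm.measurable hA]
    have himg3 : ⇑SME.symm ⁻¹' A = Sf '' A := (Equiv.image_eq_preimage_symm SE A).symm
    rw [himg3]
    exact himgμ A hA
  have hmpS : MeasurePreserving ⇑SME μ μ := by
    have h := hmpsymm.symm SME.symm
    simpa using h
  refine ⟨SME, hmpS, ?_⟩
  filter_upwards [hGae] with x hx
  show Sf (U x) = T (Sf x)
  exact hconj x hx
end
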